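/- arXiv:2004.04826 — 6 statements merged into one kernel-verified Lean document; each statement's English description precedes it below -/
import Mathlib

section
/- There exists Θ > 0 such that for every θ ∈ [−Θ, Θ], the moment generating function E[exp(θ·N^(−α)·Σ_{i=1}^N q̄_i)] is finite. -/
open MeasureTheory ProbabilityTheory Filter

/-- Steady-state JSQ load-balancing model at size `N` with parameters
`α, amax, smax, σa2, σs2`, on a probability space `(Ω, μ)`. -/
structure JSQModel (N : ℕ) (α amax smax σa2 σs2 : ℝ)
    (Ω : Type) [MeasurableSpace Ω] (μ : Measure Ω) where
  hα : 0 < α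
  hamax : 0 < amax
  hsmax : 0 < smax
  hσa2 : 0 ≤ σa2
  hσs2 : 0 ≤ σs2
  hprob : IsProbabilityMeasure μ
  /-- stationary queue lengths -/
  q : Ω → Fin N → ℕ
  /-- number of arrivals -/
  a : Ω → ℕ
  /-- potential services -/
  s : Ω → Fin N → ℕ
  /-- index of a shortest queue (JSQ routing) -/
  I : Ω → Fin N
  meas_q : Measurable q
  meas_a : Measurable a
  meas_s : Measurable s
  meas_I : Measurable I
  a_bdd : ∀ᵐ ω ∂μ, (a ω : ℝ) ≤ amax
  a_mean : ∫ ω, (a ω : ℝ) ∂μ = N * (1 - (N : ℝ) ^ (-α))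
  a_var : variance (fun ω => (a ω : ℝ)) μ = N * σa2
  s_bdd : ∀ i, ∀ᵐ ω ∂μ, (s ω i : ℝ) ≤ smax
  s_mean : ∀ i, ∫ ω, (s ω i : ℝ) ∂μ = 1
  s_var : ∀ i, variance (fun ω => (s ω i : ℝ)) μ = σs2
  s_indep : iIndepFun (fun i ω => s ω i) μ
  s_ident : ∀ i j, IdentDistrib (fun ω => s ω i) (fun ω => s ω j) μ μ
  I_min : ∀ᵐ ω ∂μ, q ω (I ω) = ⨅ j, q ω j
  indep_as_qI : IndepFun (fun ω => (a ω, s ω)) (fun ω => (q ω, I ω)) μ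
  indep_a_s : IndepFun a s μ
  /-- the next-step queue-length vector has the same distribution as `q` -/
  stationary :
    IdentDistrib (fun ω i => q ω i + (if i = I ω then a ω else 0) - s ω i) q μ μ

namespace JSQModel

variable {N : ℕ} {α amax smax σa2 σs2 : ℝ} {Ω : Type} [MeasurableSpace Ω]
  {μ : Measure Ω}

/-- routed arrivals -/
def atilde (M : JSQModel N α amax smax σa2 σs2 Ω μ) (ω : Ω) (i : Fin N) : ℕ :=
  if i = M.I ω then M.a ω else 0

/-- unused services -/
def u (M : JSQModel N α amax smax σa2 σs2 Ω μ) (ω : Ω) (i : Fin N) : ℕ :=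
  M.s ω i - (M.q ω i + M.atilde ω i)

/-- next-step queue lengths -/
def qplus (M : JSQModel N α amax smax σa2 σs2 Ω μ) (ω : Ω) (i : Fin N) : ℕ :=
  M.q ω i + M.atilde ω i - M.s ω i

end JSQModel

/-- The exponential law on `[0, ∞)` with the given rate, i.e. the measure on `ℝ`
with density `rate · exp(−rate·x)` on `[0, ∞)` with respect to Lebesgue measure. -/
noncomputable def expLaw (rate : ℝ) : Measure ℝ :=
  MeasureTheory.volume.withDensity fun x =>
    ENNReal.ofReal (if 0 ≤ x then rate * Real.exp (-(rate * x)) else 0)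



section DevGeometry

variable {N : ℕ}

/-- average of a vector -/
noncomputable def avgV (x : Fin N → ℝ) : ℝ := (∑ i, x i) / N

/-- squared deviation from the average -/
noncomputable def dsqV (x : Fin N → ℝ) : ℝ := ∑ i, (x i - avgV x) ^ 2

/-- Euclidean norm of the perpendicular component -/
noncomputable def devV (x : Fin N → ℝ) : ℝ := Real.sqrt (dsqV x)

lemma dsqV_nonneg (x : Fin N → ℝ) : 0 ≤ dsqV x :=
  Finset.sum_nonneg fun i _ => sq_nonneg _

lemma devV_nonneg (x : Fin N → ℝ) : 0 ≤ devV x := Real.sqrt_nonneg _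

lemma devV_sq (x : Fin N → ℝ) : devV x ^ 2 = dsqV x := Real.sq_sqrt (dsqV_nonneg x)

lemma sum_sub_avgV (hN : N ≠ 0) (x : Fin N → ℝ) : ∑ i, (x i - avgV x) = 0 := by
  have hN' : (N : ℝ) ≠ 0 := Nat.cast_ne_zero.2 hN
  rw [Finset.sum_sub_distrib, Finset.sum_const, Finset.card_univ, Fintype.card_fin,
    nsmul_eq_mul, avgV]
  field_simp
  ring

lemma sq_sub_avgV_le (x : Fin N → ℝ) (j : Fin N) : (x j - avgV x) ^ 2 ≤ dsqV x :=
  Finset.single_le_sum (f := fun i => (x i - avgV x) ^ 2)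
    (fun i _ => sq_nonneg _) (Finset.mem_univ j)

lemma abs_sub_avgV_le (x : Fin N → ℝ) (j : Fin N) : |x j - avgV x| ≤ devV x := by
  rw [← Real.sqrt_sq_eq_abs]
  exact Real.sqrt_le_sqrt (sq_sub_avgV_le x j)

lemma dsqV_add (hN : N ≠ 0) (x v : Fin N → ℝ) :
    dsqV (fun i => x i + v i) = dsqV x + 2 * ∑ i, (x i - avgV x) * v i + dsqV v := by
  have havg : avgV (fun i => x i + v i) = avgV x + avgV v := by
    simp only [avgV, Finset.sum_add_distrib, add_div]
  have h0 := sum_sub_avgV hN x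
  simp only [dsqV, havg]
  have hterm : ∀ i : Fin N, (x i + v i - (avgV x + avgV v)) ^ 2
      = (x i - avgV x) ^ 2 + (2 * ((x i - avgV x) * v i)
        - 2 * (avgV v * (x i - avgV x))) + (v i - avgV v) ^ 2 := by
    intro i; ring
  rw [Finset.sum_congr rfl fun i _ => hterm i]
  rw [Finset.sum_add_distrib, Finset.sum_add_distrib, Finset.sum_sub_distrib,
    ← Finset.mul_sum, ← Finset.mul_sum, ← Finset.mul_sum, h0]
  ring

lemma dsqV_le_sum_sq (hN : N ≠ 0) (v : Fin N → ℝ) : dsqV v ≤ ∑ i, v i ^ 2 := by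
  have hN' : (N : ℝ) ≠ 0 := Nat.cast_ne_zero.2 hN
  have hsum : ∑ i, v i = N * avgV v := by rw [avgV]; field_simp
  have : dsqV v = (∑ i, v i ^ 2) - N * avgV v ^ 2 := by
    simp only [dsqV]
    have hterm : ∀ i : Fin N, (v i - avgV v) ^ 2
        = v i ^ 2 - 2 * (avgV v * v i) + avgV v ^ 2 := by intro i; ring
    rw [Finset.sum_congr rfl fun i _ => hterm i]
    rw [Finset.sum_add_distrib, Finset.sum_sub_distrib, ← Finset.mul_sum,
      Finset.sum_const, Finset.card_univ, Fintype.card_fin, nsmul_eq_mul,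
      ← Finset.mul_sum, hsum]
    ring
  rw [this]
  have hN0 : (0:ℝ) ≤ (N:ℝ) := Nat.cast_nonneg N
  nlinarith [sq_nonneg (avgV v)]

lemma devV_add_le (hN : N ≠ 0) (x v : Fin N → ℝ) :
    devV (fun i => x i + v i) ≤ devV x + Real.sqrt (∑ i, v i ^ 2) := by
  have hcs : (∑ i, (x i - avgV x) * v i) ≤ devV x * Real.sqrt (∑ i, v i ^ 2) := by
    have h2 := Finset.sum_mul_sq_le_sq_mul_sq Finset.univ (fun i => x i - avgV x) v
    have := Real.sqrt_le_sqrt h2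
    calc (∑ i, (x i - avgV x) * v i) ≤ |∑ i, (x i - avgV x) * v i| := le_abs_self _
    _ = Real.sqrt ((∑ i, (x i - avgV x) * v i) ^ 2) := (Real.sqrt_sq_eq_abs _).symm
    _ ≤ Real.sqrt ((∑ i, (x i - avgV x) ^ 2) * ∑ i, v i ^ 2) := this
    _ = devV x * Real.sqrt (∑ i, v i ^ 2) := by
        rw [Real.sqrt_mul (Finset.sum_nonneg fun i _ => sq_nonneg _)]; rfl
  have hd : dsqV (fun i => x i + v i)
      ≤ (devV x + Real.sqrt (∑ i, v i ^ 2)) ^ 2 := by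
    rw [dsqV_add hN x v]
    have h1 : dsqV v ≤ ∑ i, v i ^ 2 := dsqV_le_sum_sq hN v
    have h2 : Real.sqrt (∑ i, v i ^ 2) ^ 2 = ∑ i, v i ^ 2 :=
      Real.sq_sqrt (Finset.sum_nonneg fun i _ => sq_nonneg _)
    nlinarith [devV_sq x]
  calc devV (fun i => x i + v i) = Real.sqrt (dsqV fun i => x i + v i) := rfl
  _ ≤ Real.sqrt ((devV x + Real.sqrt (∑ i, v i ^ 2)) ^ 2) := Real.sqrt_le_sqrt hd
  _ = devV x + Real.sqrt (∑ i, v i ^ 2) :=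
      Real.sqrt_sq (add_nonneg (devV_nonneg x) (Real.sqrt_nonneg _))

lemma devV_sub_le (hN : N ≠ 0) (x v : Fin N → ℝ) :
    devV x ≤ devV (fun i => x i + v i) + Real.sqrt (∑ i, v i ^ 2) := by
  have := devV_add_le hN (fun i => x i + v i) (fun i => -(v i))
  simp only [add_neg_cancel_right] at this
  have hsq : (∑ i, (-(v i)) ^ 2) = ∑ i, v i ^ 2 := by simp
  rw [hsq] at this
  exact this

lemma devV_le_of_min (hN : 2 ≤ N) (x : Fin N → ℝ) (j₀ : Fin N)
    (hmin : ∀ j, x j₀ ≤ x j) :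
    devV x ≤ Real.sqrt N * ((N : ℝ) - 1) * (avgV x - x j₀) := by
  have hNne : N ≠ 0 := by omega
  have hN' : (0:ℝ) < (N : ℝ) := by exact_mod_cast Nat.pos_of_ne_zero hNne
  have hN1 : (1:ℝ) ≤ (N:ℝ) - 1 := by
    have : (2:ℝ) ≤ (N:ℝ) := by exact_mod_cast hN
    linarith
  set b := avgV x with hb
  set m := x j₀ with hm
  have hbm : m ≤ b := by
    have hsum : (N : ℝ) * m ≤ ∑ i, x i := by
      have := Finset.card_nsmul_le_sum Finset.univ x m (fun i _ => hmin i)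
      rwa [Finset.card_univ, Fintype.card_fin, nsmul_eq_mul] at this
    rw [hb, avgV, le_div_iff₀ hN']
    linarith
  have hkey : ∀ j, |x j - b| ≤ ((N:ℝ) - 1) * (b - m) := by
    intro j
    have hup : x j - b ≤ ((N:ℝ) - 1) * (b - m) := by
      have herase : ((N:ℝ) - 1) * m ≤ ∑ k ∈ Finset.univ.erase j, x k := by
        have := Finset.card_nsmul_le_sum (Finset.univ.erase j) x m
          (fun i _ => hmin i)
        rwa [Finset.card_erase_of_mem (Finset.mem_univ j), Finset.card_univ,
          Fintype.card_fin, nsmul_eq_mul, Nat.cast_sub (by omega), Nat.cast_one] at this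
      have hxj : x j + ∑ k ∈ Finset.univ.erase j, x k = ∑ k, x k := by
        rw [Finset.add_sum_erase _ _ (Finset.mem_univ j)]
      have hNb : ∑ k, x k = (N:ℝ) * b := by rw [hb, avgV]; field_simp
      nlinarith
    have hdown : -(((N:ℝ) - 1) * (b - m)) ≤ x j - b := by
      have h1 : b - x j ≤ b - m := by have := hmin j; linarith
      nlinarith
    exact abs_le.2 ⟨hdown, hup⟩
  have hdsq : dsqV x ≤ (N:ℝ) * (((N:ℝ) - 1) * (b - m)) ^ 2 := by
    have : ∀ j : Fin N, (x j - b) ^ 2 ≤ (((N:ℝ) - 1) * (b - m)) ^ 2 := by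
      intro j
      have := hkey j
      have h0 : (0:ℝ) ≤ ((N:ℝ) - 1) * (b - m) := by nlinarith
      nlinarith [abs_nonneg (x j - b), sq_abs (x j - b)]
    calc dsqV x ≤ ∑ _j : Fin N, (((N:ℝ) - 1) * (b - m)) ^ 2 :=
          Finset.sum_le_sum fun j _ => this j
    _ = (N:ℝ) * (((N:ℝ) - 1) * (b - m)) ^ 2 := by
        rw [Finset.sum_const, Finset.card_univ, Fintype.card_fin, nsmul_eq_mul]
  calc devV x = Real.sqrt (dsqV x) := rfl
  _ ≤ Real.sqrt ((N:ℝ) * (((N:ℝ) - 1) * (b - m)) ^ 2) := Real.sqrt_le_sqrt hdsq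
  _ = Real.sqrt N * (((N:ℝ) - 1) * (b - m)) := by
      rw [Real.sqrt_mul hN'.le, Real.sqrt_sq (by nlinarith)]
  _ = Real.sqrt N * ((N : ℝ) - 1) * (b - m) := by ring

end DevGeometry

lemma nat_sub_cast_real (m n : ℕ) :
    ((m - n : ℕ) : ℝ) = (m : ℝ) - n + ((n - m : ℕ) : ℝ) := by
  rcases le_total m n with h | h
  · rw [Nat.sub_eq_zero_of_le h, Nat.cast_sub h]; simp
  · rw [Nat.sub_eq_zero_of_le h, Nat.cast_sub h]; simp

lemma abs_min_sub_min_le {a b c : ℝ} : |min a c - min b c| ≤ |a - b| := by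
  rcases le_total a c with h1 | h1 <;> rcases le_total b c with h2 | h2
  · rw [min_eq_left h1, min_eq_left h2]
  · rw [min_eq_left h1, min_eq_right h2, abs_of_nonpos (by linarith),
      abs_of_nonpos (by linarith)]
    linarith
  · rw [min_eq_right h1, min_eq_left h2, abs_of_nonneg (by linarith),
      abs_of_nonneg (by linarith)]
    linarith
  · rw [min_eq_right h1, min_eq_right h2, sub_self, abs_zero]
    exact abs_nonneg _


lemma integrable_of_ae_bdd {Ω : Type} [MeasurableSpace Ω] {μ : Measure Ω}
    [IsFiniteMeasure μ] {f : Ω → ℝ} (hm : AEStronglyMeasurable f μ) (C : ℝ)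
    (h : ∀ᵐ ω ∂μ, |f ω| ≤ C) : Integrable f μ :=
  Integrable.mono' (integrable_const C) hm
    (h.mono fun ω hω => by rwa [Real.norm_eq_abs])

lemma integrable_exp_of_truncated_bound {Ω : Type} [MeasurableSpace Ω]
    {μ : Measure Ω} [IsProbabilityMeasure μ] {Z : Ω → ℝ} (hZ : Measurable Z)
    {η K C : ℝ} (hη : 0 ≤ η)
    (hC : ∀ n : ℕ, (∫ ω, (if K ≤ Z ω ∧ Z ω ≤ K + n
      then Real.exp (η * min (Z ω) (K + n)) else 0) ∂μ) ≤ C) :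
    Integrable (fun ω => Real.exp (η * Z ω)) μ := by
  set f : ℕ → Ω → ℝ := fun n ω => if K ≤ Z ω ∧ Z ω ≤ K + n
      then Real.exp (η * min (Z ω) (K + n)) else 0 with hf
  have hmeasf : ∀ n, Measurable (f n) := by
    intro n
    apply Measurable.ite
    · exact (measurableSet_le measurable_const hZ).inter
        (measurableSet_le hZ measurable_const)
    · exact Real.measurable_exp.comp ((hZ.min measurable_const).const_mul η)
    · exact measurable_const
  have hnn : ∀ n ω, 0 ≤ f n ω := by
    intro n ω; rw [hf]; dsimp only
    split <;> [exact (Real.exp_pos _).le; exact le_rfl]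
  have hbd : ∀ n ω, |f n ω| ≤ Real.exp (η * (K + n)) := by
    intro n ω; rw [abs_of_nonneg (hnn n ω), hf]; dsimp only
    split
    · apply Real.exp_le_exp.2
      apply mul_le_mul_of_nonneg_left (min_le_right _ _) hη
    · exact (Real.exp_pos _).le
  have hint : ∀ n, Integrable (f n) μ := fun n =>
    integrable_of_ae_bdd (hmeasf n).aestronglyMeasurable _ (ae_of_all _ (hbd n))
  have hlint : ∀ n, (∫⁻ ω, ENNReal.ofReal (f n ω) ∂μ) ≤ ENNReal.ofReal C := by
    intro n
    rw [← ofReal_integral_eq_lintegral_ofReal (hint n) (ae_of_all _ (hnn n))]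
    exact ENNReal.ofReal_le_ofReal (hC n)
  have hlim : ∀ ω, ENNReal.ofReal (if K ≤ Z ω then Real.exp (η * Z ω) else 0)
      ≤ liminf (fun n => ENNReal.ofReal (f n ω)) atTop := by
    intro ω
    by_cases h : K ≤ Z ω
    · have hev : ∀ᶠ n : ℕ in atTop, f n ω = Real.exp (η * Z ω) := by
        filter_upwards [eventually_ge_atTop ⌈Z ω - K⌉₊] with n hn
        have hZn : Z ω ≤ K + n := by
          have h1 : Z ω - K ≤ (⌈Z ω - K⌉₊ : ℝ) := Nat.le_ceil _
          have h2 : ((⌈Z ω - K⌉₊ : ℕ) : ℝ) ≤ (n : ℝ) := by exact_mod_cast hn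
          linarith
        rw [hf]; dsimp only
        rw [if_pos ⟨h, hZn⟩, min_eq_left hZn]
      have ht : Tendsto (fun n => ENNReal.ofReal (f n ω)) atTop
          (nhds (ENNReal.ofReal (Real.exp (η * Z ω)))) := by
        apply Tendsto.congr' _ tendsto_const_nhds
        filter_upwards [hev] with n hn
        rw [hn]
      rw [ht.liminf_eq, if_pos h]
    · rw [if_neg h]
      simp
  have hfin : (∫⁻ ω, ENNReal.ofReal (if K ≤ Z ω then Real.exp (η * Z ω) else 0) ∂μ)
      ≤ ENNReal.ofReal C := by
    calc (∫⁻ ω, ENNReal.ofReal (if K ≤ Z ω then Real.exp (η * Z ω) else 0) ∂μ)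
        ≤ ∫⁻ ω, liminf (fun n => ENNReal.ofReal (f n ω)) atTop ∂μ :=
          lintegral_mono hlim
      _ ≤ liminf (fun n => ∫⁻ ω, ENNReal.ofReal (f n ω) ∂μ) atTop :=
          lintegral_liminf_le fun n => (hmeasf n).ennreal_ofReal
      _ ≤ liminf (fun _ : ℕ => ENNReal.ofReal C) atTop :=
          Filter.liminf_le_liminf (Filter.Eventually.of_forall hlint)
      _ = ENNReal.ofReal C := Filter.liminf_const _
  have hptw : ∀ ω, Real.exp (η * Z ω)
      ≤ Real.exp (η * K) + (if K ≤ Z ω then Real.exp (η * Z ω) else 0) := by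
    intro ω
    by_cases h : K ≤ Z ω
    · rw [if_pos h]
      have := (Real.exp_pos (η * K)).le
      linarith
    · rw [if_neg h]
      push_neg at h
      have : Real.exp (η * Z ω) ≤ Real.exp (η * K) :=
        Real.exp_le_exp.2 (mul_le_mul_of_nonneg_left h.le hη)
      linarith
  refine ⟨(Real.measurable_exp.comp (hZ.const_mul η)).aestronglyMeasurable, ?_⟩
  rw [hasFiniteIntegral_iff_ofReal (ae_of_all _ fun ω => (Real.exp_pos _).le)]
  have hmono : (∫⁻ ω, ENNReal.ofReal (Real.exp (η * Z ω)) ∂μ)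
      ≤ ∫⁻ ω, (ENNReal.ofReal (Real.exp (η * K))
        + ENNReal.ofReal (if K ≤ Z ω then Real.exp (η * Z ω) else 0)) ∂μ := by
    apply lintegral_mono
    intro ω
    calc ENNReal.ofReal (Real.exp (η * Z ω))
        ≤ ENNReal.ofReal (Real.exp (η * K)
          + (if K ≤ Z ω then Real.exp (η * Z ω) else 0)) :=
          ENNReal.ofReal_le_ofReal (hptw ω)
      _ ≤ _ := ENNReal.ofReal_add_le
  have hsplit : (∫⁻ ω, (ENNReal.ofReal (Real.exp (η * K))
        + ENNReal.ofReal (if K ≤ Z ω then Real.exp (η * Z ω) else 0)) ∂μ)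
      = ENNReal.ofReal (Real.exp (η * K)) * μ Set.univ
        + ∫⁻ ω, ENNReal.ofReal (if K ≤ Z ω then Real.exp (η * Z ω) else 0) ∂μ := by
    rw [lintegral_add_left measurable_const, lintegral_const]
  calc (∫⁻ ω, ENNReal.ofReal (Real.exp (η * Z ω)) ∂μ) ≤ _ := hmono
    _ = _ := hsplit
    _ ≤ ENNReal.ofReal (Real.exp (η * K)) * 1 + ENNReal.ofReal C := by
        rw [measure_univ]
        exact add_le_add_right hfin _
    _ < ⊤ := by
        apply ENNReal.add_lt_top.2
        exact ⟨by simp [ENNReal.ofReal_lt_top], ENNReal.ofReal_lt_top⟩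
lemma exp_sub_one_le_of_abs_le {x : ℝ} (h : |x| ≤ 1) :
    Real.exp x - 1 ≤ x + x ^ 2 := by
  have h2 := Real.abs_exp_sub_one_sub_id_le h
  cases abs_le.1 h2 with
  | intro h3 h4 => linarith

lemma sqrt_le_add_div_two {y t : ℝ} (hy : 0 < y) (ht : 0 ≤ y ^ 2 + t) :
    Real.sqrt (y ^ 2 + t) ≤ y + t / (2 * y) := by
  have hy' : (0:ℝ) < 2 * y := by linarith
  have htl : -y ^ 2 ≤ t := by linarith
  have h0 : -(y / 2) ≤ t / (2 * y) := by
    have h2 : (-y ^ 2) / (2 * y) ≤ t / (2 * y) :=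
      (div_le_div_iff_of_pos_right hy').mpr htl
    have h3 : (-y ^ 2) / (2 * y) = -(y / 2) := by
      field_simp
    linarith
  have h1 : 0 ≤ y + t / (2 * y) := by linarith
  have hsq : (y + t / (2 * y)) ^ 2 = y ^ 2 + t + (t / (2 * y)) ^ 2 := by
    field_simp
    ring
  calc Real.sqrt (y ^ 2 + t) ≤ Real.sqrt ((y + t / (2 * y)) ^ 2) := by
        apply Real.sqrt_le_sqrt
        rw [hsq]
        nlinarith [sq_nonneg (t / (2 * y))]
    _ = y + t / (2 * y) := Real.sqrt_sq h1


namespace JSQModel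
section ModelAux

variable {N : ℕ} {α amax smax σa2 σs2 : ℝ} {Ω : Type} [MeasurableSpace Ω]
  {μ : Measure Ω} (M : JSQModel N α amax smax σa2 σs2 Ω μ)

lemma meas_q_i (i : Fin N) : Measurable fun ω => M.q ω i :=
  (measurable_pi_apply i).comp M.meas_q

lemma meas_s_i (i : Fin N) : Measurable fun ω => M.s ω i :=
  (measurable_pi_apply i).comp M.meas_s

lemma meas_atilde (i : Fin N) : Measurable fun ω => M.atilde ω i := by
  unfold JSQModel.atilde
  have hset : MeasurableSet {ω | i = M.I ω} := by
    have := M.meas_I (MeasurableSet.singleton i)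
    convert this using 1
    ext ω
    simp [eq_comm]
  exact Measurable.ite hset M.meas_a measurable_const

lemma meas_qplus : Measurable fun ω => M.qplus ω := by
  apply measurable_pi_lambda
  intro i
  unfold JSQModel.qplus
  exact ((M.meas_q_i i).add (M.meas_atilde i)).sub (M.meas_s_i i)

lemma cast_qplus (ω : Ω) (i : Fin N) :
    ((M.qplus ω i : ℕ) : ℝ)
      = (M.q ω i : ℝ) + (M.atilde ω i : ℝ) - (M.s ω i : ℝ) + (M.u ω i : ℝ) := by
  unfold JSQModel.qplus JSQModel.u
  rw [nat_sub_cast_real]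
  push_cast
  ring

lemma stat_integral {F : (Fin N → ℕ) → ℝ} (hF : Measurable F) :
    ∫ ω, F (M.qplus ω) ∂μ = ∫ ω, F (M.q ω) ∂μ := by
  have h := (M.stationary.comp (u := F) hF).integral_eq
  convert h using 2
  all_goals rfl

end ModelAux
end JSQModel
noncomputable section StepDefs

/-- deviation of the cast of an integer vector -/
noncomputable def dvN {N : ℕ} (v : Fin N → ℕ) : ℝ := devV fun i => (v i : ℝ)

/-- average of the cast of an integer vector -/
noncomputable def avN {N : ℕ} (v : Fin N → ℕ) : ℝ := avgV fun i => (v i : ℝ)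

/-- sum of the cast of an integer vector -/
noncomputable def svN {N : ℕ} (v : Fin N → ℕ) : ℝ := ∑ i, (v i : ℝ)

/-- truncated exponential test function for the perpendicular component -/
noncomputable def psiA (η K Mn : ℝ) {N : ℕ} (v : Fin N → ℕ) : ℝ :=
  if K ≤ dvN v ∧ dvN v ≤ Mn then Real.exp (η * min (dvN v) Mn) else 0

/-- auxiliary test function for the service fluctuation terms -/
noncomputable def psiAi (η K Mn : ℝ) {N : ℕ} (i : Fin N) (v : Fin N → ℕ) : ℝ :=
  psiA η K Mn v * (((v i : ℝ) - avN v) / dvN v)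

/-- truncated exponential test function for the total queue length -/
noncomputable def psiB (θ Mn : ℝ) {N : ℕ} (v : Fin N → ℕ) : ℝ :=
  if 0 ≤ svN v ∧ svN v ≤ Mn then Real.exp (θ * min (svN v) Mn) else 0

end StepDefs

lemma dvN_nonneg {N : ℕ} (v : Fin N → ℕ) : 0 ≤ dvN v := devV_nonneg _

set_option maxHeartbeats 2000000 in
lemma stepA_pointwise {N : ℕ} (hN : 2 ≤ N) {amax smax κ c₀ C₃ η K Mn : ℝ}
    (hamax : 0 < amax) (hsmax : 0 < smax)
    (hκdef : κ = Real.sqrt N * ((N : ℝ) - 1))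
    (hc₀def : c₀ = Real.sqrt N * (amax + 2 * smax))
    (hC₃def : C₃ = (N : ℝ) * smax ^ 2 + c₀ ^ 2 / 2)
    (hK : 0 < K) (hKMn : K ≤ Mn) (hη : 0 < η) (hηc₀ : η * c₀ ≤ 1)
    (q s : Fin N → ℕ) (a : ℕ) (i₀ : Fin N)
    (hmin : ∀ j, q i₀ ≤ q j) (ha : (a : ℝ) ≤ amax) (hs : ∀ i, (s i : ℝ) ≤ smax) :
    Real.exp (η * min (dvN fun i => q i + (if i = i₀ then a else 0) - s i) Mn)
      - Real.exp (η * min (dvN q) Mn)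
    ≤ (if dvN q < K then Real.exp (η * K) * (Real.exp (η * c₀) - 1) else 0)
      + psiA η K Mn q *
        (η * (-(a : ℝ) / κ
            - (∑ i, ((q i : ℝ) - avN q) * ((s i : ℝ) - 1)) / dvN q
            + C₃ / dvN q)
          + η ^ 2 * c₀ ^ 2) := by
  have hNne : N ≠ 0 := by omega
  have hNR : (0 : ℝ) < N := Nat.cast_pos.2 (by omega)
  have hN2 : (2 : ℝ) ≤ (N : ℝ) := by exact_mod_cast hN
  have hsqN : (0 : ℝ) < Real.sqrt N := Real.sqrt_pos.2 hNR
  have hκ : 0 < κ := by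
    rw [hκdef]
    exact mul_pos hsqN (by linarith)
  have hc₀ : 0 < c₀ := by rw [hc₀def]; positivity
  have hC₃ : 0 < C₃ := by rw [hC₃def]; positivity
  set Qv : Fin N → ℝ := fun i => (q i : ℝ) with hQv
  set Sv : Fin N → ℝ := fun i => (s i : ℝ) with hSv
  set Av : Fin N → ℝ := fun i => if i = i₀ then (a : ℝ) else 0 with hAv
  set Uv : Fin N → ℝ := fun i => ((s i - (q i + (if i = i₀ then a else 0)) : ℕ) : ℝ)
    with hUv
  set Vv : Fin N → ℝ := fun i => Av i - Sv i + Uv i with hVv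
  set y : ℝ := dvN q with hydef
  set yp : ℝ := dvN (fun i => q i + (if i = i₀ then a else 0) - s i) with hypdef
  set R : ℝ := ∑ i, (Qv i - avN q) * (Sv i - 1) with hRdef
  have hyQ : y = devV Qv := rfl
  have havQ : avN q = avgV Qv := rfl
  have hdyn : ∀ i, ((q i + (if i = i₀ then a else 0) - s i : ℕ) : ℝ) = Qv i + Vv i := by
    intro i
    rw [nat_sub_cast_real]
    simp only [hVv, hAv, hSv, hUv, hQv]
    push_cast
    ring
  have hypQ : yp = devV (fun i => Qv i + Vv i) := by
    rw [hypdef]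
    unfold dvN
    congr 1
    funext i
    exact hdyn i
  have hA0 : (0 : ℝ) ≤ (a : ℝ) := Nat.cast_nonneg a
  have hVb : ∀ i, |Vv i| ≤ amax + 2 * smax := by
    intro i
    have hS0 : (0 : ℝ) ≤ Sv i := Nat.cast_nonneg _
    have hU0 : (0 : ℝ) ≤ Uv i := Nat.cast_nonneg _
    have hUS : Uv i ≤ Sv i := by
      simp only [hUv, hSv]
      exact_mod_cast Nat.cast_le.2 (Nat.sub_le _ _)
    have hSb := hs i
    have hAb : 0 ≤ Av i ∧ Av i ≤ amax := by
      simp only [hAv]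
      split
      · exact ⟨hA0, ha⟩
      · exact ⟨le_rfl, hamax.le⟩
    simp only [hVv]
    rw [abs_le]
    constructor <;> linarith [hAb.1, hAb.2]
  have hsumVsq : (∑ i, Vv i ^ 2) ≤ c₀ ^ 2 := by
    have h1 : (∑ i, Vv i ^ 2) ≤ N * (amax + 2 * smax) ^ 2 := by
      calc (∑ i, Vv i ^ 2) ≤ ∑ _i : Fin N, (amax + 2 * smax) ^ 2 := by
            apply Finset.sum_le_sum
            intro i _
            rcases abs_le.1 (hVb i) with ⟨h1, h2⟩
            exact sq_le_sq' h1 h2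
        _ = N * (amax + 2 * smax) ^ 2 := by
            rw [Finset.sum_const, Finset.card_univ, Fintype.card_fin, nsmul_eq_mul]
    have h2 : c₀ ^ 2 = N * (amax + 2 * smax) ^ 2 := by
      rw [hc₀def, mul_pow, Real.sq_sqrt hNR.le]
    linarith
  have hsumV : Real.sqrt (∑ i, Vv i ^ 2) ≤ c₀ := by
    calc Real.sqrt (∑ i, Vv i ^ 2) ≤ Real.sqrt (c₀ ^ 2) := Real.sqrt_le_sqrt hsumVsq
      _ = c₀ := Real.sqrt_sq hc₀.le
  have hLip1 : yp ≤ y + c₀ := by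
    rw [hypQ, hyQ]
    calc devV (fun i => Qv i + Vv i) ≤ devV Qv + Real.sqrt (∑ i, Vv i ^ 2) :=
          devV_add_le hNne Qv Vv
      _ ≤ devV Qv + c₀ := add_le_add_right hsumV _
  have hLip2 : y ≤ yp + c₀ := by
    rw [hypQ, hyQ]
    calc devV Qv ≤ devV (fun i => Qv i + Vv i) + Real.sqrt (∑ i, Vv i ^ 2) :=
          devV_sub_le hNne Qv Vv
      _ ≤ devV (fun i => Qv i + Vv i) + c₀ := add_le_add_right hsumV _
  have hyp0 : 0 ≤ yp := dvN_nonneg _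
  by_cases hyK : y < K
  · -- below the drift region
    have hψ0 : psiA η K Mn q = 0 := by
      unfold psiA
      rw [if_neg]
      rw [← hydef]
      push_neg
      intro h
      exact absurd h (not_le.2 hyK)
    rw [if_pos hyK, hψ0, zero_mul, add_zero]
    have hmm : min yp Mn - min y Mn ≤ c₀ := by
      have h1 : |min yp Mn - min y Mn| ≤ |yp - y| := abs_min_sub_min_le
      have h2 : |yp - y| ≤ c₀ := abs_le.2 ⟨by linarith, by linarith⟩
      have := le_trans h1 h2
      exact le_trans (le_abs_self _) this
    have e1 : Real.exp (η * min yp Mn)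
        ≤ Real.exp (η * min y Mn) * Real.exp (η * c₀) := by
      rw [← Real.exp_add]
      apply Real.exp_le_exp.2
      have := mul_le_mul_of_nonneg_left hmm hη.le
      linarith
    have e2 : Real.exp (η * min y Mn) ≤ Real.exp (η * K) := by
      apply Real.exp_le_exp.2
      have h4 : min y Mn ≤ K := le_trans (min_le_left _ _) hyK.le
      exact mul_le_mul_of_nonneg_left h4 hη.le
    have e3 : (1 : ℝ) ≤ Real.exp (η * c₀) := Real.one_le_exp (by positivity)
    have hgle : Real.exp (η * min y Mn) * (Real.exp (η * c₀) - 1)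
        ≤ Real.exp (η * K) * (Real.exp (η * c₀) - 1) :=
      mul_le_mul_of_nonneg_right e2 (by linarith)
    calc Real.exp (η * min yp Mn) - Real.exp (η * min y Mn)
        ≤ Real.exp (η * min y Mn) * Real.exp (η * c₀)
          - Real.exp (η * min y Mn) := by linarith
      _ = Real.exp (η * min y Mn) * (Real.exp (η * c₀) - 1) := by ring
      _ ≤ _ := hgle
  · push_neg at hyK
    have hy0 : 0 < y := lt_of_lt_of_le hK hyK
    by_cases hyM : y ≤ Mn
    · -- drift region
      have hψG : psiA η K Mn q = Real.exp (η * y) := by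
        unfold psiA
        rw [← hydef, if_pos ⟨hyK, hyM⟩, min_eq_left hyM]
      -- the quadratic drift bound
      have hQbar0 : 0 ≤ avgV Qv := by
        rw [avgV]
        apply div_nonneg _ hNR.le
        exact Finset.sum_nonneg fun i _ => Nat.cast_nonneg _
      have hPU : (∑ i, (Qv i - avgV Qv) * Uv i) ≤ N * smax ^ 2 := by
        calc (∑ i, (Qv i - avgV Qv) * Uv i) ≤ ∑ _i : Fin N, smax ^ 2 := by
              apply Finset.sum_le_sum
              intro i _
              by_cases hU : Uv i = 0
              · rw [hU, mul_zero]; positivity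
              · have hU0 : (0 : ℝ) ≤ Uv i := Nat.cast_nonneg _
                have hUpos : 0 < Uv i := lt_of_le_of_ne hU0 (Ne.symm hU)
                have hQS : q i + (if i = i₀ then a else 0) < s i := by
                  by_contra hcon
                  push_neg at hcon
                  have : s i - (q i + (if i = i₀ then a else 0)) = 0 :=
                    Nat.sub_eq_zero_of_le hcon
                  simp only [hUv, this, Nat.cast_zero] at hUpos
                  exact lt_irrefl _ hUpos
                have hQle : Qv i ≤ smax := by
                  have h1 : (q i : ℝ) ≤ (s i : ℝ) := by
                    exact_mod_cast Nat.le_of_lt (lt_of_le_of_lt (Nat.le_add_right _ _) hQS)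
                  exact le_trans h1 (hs i)
                have hUle : Uv i ≤ smax := by
                  have hUS : Uv i ≤ Sv i := by
                    simp only [hUv, hSv]
                    exact_mod_cast Nat.cast_le.2 (Nat.sub_le _ _)
                  exact le_trans hUS (hs i)
                have h1 : Qv i - avgV Qv ≤ smax := by linarith
                calc (Qv i - avgV Qv) * Uv i ≤ smax * Uv i :=
                      mul_le_mul_of_nonneg_right h1 hU0
                  _ ≤ smax * smax := mul_le_mul_of_nonneg_left hUle hsmax.le
                  _ = smax ^ 2 := by ring
          _ = N * smax ^ 2 := by
              rw [Finset.sum_const, Finset.card_univ, Fintype.card_fin, nsmul_eq_mul]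
      have hPA : (∑ i, (Qv i - avgV Qv) * Av i) ≤ -((a : ℝ) * y / κ) := by
        have hsum1 : (∑ i, (Qv i - avgV Qv) * Av i) = (Qv i₀ - avgV Qv) * a := by
          rw [hAv]
          rw [Finset.sum_eq_single i₀]
          · simp
          · intro b _ hb
            simp [hb]
          · intro hb
            exact absurd (Finset.mem_univ i₀) hb
        have hminR : ∀ j, Qv i₀ ≤ Qv j := fun j => by
          simp only [hQv]; exact_mod_cast hmin j
        have hmd := devV_le_of_min hN Qv i₀ hminR
        have h2 : Qv i₀ - avgV Qv ≤ -(y / κ) := by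
          have h3 : y ≤ κ * (avgV Qv - Qv i₀) := by
            rw [hκdef, hyQ]
            calc devV Qv ≤ Real.sqrt N * ((N : ℝ) - 1) * (avgV Qv - Qv i₀) := hmd
              _ = Real.sqrt N * ((N : ℝ) - 1) * (avgV Qv - Qv i₀) := rfl
          have h4 : y / κ ≤ avgV Qv - Qv i₀ := by
            rw [div_le_iff₀ hκ]
            linarith [h3]
          linarith
        rw [hsum1]
        calc (Qv i₀ - avgV Qv) * a ≤ -(y / κ) * a :=
              mul_le_mul_of_nonneg_right h2 hA0
          _ = -((a : ℝ) * y / κ) := by ring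
      have hPS : (∑ i, (Qv i - avgV Qv) * Sv i) = R := by
        have hterm : ∀ i : Fin N, (Qv i - avgV Qv) * Sv i
            = (Qv i - avgV Qv) * (Sv i - 1) + (Qv i - avgV Qv) := by
          intro i; ring
        rw [Finset.sum_congr rfl fun i _ => hterm i, Finset.sum_add_distrib,
          sum_sub_avgV hNne Qv, add_zero, hRdef, havQ]
      have hquad : yp ^ 2
          ≤ y ^ 2 + (2 * (-((a : ℝ) * y / κ) - R + N * smax ^ 2) + c₀ ^ 2) := by
        have hdd : yp ^ 2 = y ^ 2 + 2 * (∑ i, (Qv i - avgV Qv) * Vv i) + dsqV Vv := by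
          rw [hypQ, hyQ, devV_sq, devV_sq, dsqV_add hNne Qv Vv]
        have hVle : dsqV Vv ≤ c₀ ^ 2 := le_trans (dsqV_le_sum_sq hNne Vv) hsumVsq
        have hPV : (∑ i, (Qv i - avgV Qv) * Vv i)
            = (∑ i, (Qv i - avgV Qv) * Av i) - (∑ i, (Qv i - avgV Qv) * Sv i)
              + (∑ i, (Qv i - avgV Qv) * Uv i) := by
          rw [← Finset.sum_sub_distrib, ← Finset.sum_add_distrib]
          apply Finset.sum_congr rfl
          intro i _
          simp only [hVv]
          ring
        rw [hdd, hPV, hPS]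
        linarith [hPA, hPU, hVle]
      have ht0 : 0 ≤ y ^ 2 + (2 * (-((a : ℝ) * y / κ) - R + N * smax ^ 2) + c₀ ^ 2) :=
        le_trans (sq_nonneg yp) hquad
      have hyple : yp ≤ y + (2 * (-((a : ℝ) * y / κ) - R + N * smax ^ 2) + c₀ ^ 2)
          / (2 * y) := by
        calc yp = Real.sqrt (yp ^ 2) := (Real.sqrt_sq hyp0).symm
          _ ≤ Real.sqrt (y ^ 2 + (2 * (-((a : ℝ) * y / κ) - R + N * smax ^ 2) + c₀ ^ 2)) :=
            Real.sqrt_le_sqrt hquad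
          _ ≤ y + (2 * (-((a : ℝ) * y / κ) - R + N * smax ^ 2) + c₀ ^ 2) / (2 * y) :=
            sqrt_le_add_div_two hy0 ht0
      have hyD : yp - y ≤ -(a : ℝ) / κ - R / y + C₃ / y := by
        have ht : (2 * (-((a : ℝ) * y / κ) - R + N * smax ^ 2) + c₀ ^ 2) / (2 * y)
            = -(a : ℝ) / κ - R / y + C₃ / y := by
          rw [hC₃def]
          field_simp
          ring
        rw [ht] at hyple
        linarith
      -- exponential part
      have hmymn : min y Mn = y := min_eq_left hyM
      have hΔabs : |η * min yp Mn - η * y| ≤ η * c₀ := by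
        have h1 : |min yp Mn - min y Mn| ≤ |yp - y| := abs_min_sub_min_le
        have h2 : |yp - y| ≤ c₀ := abs_le.2 ⟨by linarith, by linarith⟩
        have h3 : |min yp Mn - y| ≤ c₀ := by rw [← hmymn]; exact le_trans h1 h2
        calc |η * min yp Mn - η * y| = η * |min yp Mn - y| := by
              rw [← mul_sub, abs_mul, abs_of_nonneg hη.le]
          _ ≤ η * c₀ := mul_le_mul_of_nonneg_left h3 hη.le
      have hΔ1 : |η * min yp Mn - η * y| ≤ 1 := le_trans hΔabs hηc₀
      have hEΔ : Real.exp (η * min yp Mn - η * y) - 1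
          ≤ (η * min yp Mn - η * y) + η ^ 2 * c₀ ^ 2 := by
        have h2 := exp_sub_one_le_of_abs_le hΔ1
        have h3 : (η * min yp Mn - η * y) ^ 2 ≤ η ^ 2 * c₀ ^ 2 := by
          rcases abs_le.1 hΔabs with ⟨ha1, ha2⟩
          calc (η * min yp Mn - η * y) ^ 2 ≤ (η * c₀) ^ 2 := sq_le_sq' ha1 ha2
            _ = η ^ 2 * c₀ ^ 2 := by ring
        linarith
      have hΔle : η * min yp Mn - η * y ≤ η * (yp - y) := by
        have h5 : min yp Mn ≤ yp := min_le_left _ _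
        have := mul_le_mul_of_nonneg_left h5 hη.le
        linarith [mul_le_mul_of_nonneg_left h5 hη.le]
      have hexp : Real.exp (η * min yp Mn)
          = Real.exp (η * y) * Real.exp (η * min yp Mn - η * y) := by
        rw [← Real.exp_add]
        ring_nf
      rw [if_neg (not_lt.2 hyK), hψG, hmymn, zero_add]
      have hepos := Real.exp_pos (η * y)
      have hfin : Real.exp (η * min yp Mn) - Real.exp (η * y)
          = Real.exp (η * y) * (Real.exp (η * min yp Mn - η * y) - 1) := by
        rw [hexp]; ring
      rw [hfin]
      apply mul_le_mul_of_nonneg_left _ hepos.le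
      have hD2 : η * min yp Mn - η * y ≤ η * (-(a : ℝ) / κ - R / y + C₃ / y) :=
        le_trans hΔle (mul_le_mul_of_nonneg_left hyD hη.le)
      calc Real.exp (η * min yp Mn - η * y) - 1
          ≤ (η * min yp Mn - η * y) + η ^ 2 * c₀ ^ 2 := hEΔ
        _ ≤ η * (-(a : ℝ) / κ - R / y + C₃ / y) + η ^ 2 * c₀ ^ 2 := by linarith
    · -- above the truncation level
      push_neg at hyM
      have hψ0 : psiA η K Mn q = 0 := by
        unfold psiA
        rw [← hydef, if_neg]
        push_neg
        intro _
        exact hyM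
      rw [if_neg (not_lt.2 hyK), hψ0, zero_mul, add_zero]
      have h1 : min y Mn = Mn := min_eq_right hyM.le
      have h2 : Real.exp (η * min yp Mn) ≤ Real.exp (η * Mn) := by
        apply Real.exp_le_exp.2
        exact mul_le_mul_of_nonneg_left (min_le_right _ _) hη.le
      rw [h1]
      linarith
lemma continuous_avgV {N : ℕ} : Continuous (avgV (N := N)) := by
  unfold avgV
  exact (continuous_finset_sum _ fun i _ => continuous_apply i).div_const _

lemma continuous_devV {N : ℕ} : Continuous (devV (N := N)) := by
  unfold devV dsqV
  exact Real.continuous_sqrt.comp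
    (continuous_finset_sum _ fun i _ => ((continuous_apply i).sub continuous_avgV).pow 2)

lemma measurable_castVec {N : ℕ} :
    Measurable fun (v : Fin N → ℕ) => (fun i => (v i : ℝ)) :=
  measurable_pi_lambda _ fun i => measurable_from_nat.comp (measurable_pi_apply i)

lemma measurable_dvN {N : ℕ} : Measurable (dvN (N := N)) :=
  continuous_devV.measurable.comp measurable_castVec

lemma measurable_avN {N : ℕ} : Measurable (avN (N := N)) :=
  continuous_avgV.measurable.comp measurable_castVec

lemma measurable_svN {N : ℕ} : Measurable (svN (N := N)) := by
  unfold svN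
  exact Finset.measurable_sum _ fun i _ =>
    measurable_from_nat.comp (measurable_pi_apply i)

lemma measurable_psiA {N : ℕ} (η K Mn : ℝ) : Measurable (psiA η K Mn (N := N)) := by
  unfold psiA
  exact Measurable.ite
    ((measurableSet_le measurable_const measurable_dvN).inter
      (measurableSet_le measurable_dvN measurable_const))
    (Real.measurable_exp.comp ((measurable_dvN.min measurable_const).const_mul η))
    measurable_const

lemma measurable_psiAi {N : ℕ} (η K Mn : ℝ) (i : Fin N) :
    Measurable (psiAi η K Mn i (N := N)) := by
  unfold psiAi
  exact (measurable_psiA η K Mn).mul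
    (((measurable_from_nat.comp (measurable_pi_apply i)).sub measurable_avN).div
      measurable_dvN)

lemma measurable_psiB {N : ℕ} (θ Mn : ℝ) : Measurable (psiB θ Mn (N := N)) := by
  unfold psiB
  exact Measurable.ite
    ((measurableSet_le measurable_const measurable_svN).inter
      (measurableSet_le measurable_svN measurable_const))
    (Real.measurable_exp.comp ((measurable_svN.min measurable_const).const_mul θ))
    measurable_const

lemma psiA_nonneg {N : ℕ} (η K Mn : ℝ) (v : Fin N → ℕ) : 0 ≤ psiA η K Mn v := by
  unfold psiA
  split
  · exact (Real.exp_pos _).le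
  · exact le_rfl

lemma psiA_le {N : ℕ} {η : ℝ} (hη : 0 ≤ η) (K Mn : ℝ) (v : Fin N → ℕ) :
    psiA η K Mn v ≤ Real.exp (η * Mn) := by
  unfold psiA
  split
  · exact Real.exp_le_exp.2 (mul_le_mul_of_nonneg_left (min_le_right _ _) hη)
  · exact (Real.exp_pos _).le

lemma abs_psiAi_le {N : ℕ} {η K : ℝ} (hη : 0 ≤ η) (hK : 0 < K) (Mn : ℝ)
    (i : Fin N) (v : Fin N → ℕ) : |psiAi η K Mn i v| ≤ Real.exp (η * Mn) := by
  unfold psiAi psiA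
  by_cases h : K ≤ dvN v ∧ dvN v ≤ Mn
  · rw [if_pos h]
    have hdv : 0 < dvN v := lt_of_lt_of_le hK h.1
    have hr : |((v i : ℝ) - avN v) / dvN v| ≤ 1 := by
      rw [abs_div, abs_of_pos hdv, div_le_one hdv]
      exact abs_sub_avgV_le (fun j => (v j : ℝ)) i
    calc |Real.exp (η * min (dvN v) Mn) * (((v i : ℝ) - avN v) / dvN v)|
        = Real.exp (η * min (dvN v) Mn) * |((v i : ℝ) - avN v) / dvN v| := by
          rw [abs_mul, abs_of_pos (Real.exp_pos _)]
      _ ≤ Real.exp (η * min (dvN v) Mn) * 1 :=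
          mul_le_mul_of_nonneg_left hr (Real.exp_pos _).le
      _ = Real.exp (η * min (dvN v) Mn) := mul_one _
      _ ≤ Real.exp (η * Mn) :=
          Real.exp_le_exp.2 (mul_le_mul_of_nonneg_left (min_le_right _ _) hη)
  · rw [if_neg h, zero_mul, abs_zero]
    exact (Real.exp_pos _).le

lemma psiB_nonneg {N : ℕ} (θ Mn : ℝ) (v : Fin N → ℕ) : 0 ≤ psiB θ Mn v := by
  unfold psiB
  split
  · exact (Real.exp_pos _).le
  · exact le_rfl

lemma psiB_le {N : ℕ} {θ : ℝ} (hθ : 0 ≤ θ) (Mn : ℝ) (v : Fin N → ℕ) :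
    psiB θ Mn v ≤ Real.exp (θ * Mn) := by
  unfold psiB
  split
  · exact Real.exp_le_exp.2 (mul_le_mul_of_nonneg_left (min_le_right _ _) hθ)
  · exact (Real.exp_pos _).le

lemma svN_nonneg {N : ℕ} (v : Fin N → ℕ) : 0 ≤ svN v :=
  Finset.sum_nonneg fun i _ => Nat.cast_nonneg _

set_option maxHeartbeats 1000000 in
lemma stepB_pointwise {N : ℕ} (hN : 2 ≤ N) {amax smax c₁ θ η Mn : ℝ}
    (hamax : 0 < amax) (hsmax : 0 < smax)
    (hc₁def : c₁ = amax + 2 * N * smax)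
    (hθ : 0 < θ) (hθc₁ : θ * c₁ ≤ 1) (hη : 0 < η) (hθN : θ * N ≤ η)
    (q s : Fin N → ℕ) (a : ℕ) (i₀ : Fin N)
    (ha : (a : ℝ) ≤ amax) (hs : ∀ i, (s i : ℝ) ≤ smax) :
    Real.exp (θ * min (svN fun i => q i + (if i = i₀ then a else 0) - s i) Mn)
      - Real.exp (θ * min (svN q) Mn)
    ≤ psiB θ Mn q * (θ * ((a : ℝ) - ∑ i, (s i : ℝ)) + θ ^ 2 * c₁ ^ 2)
      + θ * ((N : ℝ) * smax * Real.exp (θ * (N : ℝ) * smax)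
          * Real.exp (η * dvN q)) := by
  have hNne : N ≠ 0 := by omega
  have hNR : (0 : ℝ) < N := Nat.cast_pos.2 (by omega)
  have hc₁ : 0 < c₁ := by rw [hc₁def]; positivity
  set Qv : Fin N → ℝ := fun i => (q i : ℝ) with hQv
  set X : ℝ := svN q with hXdef
  set Xp : ℝ := svN (fun i => q i + (if i = i₀ then a else 0) - s i) with hXpdef
  set SU : ℝ := ∑ i, ((s i - (q i + (if i = i₀ then a else 0)) : ℕ) : ℝ) with hSUdef
  set SS : ℝ := ∑ i, (s i : ℝ) with hSSdef
  have hX0 : 0 ≤ X := svN_nonneg q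
  have hXp0 : 0 ≤ Xp := svN_nonneg _
  have hSU0 : 0 ≤ SU := Finset.sum_nonneg fun i _ => Nat.cast_nonneg _
  have hSS0 : 0 ≤ SS := Finset.sum_nonneg fun i _ => Nat.cast_nonneg _
  have hA0 : (0 : ℝ) ≤ (a : ℝ) := Nat.cast_nonneg a
  have hSUSS : SU ≤ SS := by
    apply Finset.sum_le_sum
    intro i _
    exact_mod_cast Nat.sub_le _ _
  have hSSb : SS ≤ N * smax := by
    calc SS ≤ ∑ _i : Fin N, smax := Finset.sum_le_sum fun i _ => hs i
      _ = N * smax := by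
        rw [Finset.sum_const, Finset.card_univ, Fintype.card_fin, nsmul_eq_mul]
  have hdynX : Xp = X + (a : ℝ) - SS + SU := by
    rw [hXpdef, hXdef]
    unfold svN
    have hterm : ∀ i : Fin N, ((q i + (if i = i₀ then a else 0) - s i : ℕ) : ℝ)
        = (q i : ℝ) + ((if i = i₀ then a else 0 : ℕ) : ℝ) - (s i : ℝ)
          + ((s i - (q i + (if i = i₀ then a else 0)) : ℕ) : ℝ) := by
      intro i
      rw [nat_sub_cast_real]
      push_cast
      ring
    rw [Finset.sum_congr rfl fun i _ => hterm i]
    have hsplit : (∑ i : Fin N, ((q i : ℝ) + ((if i = i₀ then a else 0 : ℕ) : ℝ)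
        - (s i : ℝ) + ((s i - (q i + (if i = i₀ then a else 0)) : ℕ) : ℝ)))
        = (∑ i, (q i : ℝ)) + (∑ i, ((if i = i₀ then a else 0 : ℕ) : ℝ))
          - (∑ i, (s i : ℝ))
          + ∑ i, ((s i - (q i + (if i = i₀ then a else 0)) : ℕ) : ℝ) := by
      rw [← Finset.sum_add_distrib, ← Finset.sum_sub_distrib, ← Finset.sum_add_distrib]
    rw [hsplit]
    have hite : (∑ i : Fin N, ((if i = i₀ then a else 0 : ℕ) : ℝ)) = (a : ℝ) := by
      have : ∀ i : Fin N, ((if i = i₀ then a else 0 : ℕ) : ℝ)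
          = if i = i₀ then (a : ℝ) else 0 := by
        intro i; split <;> simp
      rw [Finset.sum_congr rfl fun i _ => this i, Finset.sum_ite_eq']
      simp
    rw [hite, hSUdef, hSSdef]
  have hXpX : |Xp - X| ≤ c₁ := by
    rw [hdynX, hc₁def, abs_le]
    constructor <;> [linarith; linarith]
  by_cases hXM : X ≤ Mn
  · -- main region
    have hψ : psiB θ Mn q = Real.exp (θ * X) := by
      unfold psiB
      rw [← hXdef, if_pos ⟨hX0, hXM⟩, min_eq_left hXM]
    have hmx : min X Mn = X := min_eq_left hXM
    have hΔabs : |θ * min Xp Mn - θ * X| ≤ θ * c₁ := by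
      have h1 : |min Xp Mn - min X Mn| ≤ |Xp - X| := abs_min_sub_min_le
      rw [hmx] at h1
      calc |θ * min Xp Mn - θ * X| = θ * |min Xp Mn - X| := by
            rw [← mul_sub, abs_mul, abs_of_nonneg hθ.le]
        _ ≤ θ * c₁ := mul_le_mul_of_nonneg_left (le_trans h1 hXpX) hθ.le
    have hΔ1 : |θ * min Xp Mn - θ * X| ≤ 1 := le_trans hΔabs hθc₁
    have hEΔ : Real.exp (θ * min Xp Mn - θ * X) - 1
        ≤ (θ * min Xp Mn - θ * X) + θ ^ 2 * c₁ ^ 2 := by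
      have h2 := exp_sub_one_le_of_abs_le hΔ1
      have h3 : (θ * min Xp Mn - θ * X) ^ 2 ≤ θ ^ 2 * c₁ ^ 2 := by
        rcases abs_le.1 hΔabs with ⟨ha1, ha2⟩
        calc (θ * min Xp Mn - θ * X) ^ 2 ≤ (θ * c₁) ^ 2 := sq_le_sq' ha1 ha2
          _ = θ ^ 2 * c₁ ^ 2 := by ring
      linarith
    have hΔle : θ * min Xp Mn - θ * X ≤ θ * (Xp - X) := by
      have h5 : min Xp Mn ≤ Xp := min_le_left _ _
      linarith [mul_le_mul_of_nonneg_left h5 hθ.le]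
    -- bound on the unused-service term
    have hU : Real.exp (θ * X) * SU
        ≤ (N : ℝ) * smax * Real.exp (θ * (N : ℝ) * smax) * Real.exp (η * dvN q) := by
      by_cases hSUz : SU = 0
      · rw [hSUz, mul_zero]
        positivity
      · have hSUpos : 0 < SU := lt_of_le_of_ne hSU0 (Ne.symm hSUz)
        obtain ⟨i, -, hUi⟩ : ∃ i ∈ Finset.univ, ((s i - (q i + (if i = i₀ then a else 0)) : ℕ) : ℝ) ≠ 0 := by
          by_contra hcon
          push_neg at hcon
          have : SU = 0 := by
            rw [hSUdef]
            exact Finset.sum_eq_zero fun i hi => hcon i hi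
          exact hSUz this
        have hqs : q i < s i := by
          have h1 : s i - (q i + (if i = i₀ then a else 0)) ≠ 0 := by
            intro h
            apply hUi
            rw [h]
            simp
          have h2 : q i + (if i = i₀ then a else 0) < s i := by
            omega
          omega
        have hQi : Qv i ≤ smax := by
          have h1 : (q i : ℝ) ≤ (s i : ℝ) := by exact_mod_cast hqs.le
          exact le_trans h1 (hs i)
        have hbar : avgV Qv ≤ Qv i + dvN q := by
          have h1 : |Qv i - avgV Qv| ≤ devV Qv := abs_sub_avgV_le Qv i
          have h2 : avgV Qv - Qv i ≤ devV Qv := by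
            rcases abs_le.1 h1 with ⟨h3, _⟩
            linarith
          have h4 : dvN q = devV Qv := rfl
          linarith [h4.ge]
        have hXavg : X = N * avgV Qv := by
          rw [hXdef]
          unfold svN avgV
          field_simp
          rfl
        have hy0 : 0 ≤ dvN q := dvN_nonneg q
        have hXb : θ * X ≤ θ * (N : ℝ) * smax + η * dvN q := by
          have h1 : X ≤ N * smax + N * dvN q := by
            rw [hXavg]
            have h2 : Qv i + dvN q ≤ smax + dvN q := by linarith [hQi]
            have h3 : avgV Qv ≤ smax + dvN q := le_trans hbar h2
            have h4 := mul_le_mul_of_nonneg_left h3 hNR.le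
            nlinarith [h4]
          calc θ * X ≤ θ * ((N : ℝ) * smax + N * dvN q) :=
                mul_le_mul_of_nonneg_left h1 hθ.le
            _ = θ * (N : ℝ) * smax + (θ * N) * dvN q := by ring
            _ ≤ θ * (N : ℝ) * smax + η * dvN q := by
                have := mul_le_mul_of_nonneg_right hθN hy0
                linarith
        have hSUb : SU ≤ (N : ℝ) * smax := le_trans hSUSS hSSb
        calc Real.exp (θ * X) * SU
            ≤ Real.exp (θ * (N : ℝ) * smax + η * dvN q) * SU :=
              mul_le_mul_of_nonneg_right (Real.exp_le_exp.2 hXb) hSU0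
          _ ≤ Real.exp (θ * (N : ℝ) * smax + η * dvN q) * ((N : ℝ) * smax) :=
              mul_le_mul_of_nonneg_left hSUb (Real.exp_pos _).le
          _ = (N : ℝ) * smax * Real.exp (θ * (N : ℝ) * smax) * Real.exp (η * dvN q) := by
              rw [Real.exp_add]; ring
    -- assemble
    have hexp : Real.exp (θ * min Xp Mn)
        = Real.exp (θ * X) * Real.exp (θ * min Xp Mn - θ * X) := by
      rw [← Real.exp_add]; ring_nf
    have hepos := Real.exp_pos (θ * X)
    rw [hψ, hmx]
    have hstep1 : Real.exp (θ * min Xp Mn) - Real.exp (θ * X)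
        ≤ Real.exp (θ * X) * ((θ * (Xp - X)) + θ ^ 2 * c₁ ^ 2) := by
      rw [hexp]
      have h6 : Real.exp (θ * min Xp Mn - θ * X) - 1
          ≤ θ * (Xp - X) + θ ^ 2 * c₁ ^ 2 := by linarith
      have := mul_le_mul_of_nonneg_left h6 hepos.le
      calc Real.exp (θ * X) * Real.exp (θ * min Xp Mn - θ * X) - Real.exp (θ * X)
          = Real.exp (θ * X) * (Real.exp (θ * min Xp Mn - θ * X) - 1) := by ring
        _ ≤ _ := this
    have hstep2 : Real.exp (θ * X) * ((θ * (Xp - X)) + θ ^ 2 * c₁ ^ 2)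
        = Real.exp (θ * X) * (θ * ((a : ℝ) - SS) + θ ^ 2 * c₁ ^ 2)
          + θ * (Real.exp (θ * X) * SU) := by
      rw [hdynX]; ring
    have hstep3 : θ * (Real.exp (θ * X) * SU)
        ≤ θ * ((N : ℝ) * smax * Real.exp (θ * (N : ℝ) * smax)
            * Real.exp (η * dvN q)) :=
      mul_le_mul_of_nonneg_left hU hθ.le
    calc Real.exp (θ * min Xp Mn) - Real.exp (θ * X)
        ≤ Real.exp (θ * X) * ((θ * (Xp - X)) + θ ^ 2 * c₁ ^ 2) := hstep1
      _ = Real.exp (θ * X) * (θ * ((a : ℝ) - SS) + θ ^ 2 * c₁ ^ 2)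
          + θ * (Real.exp (θ * X) * SU) := hstep2
      _ ≤ Real.exp (θ * X) * (θ * ((a : ℝ) - SS) + θ ^ 2 * c₁ ^ 2)
          + θ * ((N : ℝ) * smax * Real.exp (θ * (N : ℝ) * smax)
            * Real.exp (η * dvN q)) := by linarith
      _ = _ := by rw [hSSdef]
  · -- above truncation
    push_neg at hXM
    have hψ0 : psiB θ Mn q = 0 := by
      unfold psiB
      rw [← hXdef, if_neg]
      push_neg
      intro _
      exact hXM
    rw [hψ0, zero_mul, zero_add]
    have h1 : min X Mn = Mn := min_eq_right hXM.le
    have h2 : Real.exp (θ * min Xp Mn) ≤ Real.exp (θ * Mn) :=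
      Real.exp_le_exp.2 (mul_le_mul_of_nonneg_left (min_le_right _ _) hθ.le)
    have h3 : 0 ≤ θ * ((N : ℝ) * smax * Real.exp (θ * (N : ℝ) * smax)
        * Real.exp (η * dvN q)) := by positivity
    rw [h1]
    linarith
namespace JSQModel
section MainLemmas

variable {N : ℕ} {α amax smax σa2 σs2 : ℝ} {Ω : Type} [MeasurableSpace Ω]
  {μ : Measure Ω} (M : JSQModel N α amax smax σa2 σs2 Ω μ)

lemma meas_qp : Measurable fun ω =>
    (fun i => M.q ω i + (if i = M.I ω then M.a ω else 0) - M.s ω i) := by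
  apply measurable_pi_lambda
  intro i
  have hset : MeasurableSet {ω | i = M.I ω} := by
    have h := M.meas_I (MeasurableSet.singleton i)
    convert h using 1
    ext ω
    simp [eq_comm]
  exact ((M.meas_q_i i).add (Measurable.ite hset M.meas_a measurable_const)).sub
    (M.meas_s_i i)

lemma stat_integral' {F : (Fin N → ℕ) → ℝ} (hF : Measurable F) :
    ∫ ω, F (fun i => M.q ω i + (if i = M.I ω then M.a ω else 0) - M.s ω i) ∂μ
      = ∫ ω, F (M.q ω) ∂μ :=
  (M.stationary.comp hF).integral_eq

lemma meas_aR : Measurable fun ω => (M.a ω : ℝ) :=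
  measurable_from_nat.comp M.meas_a

lemma meas_sR (i : Fin N) : Measurable fun ω => (M.s ω i : ℝ) :=
  measurable_from_nat.comp (M.meas_s_i i)

lemma int_aR : Integrable (fun ω => (M.a ω : ℝ)) μ := by
  haveI : IsProbabilityMeasure μ := M.hprob
  apply integrable_of_ae_bdd (M.meas_aR).aestronglyMeasurable amax
  filter_upwards [M.a_bdd] with ω h
  rw [abs_of_nonneg (Nat.cast_nonneg _)]
  exact h

lemma int_sR (i : Fin N) : Integrable (fun ω => (M.s ω i : ℝ)) μ := by
  haveI : IsProbabilityMeasure μ := M.hprob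
  apply integrable_of_ae_bdd (M.meas_sR i).aestronglyMeasurable smax
  filter_upwards [M.s_bdd i] with ω h
  rw [abs_of_nonneg (Nat.cast_nonneg _)]
  exact h

set_option maxHeartbeats 2000000 in
lemma integrable_expY (hN : 2 ≤ N) :
    ∃ η : ℝ, 0 < η ∧ Integrable (fun ω => Real.exp (η * dvN (M.q ω))) μ := by
  classical
  haveI : IsProbabilityMeasure μ := M.hprob
  have hNne : N ≠ 0 := by omega
  have hNR : (0 : ℝ) < N := Nat.cast_pos.2 (by omega)
  have hN2 : (2 : ℝ) ≤ (N : ℝ) := by exact_mod_cast hN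
  have hamax := M.hamax
  have hsmax := M.hsmax
  have hsqN : (0 : ℝ) < Real.sqrt N := Real.sqrt_pos.2 hNR
  set κ : ℝ := Real.sqrt N * ((N : ℝ) - 1) with hκdef
  have hκ : 0 < κ := mul_pos hsqN (by linarith)
  set c₀ : ℝ := Real.sqrt N * (amax + 2 * smax) with hc₀def
  have hc₀ : 0 < c₀ := mul_pos hsqN (by linarith)
  set C₃ : ℝ := (N : ℝ) * smax ^ 2 + c₀ ^ 2 / 2 with hC₃def
  have hC₃ : 0 < C₃ := by positivity
  set Ea : ℝ := (N : ℝ) * (1 - (N : ℝ) ^ (-α)) with hEadef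
  have hEa : 0 < Ea := by
    have h1 : (N : ℝ) ^ (-α) < 1 :=
      Real.rpow_lt_one_of_one_lt_of_neg (by linarith) (neg_neg_of_pos M.hα)
    apply mul_pos hNR
    linarith
  set K : ℝ := 2 * C₃ * κ / Ea with hKdef
  have hK : 0 < K := by positivity
  have hKC : C₃ / K = Ea / (2 * κ) := by
    rw [hKdef]
    field_simp
  set η : ℝ := min (Ea / (4 * κ * c₀ ^ 2)) (1 / c₀) with hηdef
  have hη : 0 < η := lt_min (by positivity) (by positivity)
  have hηc₀ : η * c₀ ≤ 1 := by
    have h1 : η ≤ 1 / c₀ := min_le_right _ _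
    calc η * c₀ ≤ (1 / c₀) * c₀ := mul_le_mul_of_nonneg_right h1 hc₀.le
      _ = 1 := by field_simp
  have hηc₀2 : η * c₀ ^ 2 ≤ Ea / (4 * κ) := by
    have h1 : η ≤ Ea / (4 * κ * c₀ ^ 2) := min_le_left _ _
    calc η * c₀ ^ 2 ≤ (Ea / (4 * κ * c₀ ^ 2)) * c₀ ^ 2 :=
          mul_le_mul_of_nonneg_right h1 (by positivity)
      _ = Ea / (4 * κ) := by field_simp
  set Bc : ℝ := Real.exp (η * K) * (Real.exp (η * c₀) - 1) with hBcdef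
  have hBc : 0 ≤ Bc := mul_nonneg (Real.exp_pos _).le
    (by linarith [Real.one_le_exp (show (0:ℝ) ≤ η * c₀ by positivity)])
  set CA : ℝ := Bc * (4 * κ) / (η * Ea) with hCAdef
  refine ⟨η, hη, ?_⟩
  have hZmeas : Measurable fun ω => dvN (M.q ω) := measurable_dvN.comp M.meas_q
  apply integrable_exp_of_truncated_bound hZmeas hη.le (C := CA)
  intro n
  set Mn : ℝ := K + (n : ℝ) with hMndef
  have hKMn : K ≤ Mn := by
    rw [hMndef]
    simp [Nat.cast_nonneg]
  have heMn : (0:ℝ) < Real.exp (η * Mn) := Real.exp_pos _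
  -- functions
  set f0 : Ω → ℝ := fun ω => psiA η K Mn (M.q ω) with hf0def
  set fA : Ω → ℝ := fun ω => (M.a ω : ℝ) with hfAdef
  set f1 : Ω → ℝ := fun ω => f0 ω * fA ω with hf1def
  set f2 : Ω → ℝ := fun ω => ∑ i, psiAi η K Mn i (M.q ω) * ((M.s ω i : ℝ) - 1)
    with hf2def
  set f3 : Ω → ℝ := fun ω => f0 ω * (C₃ / dvN (M.q ω)) with hf3def
  set t1 : Ω → ℝ := fun ω => if dvN (M.q ω) < K then Bc else 0 with ht1def
  -- measurability and integrability
  have hf0meas : Measurable f0 := (measurable_psiA η K Mn).comp M.meas_q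
  have hf0nn : ∀ ω, 0 ≤ f0 ω := fun ω => psiA_nonneg η K Mn _
  have hf0le : ∀ ω, f0 ω ≤ Real.exp (η * Mn) := fun ω => psiA_le hη.le K Mn _
  have if0 : Integrable f0 μ := by
    apply integrable_of_ae_bdd hf0meas.aestronglyMeasurable (Real.exp (η * Mn))
    exact ae_of_all _ fun ω => by rw [abs_of_nonneg (hf0nn ω)]; exact hf0le ω
  have if1 : Integrable f1 μ := by
    apply integrable_of_ae_bdd ((hf0meas.mul M.meas_aR).aestronglyMeasurable)
      (Real.exp (η * Mn) * amax)
    filter_upwards [M.a_bdd] with ω h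
    simp only [Pi.mul_apply]
    rw [abs_mul, abs_of_nonneg (hf0nn ω), abs_of_nonneg (Nat.cast_nonneg _)]
    exact mul_le_mul (hf0le ω) h (Nat.cast_nonneg _) heMn.le
  have if2i : ∀ i : Fin N,
      Integrable (fun ω => psiAi η K Mn i (M.q ω) * ((M.s ω i : ℝ) - 1)) μ := by
    intro i
    apply integrable_of_ae_bdd
      ((((measurable_psiAi η K Mn i).comp M.meas_q).mul
        ((M.meas_sR i).sub measurable_const)).aestronglyMeasurable)
      (Real.exp (η * Mn) * (smax + 1))
    filter_upwards [M.s_bdd i] with ω h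
    simp only [Pi.mul_apply, Function.comp_apply, Pi.sub_apply]
    rw [abs_mul]
    apply mul_le_mul (abs_psiAi_le hη.le hK Mn i _) _ (abs_nonneg _) heMn.le
    rw [abs_le]
    constructor
    · have : (0:ℝ) ≤ (M.s ω i : ℝ) := Nat.cast_nonneg _
      linarith
    · linarith
  have if2 : Integrable f2 μ := by
    rw [hf2def]
    apply integrable_finset_sum
    intro i _
    exact if2i i
  have hf3nn : ∀ ω, 0 ≤ f3 ω := fun ω =>
    mul_nonneg (hf0nn ω) (div_nonneg hC₃.le (dvN_nonneg _))
  have hf3le : ∀ ω, f3 ω ≤ (C₃ / K) * f0 ω := by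
    intro ω
    rw [hf3def, hf0def]
    simp only
    by_cases h : K ≤ dvN (M.q ω) ∧ dvN (M.q ω) ≤ Mn
    · have hdv : 0 < dvN (M.q ω) := lt_of_lt_of_le hK h.1
      have h1 : C₃ / dvN (M.q ω) ≤ C₃ / K := div_le_div_of_nonneg_left hC₃.le hK h.1
      calc psiA η K Mn (M.q ω) * (C₃ / dvN (M.q ω))
          ≤ psiA η K Mn (M.q ω) * (C₃ / K) :=
            mul_le_mul_of_nonneg_left h1 (psiA_nonneg _ _ _ _)
        _ = (C₃ / K) * psiA η K Mn (M.q ω) := by ring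
    · have h0 : psiA η K Mn (M.q ω) = 0 := by unfold psiA; rw [if_neg h]
      rw [h0, zero_mul, mul_zero]
  have hf3meas : Measurable f3 :=
    hf0meas.mul (measurable_const.div (measurable_dvN.comp M.meas_q))
  have if3 : Integrable f3 μ := by
    apply integrable_of_ae_bdd hf3meas.aestronglyMeasurable
      (Real.exp (η * Mn) * (C₃ / K))
    apply ae_of_all
    intro ω
    rw [abs_of_nonneg (hf3nn ω)]
    calc f3 ω ≤ (C₃ / K) * f0 ω := hf3le ω
      _ ≤ (C₃ / K) * Real.exp (η * Mn) :=
          mul_le_mul_of_nonneg_left (hf0le ω) (by positivity)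
      _ = Real.exp (η * Mn) * (C₃ / K) := by ring
  have ht1meas : Measurable t1 :=
    Measurable.ite (measurableSet_lt (measurable_dvN.comp M.meas_q)
      measurable_const) measurable_const measurable_const
  have it1 : Integrable t1 μ := by
    apply integrable_of_ae_bdd ht1meas.aestronglyMeasurable Bc
    apply ae_of_all
    intro ω
    rw [ht1def]
    simp only
    split
    · rw [abs_of_nonneg hBc]
    · rw [abs_zero]; exact hBc
  -- the test function applied before and after one step
  set Gf : (Fin N → ℕ) → ℝ := fun v => Real.exp (η * min (dvN v) Mn) with hGfdef
  have hGfmeas : Measurable Gf :=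
    Real.measurable_exp.comp ((measurable_dvN.min measurable_const).const_mul η)
  have hGfle : ∀ v : Fin N → ℕ, Gf v ≤ Real.exp (η * Mn) := fun v =>
    Real.exp_le_exp.2 (mul_le_mul_of_nonneg_left (min_le_right _ _) hη.le)
  set Gq : Ω → ℝ := fun ω => Gf (M.q ω) with hGqdef
  set Gqp : Ω → ℝ := fun ω =>
    Gf (fun i => M.q ω i + (if i = M.I ω then M.a ω else 0) - M.s ω i) with hGqpdef
  have hGf0 : ∀ v : Fin N → ℕ, 0 ≤ Gf v := fun v => (Real.exp_pos _).le
  have iGq : Integrable Gq μ := by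
    apply integrable_of_ae_bdd (hGfmeas.comp M.meas_q).aestronglyMeasurable
      (Real.exp (η * Mn))
    apply ae_of_all
    intro ω
    simp only [Function.comp_apply]
    rw [abs_of_nonneg (hGf0 _)]
    exact hGfle _
  have iGqp : Integrable Gqp μ := by
    apply integrable_of_ae_bdd (hGfmeas.comp M.meas_qp).aestronglyMeasurable
      (Real.exp (η * Mn))
    apply ae_of_all
    intro ω
    simp only [Function.comp_apply]
    rw [abs_of_nonneg (hGf0 _)]
    exact hGfle _
  have hstat : ∫ ω, Gqp ω ∂μ = ∫ ω, Gq ω ∂μ := M.stat_integral' hGfmeas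
  have hdiff0 : ∫ ω, (Gqp ω - Gq ω) ∂μ = 0 := by
    rw [integral_sub iGqp iGq, hstat, sub_self]
  -- the dominating function
  set c1f : Ω → ℝ := fun ω => -(η / κ) * f1 ω with hc1fdef
  set c2f : Ω → ℝ := fun ω => η * f2 ω with hc2fdef
  set c3f : Ω → ℝ := fun ω => η * f3 ω with hc3fdef
  set c0f : Ω → ℝ := fun ω => η ^ 2 * c₀ ^ 2 * f0 ω with hc0fdef
  set d12 : Ω → ℝ := fun ω => c1f ω - c2f ω with hd12def
  set d123 : Ω → ℝ := fun ω => d12 ω + c3f ω with hd123def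
  set comb : Ω → ℝ := fun ω => d123 ω + c0f ω with hcombdef
  set T : Ω → ℝ := fun ω => t1 ω + comb ω with hTdef
  have ic1 : Integrable c1f μ := if1.const_mul _
  have ic2 : Integrable c2f μ := if2.const_mul _
  have ic3 : Integrable c3f μ := if3.const_mul _
  have ic0 : Integrable c0f μ := if0.const_mul _
  have id12 : Integrable d12 μ := ic1.sub ic2
  have id123 : Integrable d123 μ := id12.add ic3
  have icomb : Integrable comb μ := id123.add ic0
  have iT : Integrable T μ := it1.add icomb
  -- the pointwise drift inequality, a.e.
  have hae : ∀ᵐ ω ∂μ, Gqp ω - Gq ω ≤ T ω := by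
    filter_upwards [M.I_min, M.a_bdd, ae_all_iff.2 M.s_bdd] with ω h1 h2 h3
    have hmin : ∀ j, M.q ω (M.I ω) ≤ M.q ω j := by
      intro j
      rw [h1]
      exact ciInf_le (OrderBot.bddBelow _) j
    have hmaster := stepA_pointwise hN hamax hsmax hκdef hc₀def hC₃def hK hKMn hη
      hηc₀ (M.q ω) (M.s ω) (M.a ω) (M.I ω) hmin h2 h3
    -- identify the right-hand side with T ω
    have hdec : psiA η K Mn (M.q ω) *
        (η * (-(M.a ω : ℝ) / κ
          - (∑ i, ((M.q ω i : ℝ) - avN (M.q ω)) * ((M.s ω i : ℝ) - 1)) / dvN (M.q ω)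
          + C₃ / dvN (M.q ω)) + η ^ 2 * c₀ ^ 2)
        = -(η / κ) * f1 ω - η * f2 ω + η * f3 ω + η ^ 2 * c₀ ^ 2 * f0 ω := by
      have hsum2 : f2 ω = psiA η K Mn (M.q ω) *
          ((∑ i, ((M.q ω i : ℝ) - avN (M.q ω)) * ((M.s ω i : ℝ) - 1))
            / dvN (M.q ω)) := by
        rw [hf2def]
        simp only
        have hterm : ∀ i : Fin N, psiAi η K Mn i (M.q ω) * ((M.s ω i : ℝ) - 1)
            = (psiA η K Mn (M.q ω) * (dvN (M.q ω))⁻¹)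
              * (((M.q ω i : ℝ) - avN (M.q ω)) * ((M.s ω i : ℝ) - 1)) := by
          intro i
          unfold psiAi
          ring
        rw [Finset.sum_congr rfl fun i _ => hterm i, ← Finset.mul_sum]
        ring
      rw [hsum2, hf3def, hf1def, hf0def, hfAdef]
      simp only
      ring
    calc Gqp ω - Gq ω
        ≤ t1 ω + psiA η K Mn (M.q ω) *
          (η * (-(M.a ω : ℝ) / κ
            - (∑ i, ((M.q ω i : ℝ) - avN (M.q ω)) * ((M.s ω i : ℝ) - 1))
              / dvN (M.q ω)
            + C₃ / dvN (M.q ω)) + η ^ 2 * c₀ ^ 2) := hmaster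
      _ = T ω := by
          rw [hTdef]
          simp only [hcombdef, hd123def, hd12def, hc1fdef, hc2fdef, hc3fdef, hc0fdef]
          rw [hdec]
  -- integrate
  have hTnn : (0:ℝ) ≤ ∫ ω, T ω ∂μ := by
    rw [← hdiff0]
    exact integral_mono_ae (iGqp.sub iGq) iT hae
  -- compute / bound each piece
  set J : ℝ := ∫ ω, f0 ω ∂μ with hJdef
  have hJnn : 0 ≤ J := integral_nonneg hf0nn
  have hT1 : ∫ ω, t1 ω ∂μ ≤ Bc := by
    have h1 : ∀ ω, t1 ω ≤ Bc := by
      intro ω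
      rw [ht1def]
      simp only
      split
      · exact le_rfl
      · exact hBc
    calc ∫ ω, t1 ω ∂μ ≤ ∫ _ω, Bc ∂μ := integral_mono it1 (integrable_const Bc) h1
      _ = Bc := by simp [measure_univ]
  have hJ1 : ∫ ω, f1 ω ∂μ = Ea * J := by
    have hind : IndepFun f0 fA μ := by
      have h := M.indep_as_qI.comp (_mγ := Real.measurableSpace)
        (φ := fun p : ℕ × (Fin N → ℕ) => ((p.1 : ℕ) : ℝ))
        (ψ := fun p : (Fin N → ℕ) × Fin N => psiA η K Mn p.1)
        (measurable_from_nat.comp measurable_fst)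
        ((measurable_psiA η K Mn).comp measurable_fst)
      exact h.symm
    have h2 := hind.integral_mul_eq_mul_integral if0.aestronglyMeasurable M.int_aR.aestronglyMeasurable
    have h3 : ∫ ω, fA ω ∂μ = Ea := M.a_mean
    calc ∫ ω, f1 ω ∂μ = ∫ ω, (f0 * fA) ω ∂μ := by rfl
      _ = (∫ ω, f0 ω ∂μ) * ∫ ω, fA ω ∂μ := h2
      _ = Ea * J := by rw [h3, hJdef]; ring
  have hJ2 : ∫ ω, f2 ω ∂μ = 0 := by
    rw [hf2def]
    rw [integral_finset_sum _ fun i _ => if2i i]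
    apply Finset.sum_eq_zero
    intro i _
    have hind : IndepFun (fun ω => psiAi η K Mn i (M.q ω))
        (fun ω => (M.s ω i : ℝ) - 1) μ := by
      have h := M.indep_as_qI.comp (_mγ := Real.measurableSpace)
        (φ := fun p : ℕ × (Fin N → ℕ) => ((p.2 i : ℕ) : ℝ) - 1)
        (ψ := fun p : (Fin N → ℕ) × Fin N => psiAi η K Mn i p.1)
        ((measurable_from_nat.comp ((measurable_pi_apply i).comp measurable_snd)).sub
          measurable_const)
        ((measurable_psiAi η K Mn i).comp measurable_fst)
      exact h.symm
    have hS0 : ∫ ω, ((M.s ω i : ℝ) - 1) ∂μ = 0 := by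
      rw [integral_sub (M.int_sR i) (integrable_const 1), M.s_mean i]
      simp [measure_univ]
    have iS1 : Integrable (fun ω => (M.s ω i : ℝ) - 1) μ :=
      (M.int_sR i).sub (integrable_const 1)
    have iψ : Integrable (fun ω => psiAi η K Mn i (M.q ω)) μ := by
      apply integrable_of_ae_bdd
        (((measurable_psiAi η K Mn i).comp M.meas_q).aestronglyMeasurable)
        (Real.exp (η * Mn))
      exact ae_of_all _ fun ω => abs_psiAi_le hη.le hK Mn i _
    have h2 := hind.integral_mul_eq_mul_integral iψ.aestronglyMeasurable iS1.aestronglyMeasurable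
    calc ∫ ω, psiAi η K Mn i (M.q ω) * ((M.s ω i : ℝ) - 1) ∂μ
        = (∫ ω, psiAi η K Mn i (M.q ω) ∂μ) * ∫ ω, ((M.s ω i : ℝ) - 1) ∂μ := h2
      _ = 0 := by rw [hS0, mul_zero]
  have hJ3 : ∫ ω, f3 ω ∂μ ≤ (C₃ / K) * J := by
    calc ∫ ω, f3 ω ∂μ ≤ ∫ ω, (C₃ / K) * f0 ω ∂μ :=
          integral_mono if3 (if0.const_mul _) hf3le
      _ = (C₃ / K) * J := by rw [integral_const_mul, hJdef]
  -- assemble the integral inequality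
  have hI1 : ∫ ω, c1f ω ∂μ = -(η / κ) * ∫ ω, f1 ω ∂μ := integral_const_mul _ _
  have hI2 : ∫ ω, c2f ω ∂μ = η * ∫ ω, f2 ω ∂μ := integral_const_mul _ _
  have hI3 : ∫ ω, c3f ω ∂μ = η * ∫ ω, f3 ω ∂μ := integral_const_mul _ _
  have hI0 : ∫ ω, c0f ω ∂μ = η ^ 2 * c₀ ^ 2 * J := integral_const_mul _ _
  have hTsplit : ∫ ω, T ω ∂μ = (∫ ω, t1 ω ∂μ) +
      (-(η / κ) * (∫ ω, f1 ω ∂μ) - η * (∫ ω, f2 ω ∂μ)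
        + η * (∫ ω, f3 ω ∂μ) + η ^ 2 * c₀ ^ 2 * J) := by
    have e1 : ∫ ω, T ω ∂μ = (∫ ω, t1 ω ∂μ) + ∫ ω, comb ω ∂μ := integral_add it1 icomb
    have e2 : ∫ ω, comb ω ∂μ = (∫ ω, d123 ω ∂μ) + ∫ ω, c0f ω ∂μ :=
      integral_add id123 ic0
    have e3 : ∫ ω, d123 ω ∂μ = (∫ ω, d12 ω ∂μ) + ∫ ω, c3f ω ∂μ :=
      integral_add id12 ic3
    have e4 : ∫ ω, d12 ω ∂μ = (∫ ω, c1f ω ∂μ) - ∫ ω, c2f ω ∂μ :=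
      integral_sub ic1 ic2
    rw [e1, e2, e3, e4, hI1, hI2, hI3, hI0]
  have hfinal : 0 ≤ Bc + (-(η / κ) * (Ea * J) + η * ((C₃ / K) * J)
      + η ^ 2 * c₀ ^ 2 * J) := by
    have h5 : ∫ ω, T ω ∂μ ≤ Bc + (-(η / κ) * (Ea * J) + η * ((C₃ / K) * J)
        + η ^ 2 * c₀ ^ 2 * J) := by
      rw [hTsplit, hJ1, hJ2]
      have h6 : η * (∫ ω, f3 ω ∂μ) ≤ η * ((C₃ / K) * J) :=
        mul_le_mul_of_nonneg_left hJ3 hη.le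
      linarith [hT1]
    linarith [hTnn]
  -- conclude J ≤ CA
  have hcoef : -(η / κ) * Ea + η * (C₃ / K) + η ^ 2 * c₀ ^ 2
      ≤ -(η * Ea / (4 * κ)) := by
    rw [hKC]
    have h7 : η ^ 2 * c₀ ^ 2 ≤ η * (Ea / (4 * κ)) := by
      have := mul_le_mul_of_nonneg_left hηc₀2 hη.le
      calc η ^ 2 * c₀ ^ 2 = η * (η * c₀ ^ 2) := by ring
        _ ≤ η * (Ea / (4 * κ)) := this
    have h8 : -(η / κ) * Ea + η * (Ea / (2 * κ)) = -(η * Ea / (2 * κ)) := by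
      field_simp
      ring
    have h9 : -(η * Ea / (2 * κ)) + η * (Ea / (4 * κ)) = -(η * Ea / (4 * κ)) := by
      field_simp
      ring
    linarith
  have hJCA : J ≤ CA := by
    have h10 : -(η / κ) * (Ea * J) + η * ((C₃ / K) * J) + η ^ 2 * c₀ ^ 2 * J
        = (-(η / κ) * Ea + η * (C₃ / K) + η ^ 2 * c₀ ^ 2) * J := by ring
    have h11 : (-(η / κ) * Ea + η * (C₃ / K) + η ^ 2 * c₀ ^ 2) * J
        ≤ -(η * Ea / (4 * κ)) * J := mul_le_mul_of_nonneg_right hcoef hJnn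
    have h12 : (η * Ea / (4 * κ)) * J ≤ Bc := by
      rw [h10] at hfinal
      linarith
    have hcpos : 0 < η * Ea / (4 * κ) := by positivity
    have h13 : (η * Ea / (4 * κ)) * CA = Bc := by
      rw [hCAdef]
      field_simp
    have h14 : (η * Ea / (4 * κ)) * J ≤ (η * Ea / (4 * κ)) * CA := by
      rw [h13]; exact h12
    exact le_of_mul_le_mul_left h14 hcpos
  -- finish: the integrand is exactly f0
  calc ∫ ω, (if K ≤ dvN (M.q ω) ∧ dvN (M.q ω) ≤ K + (n:ℝ)
        then Real.exp (η * min (dvN (M.q ω)) (K + (n:ℝ))) else 0) ∂μ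
      = J := by rw [hJdef]; rfl
    _ ≤ CA := hJCA


set_option maxHeartbeats 2000000 in
lemma integrable_expX (hN : 2 ≤ N) :
    ∃ θ : ℝ, 0 < θ ∧ Integrable (fun ω => Real.exp (θ * svN (M.q ω))) μ := by
  classical
  haveI : IsProbabilityMeasure μ := M.hprob
  obtain ⟨η, hη, hYint⟩ := M.integrable_expY hN
  have hNne : N ≠ 0 := by omega
  have hNR : (0 : ℝ) < N := Nat.cast_pos.2 (by omega)
  have hamax := M.hamax
  have hsmax := M.hsmax
  set c₁ : ℝ := amax + 2 * N * smax with hc₁def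
  have hc₁ : 0 < c₁ := by positivity
  set d₂ : ℝ := (N : ℝ) * (N : ℝ) ^ (-α) with hd₂def
  have hd₂ : 0 < d₂ := mul_pos hNR (Real.rpow_pos_of_pos hNR _)
  set Ea : ℝ := (N : ℝ) * (1 - (N : ℝ) ^ (-α)) with hEadef
  have hEaN : Ea - N = -d₂ := by rw [hEadef, hd₂def]; ring
  set θ : ℝ := min (min (d₂ / (2 * c₁ ^ 2)) (1 / c₁)) (η / N) with hθdef
  have hθ : 0 < θ := lt_min (lt_min (by positivity) (by positivity)) (by positivity)
  have hθc₁ : θ * c₁ ≤ 1 := by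
    have h1 : θ ≤ 1 / c₁ := le_trans (min_le_left _ _) (min_le_right _ _)
    calc θ * c₁ ≤ (1 / c₁) * c₁ := mul_le_mul_of_nonneg_right h1 hc₁.le
      _ = 1 := by field_simp
  have hθc₁2 : θ * c₁ ^ 2 ≤ d₂ / 2 := by
    have h1 : θ ≤ d₂ / (2 * c₁ ^ 2) := le_trans (min_le_left _ _) (min_le_left _ _)
    calc θ * c₁ ^ 2 ≤ (d₂ / (2 * c₁ ^ 2)) * c₁ ^ 2 :=
          mul_le_mul_of_nonneg_right h1 (by positivity)
      _ = d₂ / 2 := by field_simp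
  have hθN : θ * N ≤ η := by
    have h1 : θ ≤ η / N := min_le_right _ _
    calc θ * N ≤ (η / N) * N := mul_le_mul_of_nonneg_right h1 hNR.le
      _ = η := by field_simp
  set W : Ω → ℝ := fun ω => Real.exp (η * dvN (M.q ω)) with hWdef
  have iW : Integrable W μ := hYint
  set CY : ℝ := ∫ ω, W ω ∂μ with hCYdef
  have hCY : 0 ≤ CY := integral_nonneg fun ω => (Real.exp_pos _).le
  set C₅ : ℝ := (N : ℝ) * smax * Real.exp (θ * (N : ℝ) * smax) with hC₅def
  have hC₅ : 0 < C₅ := by positivity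
  set CB : ℝ := 2 * C₅ * CY / d₂ with hCBdef
  refine ⟨θ, hθ, ?_⟩
  have hZmeas : Measurable fun ω => svN (M.q ω) := measurable_svN.comp M.meas_q
  apply integrable_exp_of_truncated_bound hZmeas hθ.le (K := 0) (C := CB)
  intro n
  set Mn : ℝ := 0 + (n : ℝ) with hMndef
  -- test functions
  set Gf : (Fin N → ℕ) → ℝ := fun v => Real.exp (θ * min (svN v) Mn) with hGfdef
  have hGfmeas : Measurable Gf :=
    Real.measurable_exp.comp ((measurable_svN.min measurable_const).const_mul θ)
  have hGfle : ∀ v : Fin N → ℕ, Gf v ≤ Real.exp (θ * Mn) := fun v =>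
    Real.exp_le_exp.2 (mul_le_mul_of_nonneg_left (min_le_right _ _) hθ.le)
  have hGf0 : ∀ v : Fin N → ℕ, 0 ≤ Gf v := fun v => (Real.exp_pos _).le
  set Gq : Ω → ℝ := fun ω => Gf (M.q ω) with hGqdef
  set Gqp : Ω → ℝ := fun ω =>
    Gf (fun i => M.q ω i + (if i = M.I ω then M.a ω else 0) - M.s ω i) with hGqpdef
  have iGq : Integrable Gq μ := by
    apply integrable_of_ae_bdd (hGfmeas.comp M.meas_q).aestronglyMeasurable
      (Real.exp (θ * Mn))
    apply ae_of_all
    intro ω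
    simp only [Function.comp_apply]
    rw [abs_of_nonneg (hGf0 _)]
    exact hGfle _
  have iGqp : Integrable Gqp μ := by
    apply integrable_of_ae_bdd (hGfmeas.comp M.meas_qp).aestronglyMeasurable
      (Real.exp (θ * Mn))
    apply ae_of_all
    intro ω
    simp only [Function.comp_apply]
    rw [abs_of_nonneg (hGf0 _)]
    exact hGfle _
  have hstat : ∫ ω, Gqp ω ∂μ = ∫ ω, Gq ω ∂μ := M.stat_integral' hGfmeas
  have hdiff0 : ∫ ω, (Gqp ω - Gq ω) ∂μ = 0 := by
    rw [integral_sub iGqp iGq, hstat, sub_self]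
  -- pieces
  set g0 : Ω → ℝ := fun ω => psiB θ Mn (M.q ω) with hg0def
  set gAS : Ω → ℝ := fun ω => (M.a ω : ℝ) - ∑ i, (M.s ω i : ℝ) with hgASdef
  have hg0meas : Measurable g0 := (measurable_psiB θ Mn).comp M.meas_q
  have hg0nn : ∀ ω, 0 ≤ g0 ω := fun ω => psiB_nonneg θ Mn _
  have hg0le : ∀ ω, g0 ω ≤ Real.exp (θ * Mn) := fun ω => psiB_le hθ.le Mn _
  have ig0 : Integrable g0 μ := by
    apply integrable_of_ae_bdd hg0meas.aestronglyMeasurable (Real.exp (θ * Mn))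
    exact ae_of_all _ fun ω => by rw [abs_of_nonneg (hg0nn ω)]; exact hg0le ω
  have hgASmeas : Measurable gAS :=
    M.meas_aR.sub (Finset.measurable_sum _ fun i _ => M.meas_sR i)
  have hgASbdd : ∀ᵐ ω ∂μ, |gAS ω| ≤ amax + N * smax := by
    filter_upwards [M.a_bdd, ae_all_iff.2 M.s_bdd] with ω h2 h3
    have hs0 : (0:ℝ) ≤ ∑ i, (M.s ω i : ℝ) :=
      Finset.sum_nonneg fun i _ => Nat.cast_nonneg _
    have hsb : (∑ i, (M.s ω i : ℝ)) ≤ N * smax := by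
      calc (∑ i, (M.s ω i : ℝ)) ≤ ∑ _i : Fin N, smax :=
            Finset.sum_le_sum fun i _ => h3 i
        _ = N * smax := by
            rw [Finset.sum_const, Finset.card_univ, Fintype.card_fin, nsmul_eq_mul]
    rw [hgASdef]
    simp only
    rw [abs_le]
    constructor
    · linarith [(Nat.cast_nonneg (M.a ω) : (0:ℝ) ≤ (M.a ω : ℝ))]
    · linarith [(Nat.cast_nonneg (M.a ω) : (0:ℝ) ≤ (M.a ω : ℝ))]
  have igAS : Integrable gAS μ :=
    integrable_of_ae_bdd hgASmeas.aestronglyMeasurable _ hgASbdd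
  set u1 : Ω → ℝ := fun ω => θ * (g0 ω * gAS ω) with hu1def
  set u2 : Ω → ℝ := fun ω => θ ^ 2 * c₁ ^ 2 * g0 ω with hu2def
  set u3 : Ω → ℝ := fun ω => θ * (C₅ * W ω) with hu3def
  have ig0AS : Integrable (fun ω => g0 ω * gAS ω) μ := by
    apply integrable_of_ae_bdd ((hg0meas.mul hgASmeas).aestronglyMeasurable)
      (Real.exp (θ * Mn) * (amax + N * smax))
    filter_upwards [hgASbdd] with ω h
    simp only [Pi.mul_apply]
    rw [abs_mul, abs_of_nonneg (hg0nn ω)]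
    exact mul_le_mul (hg0le ω) h (abs_nonneg _) (Real.exp_pos _).le
  have iu1 : Integrable u1 μ := ig0AS.const_mul _
  have iu2 : Integrable u2 μ := ig0.const_mul _
  have iu3 : Integrable u3 μ := (iW.const_mul _).const_mul _
  set T : Ω → ℝ := fun ω => u1 ω + u2 ω + u3 ω with hTdef
  have iT : Integrable T μ := (iu1.add iu2).add iu3
  have hae : ∀ᵐ ω ∂μ, Gqp ω - Gq ω ≤ T ω := by
    filter_upwards [M.a_bdd, ae_all_iff.2 M.s_bdd] with ω h2 h3
    have hmaster := stepB_pointwise (Mn := Mn) hN hamax hsmax hc₁def hθ hθc₁ hη hθN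
      (M.q ω) (M.s ω) (M.a ω) (M.I ω) h2 h3
    calc Gqp ω - Gq ω
        ≤ psiB θ Mn (M.q ω) * (θ * ((M.a ω : ℝ) - ∑ i, (M.s ω i : ℝ))
            + θ ^ 2 * c₁ ^ 2)
          + θ * ((N : ℝ) * smax * Real.exp (θ * (N : ℝ) * smax)
            * Real.exp (η * dvN (M.q ω))) := hmaster
      _ = T ω := by
          rw [hTdef]
          simp only [hu1def, hu2def, hu3def, hC₅def, hg0def, hgASdef, hWdef]
          ring
  have hTnn : (0:ℝ) ≤ ∫ ω, T ω ∂μ := by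
    rw [← hdiff0]
    exact integral_mono_ae (iGqp.sub iGq) iT hae
  set J : ℝ := ∫ ω, g0 ω ∂μ with hJdef
  have hJnn : 0 ≤ J := integral_nonneg hg0nn
  have hgASint : ∫ ω, gAS ω ∂μ = Ea - N := by
    rw [hgASdef]
    simp only
    rw [integral_sub M.int_aR (integrable_finset_sum _ fun i _ => M.int_sR i),
      M.a_mean, integral_finset_sum _ fun i _ => M.int_sR i]
    have : ∀ i : Fin N, (∫ ω, (M.s ω i : ℝ) ∂μ) = 1 := M.s_mean
    rw [Finset.sum_congr rfl fun i _ => this i, Finset.sum_const,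
      Finset.card_univ, Fintype.card_fin, nsmul_eq_mul, mul_one, hEadef]
  have hu1int : ∫ ω, u1 ω ∂μ = θ * (J * (Ea - N)) := by
    have hind : IndepFun g0 gAS μ := by
      have h := M.indep_as_qI.comp (_mγ := Real.measurableSpace)
        (φ := fun p : ℕ × (Fin N → ℕ) => ((p.1 : ℕ) : ℝ) - ∑ i, ((p.2 i : ℕ) : ℝ))
        (ψ := fun p : (Fin N → ℕ) × Fin N => psiB θ Mn p.1)
        ((measurable_from_nat.comp measurable_fst).sub
          (Finset.measurable_sum _ fun i _ =>
            measurable_from_nat.comp ((measurable_pi_apply i).comp measurable_snd)))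
        ((measurable_psiB θ Mn).comp measurable_fst)
      exact h.symm
    have h2 := hind.integral_mul_eq_mul_integral ig0.aestronglyMeasurable igAS.aestronglyMeasurable
    calc ∫ ω, u1 ω ∂μ = θ * ∫ ω, g0 ω * gAS ω ∂μ := integral_const_mul _ _
      _ = θ * ((∫ ω, g0 ω ∂μ) * ∫ ω, gAS ω ∂μ) := by rw [← h2]; rfl
      _ = θ * (J * (Ea - N)) := by rw [hgASint, hJdef]
  have hu2int : ∫ ω, u2 ω ∂μ = θ ^ 2 * c₁ ^ 2 * J := integral_const_mul _ _
  have hu3int : ∫ ω, u3 ω ∂μ = θ * (C₅ * CY) := by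
    calc ∫ ω, u3 ω ∂μ = θ * ∫ ω, C₅ * W ω ∂μ := integral_const_mul _ _
      _ = θ * (C₅ * ∫ ω, W ω ∂μ) := by rw [integral_const_mul]
      _ = θ * (C₅ * CY) := by rw [hCYdef]
  have hTsplit : ∫ ω, T ω ∂μ
      = θ * (J * (Ea - N)) + θ ^ 2 * c₁ ^ 2 * J + θ * (C₅ * CY) := by
    have e1 : ∫ ω, T ω ∂μ = (∫ ω, (u1 ω + u2 ω) ∂μ) + ∫ ω, u3 ω ∂μ :=
      integral_add (iu1.add iu2) iu3
    have e2 : ∫ ω, (u1 ω + u2 ω) ∂μ = (∫ ω, u1 ω ∂μ) + ∫ ω, u2 ω ∂μ :=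
      integral_add iu1 iu2
    rw [e1, e2, hu1int, hu2int, hu3int]
  have hfinal : 0 ≤ -(θ * d₂ / 2) * J + θ * (C₅ * CY) := by
    have h5 : θ * (J * (Ea - N)) + θ ^ 2 * c₁ ^ 2 * J ≤ -(θ * d₂ / 2) * J := by
      rw [hEaN]
      have h6 : θ ^ 2 * c₁ ^ 2 ≤ θ * (d₂ / 2) := by
        have := mul_le_mul_of_nonneg_left hθc₁2 hθ.le
        calc θ ^ 2 * c₁ ^ 2 = θ * (θ * c₁ ^ 2) := by ring
          _ ≤ θ * (d₂ / 2) := this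
      have h7 := mul_le_mul_of_nonneg_right h6 hJnn
      calc θ * (J * -d₂) + θ ^ 2 * c₁ ^ 2 * J
          ≤ θ * (J * -d₂) + θ * (d₂ / 2) * J := by linarith
        _ = -(θ * d₂ / 2) * J := by ring
    rw [hTsplit] at hTnn
    have h20 : θ * (J * (Ea - ↑N)) + θ ^ 2 * c₁ ^ 2 * J + θ * (C₅ * CY)
        ≤ -(θ * d₂ / 2) * J + θ * (C₅ * CY) := add_le_add_left h5 _
    exact le_trans hTnn h20
  have hJCB : J ≤ CB := by
    have hcpos : 0 < θ * d₂ / 2 := by positivity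
    have h13 : (θ * d₂ / 2) * CB = θ * (C₅ * CY) := by
      rw [hCBdef]
      field_simp
    have h14 : (θ * d₂ / 2) * J ≤ (θ * d₂ / 2) * CB := by
      rw [h13]
      linarith
    exact le_of_mul_le_mul_left h14 hcpos
  calc ∫ ω, (if 0 ≤ svN (M.q ω) ∧ svN (M.q ω) ≤ 0 + (n:ℝ)
        then Real.exp (θ * min (svN (M.q ω)) (0 + (n:ℝ))) else 0) ∂μ
      = J := by rw [hJdef]; rfl
    _ ≤ CB := hJCB

end MainLemmas
end JSQModel
/-- There exists `Θ > 0` such that for every `θ ∈ [−Θ, Θ]`, the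
moment generating function `E[exp(θ·N^(−α)·Σᵢ q̄ᵢ)]` is finite. -/
theorem mgf_exists
    (N : ℕ) (hN : 2 ≤ N) (α amax smax σa2 σs2 : ℝ)
    {Ω : Type} [MeasurableSpace Ω] {μ : Measure Ω}
    (M : JSQModel N α amax smax σa2 σs2 Ω μ) :
    ∃ Θ : ℝ, 0 < Θ ∧ ∀ θ ∈ Set.Icc (-Θ) Θ,
      Integrable
        (fun ω => Real.exp (θ * (N : ℝ) ^ (-α) * ∑ i, (M.q ω i : ℝ))) μ := by
  classical
  haveI : IsProbabilityMeasure μ := M.hprob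
  obtain ⟨θ, hθ, hXint⟩ := M.integrable_expX hN
  have hNR : (0 : ℝ) < N := Nat.cast_pos.2 (by omega)
  have hNa : (0 : ℝ) < (N : ℝ) ^ α := Real.rpow_pos_of_pos hNR α
  have hNna : (0 : ℝ) < (N : ℝ) ^ (-α) := Real.rpow_pos_of_pos hNR _
  have hid : (N : ℝ) ^ α * (N : ℝ) ^ (-α) = 1 := by
    rw [← Real.rpow_add hNR, add_neg_cancel, Real.rpow_zero]
  refine ⟨θ * (N : ℝ) ^ α, mul_pos hθ hNa, ?_⟩
  intro θ' hθ'
  obtain ⟨h1, h2⟩ := hθ'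
  apply Integrable.mono' ((integrable_const (1:ℝ)).add hXint)
  · exact (Real.measurable_exp.comp
      ((measurable_svN.comp M.meas_q).const_mul (θ' * (N : ℝ) ^ (-α)))).aestronglyMeasurable
  · apply ae_of_all
    intro ω
    have hX0 : 0 ≤ svN (M.q ω) := svN_nonneg _
    have hXeq : (∑ i, (M.q ω i : ℝ)) = svN (M.q ω) := rfl
    rw [Real.norm_eq_abs, abs_of_nonneg (Real.exp_pos _).le]
    simp only [Pi.add_apply]
    have hep := (Real.exp_pos (θ * svN (M.q ω))).le
    by_cases hsign : 0 ≤ θ'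
    · have h3 : θ' * (N : ℝ) ^ (-α) ≤ θ := by
        calc θ' * (N : ℝ) ^ (-α) ≤ (θ * (N : ℝ) ^ α) * (N : ℝ) ^ (-α) :=
              mul_le_mul_of_nonneg_right h2 hNna.le
          _ = θ * ((N : ℝ) ^ α * (N : ℝ) ^ (-α)) := by ring
          _ = θ := by rw [hid, mul_one]
      have h4 : θ' * (N : ℝ) ^ (-α) * (∑ i, (M.q ω i : ℝ)) ≤ θ * svN (M.q ω) := by
        rw [hXeq]
        exact mul_le_mul_of_nonneg_right h3 hX0
      have h5 := Real.exp_le_exp.2 h4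
      linarith [h5]
    · push_neg at hsign
      have h4 : θ' * (N : ℝ) ^ (-α) * (∑ i, (M.q ω i : ℝ)) ≤ 0 := by
        apply mul_nonpos_iff.mpr
        apply Or.inr
        constructor
        · exact mul_nonpos_iff.mpr (Or.inr ⟨hsign.le, hNna.le⟩)
        · rw [hXeq]; exact hX0
      have h6 : Real.exp (θ' * (N : ℝ) ^ (-α) * ∑ i, (M.q ω i : ℝ)) ≤ 1 :=
        Real.exp_le_one_iff.mpr h4
      linarith [h6, hep]
end

section
/- For every real δ with 0 < δ ≤ 1 − N^(−α), the one-step drift of the squared Euclidean norm satisfies E[‖q⁺‖²] − ‖q‖² ≤ N·(max{amax, smax})² − 2·N^(−α)·Σ_{i=1}^N q_i − 2·δ·‖q_⊥‖. -/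
open MeasureTheory ProbabilityTheory

/-- One-step JSQ drift bound for the squared Euclidean norm:
for every `δ` with `0 < δ ≤ 1 − N^(−α)`,
`E[‖q⁺‖²] − ‖q‖² ≤ N·(max{amax,smax})² − 2·N^(−α)·Σᵢ qᵢ − 2·δ·‖q⊥‖`. -/
theorem drift_squared_norm_bound
    (N : ℕ) (hN : 2 ≤ N) (α amax smax : ℝ)
    (hα : 0 < α) (hamax : 0 < amax) (hsmax : 0 < smax)
    (q : Fin N → ℝ) (hq : ∀ i, 0 ≤ q i)
    {Ω : Type} [MeasurableSpace Ω] (μ : Measure Ω) [IsProbabilityMeasure μ]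
    (a : Ω → ℝ) (ha_meas : Measurable a)
    (ha_bdd : ∀ᵐ ω ∂μ, 0 ≤ a ω ∧ a ω ≤ amax)
    (ha_mean : ∫ ω, a ω ∂μ = N * (1 - (N : ℝ) ^ (-α)))
    (s : Ω → Fin N → ℝ) (hs_meas : Measurable s)
    (hs_bdd : ∀ i, ∀ᵐ ω ∂μ, 0 ≤ s ω i ∧ s ω i ≤ smax)
    (hs_mean : ∀ i, ∫ ω, s ω i ∂μ = 1)
    (I : Ω → Fin N) (hI_meas : Measurable I)
    (hI_min : ∀ᵐ ω ∂μ, q (I ω) = ⨅ j, q j)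
    (h_indep_a_s : IndepFun a s μ)
    (h_indep_as_I : IndepFun (fun ω => (a ω, s ω)) I μ)
    (δ : ℝ) (hδ0 : 0 < δ) (hδ : δ ≤ 1 - (N : ℝ) ^ (-α)) :
    (∫ ω, ∑ i, (max (q i + (if i = I ω then a ω else 0) - s ω i) 0) ^ 2 ∂μ)
        - ∑ i, (q i) ^ 2
      ≤ N * (max amax smax) ^ 2 - 2 * (N : ℝ) ^ (-α) * ∑ i, q i
        - 2 * δ * Real.sqrt (∑ i, (q i - (∑ j, q j) / N) ^ 2) := by
  classical
  have hNpos : (0:ℝ) < N := by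
    have : (2:ℝ) ≤ N := by exact_mod_cast hN
    linarith
  set β : ℝ := (N : ℝ) ^ (-α) with hβ
  set m : ℝ := ⨅ j, q j with hm
  set M : ℝ := max amax smax with hM
  set T : ℝ := ∑ i, q i with hT
  have hMamax : amax ≤ M := le_max_left _ _
  have hMsmax : smax ≤ M := le_max_right _ _
  have hM0 : 0 < M := lt_of_lt_of_le hamax hMamax
  have hm_le : ∀ i, m ≤ q i := fun i => ciInf_le (Finite.bddBelow_range _) i
  -- integrability of a and s i
  have ha_int : Integrable a μ := by
    refine (integrable_const amax).mono' ha_meas.aestronglyMeasurable ?_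
    filter_upwards [ha_bdd] with ω h
    rw [Real.norm_eq_abs, abs_of_nonneg h.1]; exact h.2
  have hsi_meas : ∀ i, Measurable (fun ω => s ω i) :=
    fun i => (measurable_pi_apply i).comp hs_meas
  have hs_int : ∀ i, Integrable (fun ω => s ω i) μ := by
    intro i
    refine (integrable_const smax).mono' (hsi_meas i).aestronglyMeasurable ?_
    filter_upwards [hs_bdd i] with ω h
    rw [Real.norm_eq_abs, abs_of_nonneg h.1]; exact h.2
  have hs_all : ∀ᵐ ω ∂μ, ∀ i, 0 ≤ s ω i ∧ s ω i ≤ smax := ae_all_iff.2 hs_bdd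
  -- the dominating function g
  set C0 : ℝ := (∑ i, (q i) ^ 2) + N * M ^ 2 with hC0
  set g : Ω → ℝ := fun ω => C0 + 2 * m * a ω - 2 * ∑ i, q i * s ω i with hg
  have hsum_int : Integrable (fun ω => ∑ i, q i * s ω i) μ :=
    integrable_finset_sum _ (fun i _ => (hs_int i).const_mul _)
  have hg_int : Integrable g μ :=
    ((integrable_const C0).add (ha_int.const_mul _)).sub (hsum_int.const_mul _)
  have h1int : Integrable (fun ω => C0 + 2 * m * a ω) μ := by
    exact (integrable_const C0).add (ha_int.const_mul _)
  have h2int : Integrable (fun ω => 2 * ∑ i, q i * s ω i) μ := by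
    exact hsum_int.const_mul _
  have hmaint : Integrable (fun ω => 2 * m * a ω) μ := by
    exact ha_int.const_mul _
  have hg_val : ∫ ω, g ω ∂μ = C0 + 2 * m * (N * (1 - β)) - 2 * T := by
    rw [hg]
    rw [integral_sub h1int h2int,
      integral_add (integrable_const C0) hmaint, integral_const,
      integral_const_mul, integral_const_mul, ha_mean,
      integral_finset_sum _ (fun i _ => (hs_int i).const_mul _)]
    have : ∀ i ∈ Finset.univ, ∫ ω, q i * s ω i ∂μ = q i := by
      intro i _
      rw [integral_const_mul, hs_mean i, mul_one]
    rw [Finset.sum_congr rfl this]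
    simp [hT]
  -- measurability of the main integrand F
  set F : Ω → ℝ := fun ω =>
    ∑ i, (max (q i + (if i = I ω then a ω else 0) - s ω i) 0) ^ 2 with hF
  have hite_meas : ∀ i : Fin N, Measurable (fun ω => if i = I ω then a ω else 0 : Ω → ℝ) := by
    intro i
    have hset : MeasurableSet {ω | i = I ω} := by
      have h1 : {ω | i = I ω} = I ⁻¹' {i} := by
        ext ω; simp [eq_comm]
      rw [h1]; exact hI_meas (MeasurableSet.singleton i)
    exact Measurable.ite hset ha_meas measurable_const
  have hF_meas : Measurable F := by
    apply Finset.measurable_sum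
    intro i _
    exact (((measurable_const.add (hite_meas i)).sub (hsi_meas i)).max measurable_const).pow_const 2
  have hF_int : Integrable F μ := by
    refine (integrable_const (∑ i, (q i + amax + smax) ^ 2)).mono'
      hF_meas.aestronglyMeasurable ?_
    filter_upwards [ha_bdd, hs_all] with ω ha hs
    have hFnn : 0 ≤ F ω := Finset.sum_nonneg fun i _ => sq_nonneg _
    rw [Real.norm_eq_abs, abs_of_nonneg hFnn]
    apply Finset.sum_le_sum
    intro i _
    set t : ℝ := if i = I ω then a ω else 0 with ht
    have ht0 : 0 ≤ t := by rw [ht]; split_ifs; exacts [ha.1, le_refl 0]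
    have ht1 : t ≤ amax := by rw [ht]; split_ifs; exacts [ha.2, le_of_lt hamax]
    have h1 : max (q i + t - s ω i) 0 ≤ q i + amax + smax := by
      apply max_le
      · have := (hs i).1; linarith
      · have := hq i; linarith [le_of_lt hsmax, le_of_lt hamax]
    have h2 : 0 ≤ max (q i + t - s ω i) 0 := le_max_right _ _
    have h3 : -(q i + amax + smax) ≤ max (q i + t - s ω i) 0 := by
      have := hq i; nlinarith [le_of_lt hsmax, le_of_lt hamax]
    exact sq_le_sq' h3 h1
  -- pointwise a.e. bound F ≤ g
  have hpt : ∀ᵐ ω ∂μ, F ω ≤ g ω := by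
    filter_upwards [ha_bdd, hs_all, hI_min] with ω ha hs hI
    have term : ∀ i : Fin N,
        (max (q i + (if i = I ω then a ω else 0) - s ω i) 0) ^ 2
          ≤ (q i) ^ 2 + 2 * (q i * (if i = I ω then a ω else 0))
            - 2 * (q i * s ω i) + M ^ 2 := by
      intro i
      set t : ℝ := if i = I ω then a ω else 0 with ht
      have ht0 : 0 ≤ t := by rw [ht]; split_ifs; exacts [ha.1, le_refl 0]
      have ht1 : t ≤ amax := by rw [ht]; split_ifs; exacts [ha.2, le_of_lt hamax]
      have hts : (t - s ω i) ^ 2 ≤ M ^ 2 := by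
        apply sq_le_sq'
        · have := (hs i).2; linarith
        · have := (hs i).1; linarith
      have hmax : (max (q i + t - s ω i) 0) ^ 2 ≤ (q i + t - s ω i) ^ 2 := by
        rcases le_total (q i + t - s ω i) 0 with h | h
        · rw [max_eq_right h]; simpa using sq_nonneg (q i + t - s ω i)
        · rw [max_eq_left h]
      nlinarith [hmax, hts]
    have hsum_t : ∑ i, (q i) * (if i = I ω then a ω else 0) = m * a ω := by
      simp only [mul_ite, mul_zero]
      rw [Finset.sum_ite_eq' Finset.univ (I ω) (fun i => q i * a ω)]
      simp [hI]
    calc F ω ≤ ∑ i, ((q i) ^ 2 + 2 * (q i * (if i = I ω then a ω else 0))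
          - 2 * (q i * s ω i) + M ^ 2) := Finset.sum_le_sum fun i _ => term i
      _ = (∑ i, (q i) ^ 2) + 2 * (∑ i, (q i) * (if i = I ω then a ω else 0))
          - 2 * (∑ i, q i * s ω i) + N * M ^ 2 := by
        simp only [Finset.sum_add_distrib, Finset.sum_sub_distrib, ← Finset.mul_sum,
          Finset.sum_const, Finset.card_univ, Fintype.card_fin, nsmul_eq_mul]
      _ = g ω := by rw [hsum_t, hg, hC0]; ring
  have hInt_le : ∫ ω, F ω ∂μ ≤ C0 + 2 * m * (N * (1 - β)) - 2 * T := by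
    rw [← hg_val]; exact integral_mono_ae hF_int hg_int hpt
  -- the deterministic inequality:  sqrt (∑ (q i - T/N)^2) ≤ T - N * m
  set S : ℝ := ∑ i, (q i - T / N) ^ 2 with hS
  have expand : ∀ c : ℝ, ∑ i, (q i - c) ^ 2 = (∑ i, (q i) ^ 2) - 2 * c * T + N * c ^ 2 := by
    intro c
    have h : ∀ i : Fin N, (q i - c) ^ 2 = (q i) ^ 2 - 2 * c * (q i) + c ^ 2 := fun i => by ring
    rw [Finset.sum_congr rfl fun i _ => h i]
    rw [Finset.sum_add_distrib, Finset.sum_sub_distrib, ← Finset.mul_sum,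
      Finset.sum_const, Finset.card_univ, Fintype.card_fin]
    push_cast; ring
  have hNne : (N:ℝ) ≠ 0 := ne_of_gt hNpos
  have hA : S ≤ ∑ i, (q i - m) ^ 2 := by
    have key : S + (N:ℝ) * (T / N - m) ^ 2 = ∑ i, (q i - m) ^ 2 := by
      rw [hS, expand (T / N), expand m]
      field_simp
      ring
    have hpos : 0 ≤ (N:ℝ) * (T / N - m) ^ 2 :=
      mul_nonneg hNpos.le (sq_nonneg _)
    linarith
  have hsum_m : ∑ i, (q i - m) = T - N * m := by
    rw [Finset.sum_sub_distrib, Finset.sum_const, Finset.card_univ, Fintype.card_fin]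
    simp [hT, nsmul_eq_mul]
  have hl21 : ∑ i, (q i - m) ^ 2 ≤ (∑ i, (q i - m)) ^ 2 := by
    have : ∀ i ∈ Finset.univ, (q i - m) ^ 2 ≤ (q i - m) * (∑ j, (q j - m)) := by
      intro i _
      rw [sq]
      exact mul_le_mul_of_nonneg_left
        (Finset.single_le_sum (fun j _ => sub_nonneg.2 (hm_le j)) (Finset.mem_univ i))
        (sub_nonneg.2 (hm_le i))
    calc ∑ i, (q i - m) ^ 2 ≤ ∑ i, (q i - m) * (∑ j, (q j - m)) := Finset.sum_le_sum this
      _ = (∑ i, (q i - m)) ^ 2 := by rw [← Finset.sum_mul, sq]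
  have hTm : 0 ≤ T - N * m := by
    rw [← hsum_m]; exact Finset.sum_nonneg fun i _ => sub_nonneg.2 (hm_le i)
  have hsqrt : Real.sqrt S ≤ T - N * m := by
    calc Real.sqrt S ≤ Real.sqrt ((∑ i, (q i - m)) ^ 2) :=
          Real.sqrt_le_sqrt (le_trans hA hl21)
      _ = |∑ i, (q i - m)| := Real.sqrt_sq_eq_abs _
      _ = T - N * m := by rw [hsum_m, abs_of_nonneg hTm]
  -- final arithmetic
  have hkey : δ * Real.sqrt S ≤ (1 - β) * (T - N * m) := by
    have h0 : 0 ≤ Real.sqrt S := Real.sqrt_nonneg S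
    calc δ * Real.sqrt S ≤ (1 - β) * Real.sqrt S :=
          mul_le_mul_of_nonneg_right hδ h0
      _ ≤ (1 - β) * (T - N * m) :=
          mul_le_mul_of_nonneg_left hsqrt (by linarith)
  have hgoal : C0 + 2 * m * (N * (1 - β)) - 2 * T - ∑ i, (q i) ^ 2
      ≤ N * M ^ 2 - 2 * β * T - 2 * δ * Real.sqrt S := by
    have hexp : C0 + 2 * m * (N * (1 - β)) - 2 * T - ∑ i, (q i) ^ 2
        = N * M ^ 2 - 2 * β * T - 2 * ((1 - β) * (T - N * m)) := by
      rw [hC0]; ring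
    rw [hexp]
    linarith [hkey]
  calc (∫ ω, F ω ∂μ) - ∑ i, (q i) ^ 2
      ≤ C0 + 2 * m * (N * (1 - β)) - 2 * T - ∑ i, (q i) ^ 2 := by linarith [hInt_le]
    _ ≤ N * M ^ 2 - 2 * β * T - 2 * δ * Real.sqrt S := hgoal
end

section
/- The one-step drift of the squared norm of the parallel component satisfies E[‖(q⁺)_∥‖²] − ‖q_∥‖² ≥ −2·N^(−α)·Σ_{i=1}^N q_i. -/
open MeasureTheory ProbabilityTheory

/-- One-step JSQ drift bound for the squared norm of the
parallel component: `E[‖(q⁺)∥‖²] − ‖q∥‖² ≥ −2·N^(−α)·Σᵢ qᵢ`. Here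
`‖x∥‖² = (Σᵢ xᵢ)²/N`. -/
theorem drift_squared_parallel_norm_bound
    (N : ℕ) (hN : 2 ≤ N) (α amax smax : ℝ)
    (hα : 0 < α) (hamax : 0 < amax) (hsmax : 0 < smax)
    (q : Fin N → ℝ) (hq : ∀ i, 0 ≤ q i)
    {Ω : Type} [MeasurableSpace Ω] (μ : Measure Ω) [IsProbabilityMeasure μ]
    (a : Ω → ℝ) (ha_meas : Measurable a)
    (ha_bdd : ∀ᵐ ω ∂μ, 0 ≤ a ω ∧ a ω ≤ amax)
    (ha_mean : ∫ ω, a ω ∂μ = N * (1 - (N : ℝ) ^ (-α)))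
    (s : Ω → Fin N → ℝ) (hs_meas : Measurable s)
    (hs_bdd : ∀ i, ∀ᵐ ω ∂μ, 0 ≤ s ω i ∧ s ω i ≤ smax)
    (hs_mean : ∀ i, ∫ ω, s ω i ∂μ = 1)
    (I : Ω → Fin N) (hI_meas : Measurable I)
    (hI_min : ∀ᵐ ω ∂μ, q (I ω) = ⨅ j, q j)
    (h_indep_a_s : IndepFun a s μ)
    (h_indep_as_I : IndepFun (fun ω => (a ω, s ω)) I μ) :
    (∫ ω, (∑ i, max (q i + (if i = I ω then a ω else 0) - s ω i) 0) ^ 2 / N ∂μ)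
        - (∑ i, q i) ^ 2 / N
      ≥ -(2 * (N : ℝ) ^ (-α) * ∑ i, q i) := by
  have hN0 : (0:ℝ) < N := by positivity
  set Q : ℝ := ∑ i, q i with hQdef
  have hQ0 : 0 ≤ Q := Finset.sum_nonneg fun i _ => hq i
  have hsi_meas : ∀ i, Measurable fun ω => s ω i :=
    fun i => (measurable_pi_apply i).comp hs_meas
  have ha_int : Integrable a μ := by
    refine (integrable_const amax).mono' ha_meas.aestronglyMeasurable ?_
    filter_upwards [ha_bdd] with ω h
    rw [Real.norm_eq_abs, abs_le]; exact ⟨by linarith [h.1, h.2], h.2⟩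
  have hs_int : ∀ i, Integrable (fun ω => s ω i) μ := by
    intro i
    refine (integrable_const smax).mono' (hsi_meas i).aestronglyMeasurable ?_
    filter_upwards [hs_bdd i] with ω h
    rw [Real.norm_eq_abs, abs_le]; exact ⟨by linarith [h.1, h.2], h.2⟩
  set X : Ω → ℝ := fun ω => ∑ i, max (q i + (if i = I ω then a ω else 0) - s ω i) 0 with hXdef
  have hX_meas : Measurable X := by
    apply Finset.measurable_sum
    intro i _
    refine Measurable.max ?_ measurable_const
    refine Measurable.sub (Measurable.add measurable_const ?_) (hsi_meas i)
    refine Measurable.ite ?_ ha_meas measurable_const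
    have h : {ω | i = I ω} = I ⁻¹' {i} := by ext ω; simp [eq_comm]
    rw [h]; exact hI_meas (MeasurableSet.singleton i)
  have hX_nonneg : ∀ ω, 0 ≤ X ω := fun ω =>
    Finset.sum_nonneg fun i _ => le_max_right _ 0
  have hX_ge : ∀ ω, Q + a ω - ∑ i, s ω i ≤ X ω := by
    intro ω
    have hsum : (∑ i : Fin N, (if i = I ω then a ω else 0)) = a ω := by simp
    have : Q + a ω - ∑ i, s ω i = ∑ i, (q i + (if i = I ω then a ω else 0) - s ω i) := by
      rw [Finset.sum_sub_distrib, Finset.sum_add_distrib, hsum]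
    rw [this]
    exact Finset.sum_le_sum fun i _ => le_max_left _ 0
  -- integrability of X^2/N
  have hX2_int : Integrable (fun ω => X ω ^ 2 / N) μ := by
    refine (integrable_const ((Q + amax)^2 / N)).mono'
      ((hX_meas.pow_const 2).div_const _).aestronglyMeasurable ?_
    have hsb : ∀ᵐ ω ∂μ, ∀ i, 0 ≤ s ω i ∧ s ω i ≤ smax := by
      rw [MeasureTheory.ae_all_iff]; exact hs_bdd
    filter_upwards [ha_bdd, hsb] with ω ha hs'
    have hXle : X ω ≤ Q + amax := by
      have : X ω ≤ ∑ i, (q i + (if i = I ω then a ω else 0)) := by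
        refine Finset.sum_le_sum fun i _ => ?_
        have h1 : q i + (if i = I ω then a ω else 0) - s ω i ≤ q i + (if i = I ω then a ω else 0) := by
          have := (hs' i).1; linarith
        have h2 : 0 ≤ q i + (if i = I ω then a ω else 0) := by
          have := hq i; split <;> [linarith [ha.1]; linarith]
        exact max_le h1 h2
      have hsum : (∑ i : Fin N, (if i = I ω then a ω else 0)) = a ω := by simp
      rw [Finset.sum_add_distrib, hsum] at this
      linarith [ha.2]
    rw [Real.norm_eq_abs, abs_of_nonneg (by positivity)]
    have : X ω ^ 2 ≤ (Q + amax)^2 := by nlinarith [hX_nonneg ω]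
    exact div_le_div_of_nonneg_right this hN0.le
  -- lower bound function g
  have hg_int : Integrable (fun ω => (2*Q/N) * a ω - (2*Q/N) * (∑ i, s ω i) + Q^2/N) μ := by
    exact ((ha_int.const_mul _).sub ((integrable_finset_sum _ (fun i _ => hs_int i)).const_mul _)).add (integrable_const _)
  have hmono : ∀ ω, (2*Q/N) * a ω - (2*Q/N) * (∑ i, s ω i) + Q^2/N ≤ X ω ^ 2 / N := by
    intro ω
    have key : 2*Q*(Q + a ω - ∑ i, s ω i) - Q^2 ≤ X ω ^ 2 := by
      nlinarith [sq_nonneg (X ω - Q), hX_ge ω, hX_nonneg ω]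
    have heq : (2*Q/N) * a ω - (2*Q/N) * (∑ i, s ω i) + Q^2/N
        = (2*Q*(Q + a ω - ∑ i, s ω i) - Q^2)/N := by field_simp; ring
    rw [heq]
    exact div_le_div_of_nonneg_right key hN0.le
  have hint : (∫ ω, (fun ω => (2*Q/N) * a ω - (2*Q/N) * (∑ i, s ω i) + Q^2/N) ω ∂μ)
      ≤ ∫ ω, X ω ^ 2 / N ∂μ :=
    integral_mono hg_int hX2_int hmono
  have hsum_int : (∫ ω, (∑ i, s ω i) ∂μ) = N := by
    rw [integral_finset_sum _ (fun i _ => hs_int i)]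
    simp [hs_mean]
  have hgval : (∫ ω, (2*Q/N) * a ω - (2*Q/N) * (∑ i, s ω i) + Q^2/N ∂μ)
      = Q^2/N - 2 * (N:ℝ)^(-α) * Q := by
    have e1 : (∫ ω, (2*Q/(N:ℝ)) * a ω - (2*Q/(N:ℝ)) * (∑ i, s ω i) + Q^2/(N:ℝ) ∂μ)
        = (∫ ω, (2*Q/(N:ℝ)) * a ω - (2*Q/(N:ℝ)) * (∑ i, s ω i) ∂μ) + ∫ _, Q^2/(N:ℝ) ∂μ :=
      integral_add ((ha_int.const_mul _).sub ((integrable_finset_sum _ (fun i _ => hs_int i)).const_mul _)) (integrable_const _)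
    have e2 : (∫ ω, (2*Q/(N:ℝ)) * a ω - (2*Q/(N:ℝ)) * (∑ i, s ω i) ∂μ)
        = (∫ ω, (2*Q/(N:ℝ)) * a ω ∂μ) - ∫ ω, (2*Q/(N:ℝ)) * (∑ i, s ω i) ∂μ :=
      integral_sub (ha_int.const_mul _) ((integrable_finset_sum _ (fun i _ => hs_int i)).const_mul _)
    rw [e1, e2, integral_const_mul, integral_const_mul, ha_mean, hsum_int, integral_const]
    have hNne : (N:ℝ) ≠ 0 := ne_of_gt hN0
    simp only [probReal_univ, measure_univ, ENNReal.toReal_one, smul_eq_mul, one_mul]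
    field_simp
    ring
  rw [ge_iff_le, hQdef] at *
  have := hint
  rw [hgval] at this
  linarith
end

section
/- Assume conditions (C1) and (C2) hold and that X(k) converges in distribution, as k → ∞, to a random variable X̄ with values in 𝒳. Then for every integer r ≥ 1, E[Z(X̄)^r] ≤ (2κ)^r + (4D)^r·((D + η)/η)^r·r!. -/
open MeasureTheory ProbabilityTheory Filter



open scoped ENNReal NNReal


private lemma pow_diff_le (s : ℕ) (m : ℕ) :
    ((m:ℝ)+1)^(s+1) - (m:ℝ)^(s+1) ≤ (s+1) * ((m:ℝ)+1)^s := by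
  have h := geom_sum₂_mul ((m:ℝ)+1) (m:ℝ) (s+1)
  have h2 : ((m:ℝ)+1) - m = 1 := by ring
  rw [h2, mul_one] at h
  rw [← h]
  have : ∀ i ∈ Finset.range (s+1), ((m:ℝ)+1)^i * (m:ℝ)^(s+1-1-i) ≤ ((m:ℝ)+1)^s := by
    intro i hi
    have hi' : i ≤ s := Nat.lt_succ_iff.mp (Finset.mem_range.mp hi)
    have : (m:ℝ)^(s+1-1-i) ≤ ((m:ℝ)+1)^(s-i) := by
      have := pow_le_pow_left₀ (by positivity : (0:ℝ) ≤ (m:ℝ)) (by linarith : (m:ℝ) ≤ (m:ℝ)+1) (s-i)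
      simpa using this
    calc ((m:ℝ)+1)^i * (m:ℝ)^(s+1-1-i) ≤ ((m:ℝ)+1)^i * ((m:ℝ)+1)^(s-i) := by
          apply mul_le_mul_of_nonneg_left this (by positivity)
      _ = ((m:ℝ)+1)^s := by rw [← pow_add]; congr 1; omega
  calc ∑ i ∈ Finset.range (s+1), ((m:ℝ)+1)^i * (m:ℝ)^(s+1-1-i)
      ≤ ∑ i ∈ Finset.range (s+1), ((m:ℝ)+1)^s := Finset.sum_le_sum this
    _ = (s+1) * ((m:ℝ)+1)^s := by rw [Finset.sum_const, Finset.card_range]; push_cast; ring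

private lemma series_bound (r : ℕ) (hr : 1 ≤ r) (q : ℝ) (h0 : 0 < q) (h1 : q < 1) :
    ∑' m : ℕ, ((((m+1)^r - m^r : ℕ)) : ℝ) * q^(m+1) ≤ (r.factorial : ℝ) / (1-q)^r := by
  have hq1 : 0 < 1 - q := by linarith
  have habs : ‖q‖ < 1 := by rw [Real.norm_eq_abs, abs_of_pos h0]; exact h1
  have hsum0 : ∀ s : ℕ, Summable (fun m : ℕ => (m:ℝ)^s * q^m) := fun s =>
    summable_pow_mul_geometric_of_norm_lt_one s habs
  have hsum : ∀ s : ℕ, Summable (fun m : ℕ => ((m:ℝ)+1)^s * q^m) := by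
    intro s
    have h := (summable_nat_add_iff 1).mpr (hsum0 s)
    have h' := h.mul_right q⁻¹
    apply h'.congr
    intro m
    push_cast
    rw [pow_succ]
    field_simp
  set J : ℕ → ℝ := fun s => ∑' m : ℕ, ((m:ℝ)+1)^s * q^m with hJdef
  have hJnonneg : ∀ s, 0 ≤ J s := fun s => tsum_nonneg (fun m => by positivity)
  have hshift : ∀ s : ℕ, ∑' m : ℕ, (m:ℝ)^(s+1) * q^m = q * J (s+1) := by
    intro s
    rw [Summable.tsum_eq_zero_add (hsum0 (s+1))]
    have h00 : ((0:ℕ):ℝ)^(s+1) * q^0 = 0 := by simp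
    rw [h00, zero_add]
    have hJs : J (s+1) = ∑' m : ℕ, ((m:ℝ)+1)^(s+1) * q^m := rfl
    rw [hJs, ← tsum_mul_left]
    apply tsum_congr
    intro m
    push_cast
    ring
  have hident : ∀ s : ℕ, ∑' m : ℕ, (((m:ℝ)+1)^(s+1) - (m:ℝ)^(s+1)) * q^m = J (s+1) - q * J (s+1) := by
    intro s
    have hJs : J (s+1) = ∑' m : ℕ, ((m:ℝ)+1)^(s+1) * q^m := rfl
    rw [← hshift s, hJs, ← Summable.tsum_sub (hsum (s+1)) (hsum0 (s+1))]
    exact tsum_congr fun m => by ring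
  have hJ : ∀ s : ℕ, J s ≤ (s.factorial : ℝ) / (1-q)^(s+1) := by
    intro s
    induction s with
    | zero =>
      have : J 0 = (1-q)⁻¹ := by
        rw [hJdef]
        simp only [pow_zero, one_mul]
        exact tsum_geometric_of_lt_one h0.le h1
      rw [this]
      simp [Nat.factorial_zero, pow_one, one_div]
    | succ s ih =>
      have hdiff : ∑' m : ℕ, (((m:ℝ)+1)^(s+1) - (m:ℝ)^(s+1)) * q^m ≤ (s+1) * J s := by
        rw [hJdef, ← tsum_mul_left]
        apply Summable.tsum_le_tsum _ _ ((hsum s).mul_left _)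
        · intro m
          rw [← mul_assoc]
          exact mul_le_mul_of_nonneg_right (pow_diff_le s m) (by positivity)
        · apply Summable.congr ((hsum (s+1)).sub (hsum0 (s+1)))
          intro m; ring
      have h2 : J (s+1) * (1-q) ≤ (s+1) * J s := by
        have := hident s
        nlinarith [hdiff, this]
      have h3 : (s+1) * J s ≤ (s+1) * ((s.factorial : ℝ) / (1-q)^(s+1)) := by
        apply mul_le_mul_of_nonneg_left ih (by positivity)
      rw [le_div_iff₀ (by positivity)]
      calc J (s+1) * (1-q)^(s+1+1) = (J (s+1) * (1-q)) * (1-q)^(s+1) := by ring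
        _ ≤ ((s+1) * ((s.factorial : ℝ) / (1-q)^(s+1))) * (1-q)^(s+1) := by
            apply mul_le_mul_of_nonneg_right (h2.trans h3) (by positivity)
        _ = ((s+1).factorial : ℝ) := by
            rw [Nat.factorial_succ]
            push_cast
            field_simp
  obtain ⟨s, rfl⟩ : ∃ s, r = s + 1 := ⟨r - 1, by omega⟩
  have hcast : ∀ m : ℕ, ((((m+1)^(s+1) - m^(s+1) : ℕ)) : ℝ) = ((m:ℝ)+1)^(s+1) - (m:ℝ)^(s+1) := by
    intro m
    rw [Nat.cast_sub (Nat.pow_le_pow_left (Nat.le_succ m) (s+1))]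
    push_cast; ring
  calc ∑' m : ℕ, ((((m+1)^(s+1) - m^(s+1) : ℕ)) : ℝ) * q^(m+1)
      = q * ∑' m : ℕ, (((m:ℝ)+1)^(s+1) - (m:ℝ)^(s+1)) * q^m := by
        rw [← tsum_mul_left]
        apply tsum_congr; intro m; rw [hcast m, pow_succ]; ring
    _ = q * (J (s+1) - q * J (s+1)) := by rw [hident s]
    _ = q * (1-q) * J (s+1) := by ring
    _ ≤ q * (1-q) * ((((s+1).factorial : ℕ) : ℝ) / (1-q)^(s+1+1)) := by
        apply mul_le_mul_of_nonneg_left (hJ (s+1)) (by positivity)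
    _ ≤ (((s+1).factorial : ℕ) : ℝ) / (1-q)^(s+1) := by
        have hF : (0:ℝ) ≤ (((s+1).factorial : ℕ) : ℝ) / (1-q)^(s+1) := by positivity
        have heq : q * (1-q) * ((((s+1).factorial : ℕ) : ℝ) / (1-q)^(s+1+1))
            = q * ((((s+1).factorial : ℕ) : ℝ) / (1-q)^(s+1)) := by
          field_simp
          ring
        rw [heq]
        nlinarith


variable {𝒳 : Type} [Countable 𝒳] [MeasurableSpace 𝒳] [MeasurableSingletonClass 𝒳]

private lemma meas_all (s : Set 𝒳) : MeasurableSet s := s.to_countable.measurableSet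

private lemma tsum_singleton_univ (m : Measure 𝒳) : ∑' x : 𝒳, m {x} = m Set.univ := by
  rw [← Set.iUnion_of_singleton 𝒳]
  exact (measure_iUnion (fun x y hxy => by simp [Set.disjoint_singleton, hxy])
    (fun x => meas_all _)).symm

private lemma stat_lintegral (K : Kernel 𝒳 𝒳) (ν : Measure 𝒳)
    (hstat : ∀ y, ∑' x, K x {y} * ν {x} = ν {y}) (g : 𝒳 → ℝ≥0∞) :
    ∫⁻ x, (∫⁻ y, g y ∂(K x)) ∂ν = ∫⁻ y, g y ∂ν := by
  rw [lintegral_countable' (fun x => ∫⁻ y, g y ∂(K x)), lintegral_countable' g]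
  calc ∑' x, (∫⁻ y, g y ∂K x) * ν {x}
      = ∑' x, ∑' y, g y * (K x {y} * ν {x}) := by
        apply tsum_congr; intro x
        rw [lintegral_countable' g, ← ENNReal.tsum_mul_right]
        exact tsum_congr fun y => by ring
    _ = ∑' y, ∑' x, g y * (K x {y} * ν {x}) := ENNReal.tsum_comm
    _ = ∑' y, g y * ν {y} := by
        apply tsum_congr; intro y
        rw [ENNReal.tsum_mul_left, hstat y]

private lemma min_lip {p q M D : ℝ} (hD : 0 ≤ D) (h : q ≤ p + D) : min q M ≤ min p M + D := by
  rcases le_total p M with h' | h'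
  · calc min q M ≤ q := min_le_left _ _
      _ ≤ p + D := h
      _ = min p M + D := by rw [min_eq_left h']
  · calc min q M ≤ M := min_le_right _ _
      _ = min p M := (min_eq_right h').symm
      _ ≤ min p M + D := le_add_of_nonneg_right hD

private lemma drift_tail (K : Kernel 𝒳 𝒳) [IsMarkovKernel K] (ν : Measure 𝒳)
    [IsProbabilityMeasure ν]
    (Z : 𝒳 → ℝ) (hZ : ∀ x, 0 ≤ Z x) (η κ D : ℝ) (hη : 0 < η) (hηD : η ≤ D)
    (hC1 : ∀ x, κ ≤ Z x → (∫ y, Z y ∂(K x)) - Z x ≤ -η)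
    (hC2 : ∀ x, K x {y | D < |Z y - Z x|} = 0)
    (hstat : ∀ y, ∑' x, K x {y} * ν {x} = ν {y})
    (a : ℝ) (ha : κ ≤ a + D) :
    ENNReal.ofReal (D + η) * ν {x | a + D < Z x} ≤ ENNReal.ofReal D * ν {x | a - D < Z x} := by
  have hD : 0 < D := lt_of_lt_of_le hη hηD
  have hae : ∀ x : 𝒳, ∀ᵐ y ∂(K x), |Z y - Z x| ≤ D := by
    intro x
    have h := hC2 x
    rw [ae_iff]
    convert h using 2
    ext y; simp [not_le]
  have hZint : ∀ x : 𝒳, Integrable Z (K x) := by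
    intro x
    apply Integrable.mono' (integrable_const (Z x + D))
      ((measurable_of_countable Z).aestronglyMeasurable)
    filter_upwards [hae x] with y hy
    rw [Real.norm_eq_abs, abs_of_nonneg (hZ y)]
    linarith [(abs_le.mp hy).2]
  set B : Set 𝒳 := {x | a - D < Z x ∧ Z x ≤ a + D} with hBdef
  -- Step inequality for each truncation level n
  have key : ∀ n : ℕ, ENNReal.ofReal η * ν {x | a + D < Z x ∧ Z x ≤ a + D + n}
      ≤ ENNReal.ofReal D * ν B + ENNReal.ofReal D * ν {x | a + D + n < Z x} := by
    intro n
    set M : ℝ := 2*D + n with hMdef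
    set g : 𝒳 → ℝ≥0∞ := fun x => ENNReal.ofReal (min (Z x - a) M) with hgdef
    set A : Set 𝒳 := {x | a + D < Z x ∧ Z x ≤ a + D + n} with hAdef
    set C : Set 𝒳 := {x | a + D + n < Z x} with hCdef
    have hptwise : ∀ x : 𝒳, (∫⁻ y, g y ∂(K x)) + ENNReal.ofReal η * A.indicator 1 x
        ≤ g x + (ENNReal.ofReal D * B.indicator 1 x + ENNReal.ofReal D * C.indicator 1 x) := by
      intro x
      rcases le_or_gt (Z x) (a - D) with h1 | h1
      · -- low region
        have hg0 : ∫⁻ y, g y ∂(K x) = 0 := by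
          rw [lintegral_eq_zero_iff (measurable_of_countable g)]
          filter_upwards [hae x] with y hy
          have : Z y - a ≤ 0 := by linarith [(abs_le.mp hy).2]
          simp only [hgdef, Pi.zero_apply]
          exact ENNReal.ofReal_eq_zero.mpr (le_trans (min_le_left _ _) this)
        have hA : x ∉ A := fun h => by simp only [hAdef, Set.mem_setOf_eq] at h; linarith [h.1]
        rw [hg0, Set.indicator_of_notMem hA, mul_zero, add_zero]
        exact zero_le
      · rcases le_or_gt (Z x) (a + D) with h2 | h2
        · -- middle region B
          have hA : x ∉ A := fun h => by simp only [hAdef, Set.mem_setOf_eq] at h; linarith [h.1]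
          have hB : x ∈ B := ⟨h1, h2⟩
          have hle : ∫⁻ y, g y ∂(K x) ≤ g x + ENNReal.ofReal D := by
            calc ∫⁻ y, g y ∂(K x) ≤ ∫⁻ _, (g x + ENNReal.ofReal D) ∂(K x) := by
                  apply lintegral_mono_ae
                  filter_upwards [hae x] with y hy
                  have h' : min (Z y - a) M ≤ min (Z x - a) M + D :=
                    min_lip hD.le (by linarith [(abs_le.mp hy).2])
                  calc g y ≤ ENNReal.ofReal (min (Z x - a) M + D) :=
                        ENNReal.ofReal_le_ofReal h'
                    _ ≤ g x + ENNReal.ofReal D := ENNReal.ofReal_add_le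
              _ = g x + ENNReal.ofReal D := by rw [lintegral_const, measure_univ, mul_one]
          rw [Set.indicator_of_notMem hA, Set.indicator_of_mem hB, mul_zero, add_zero,
            Pi.one_apply, mul_one]
          exact hle.trans (add_le_add_right (le_add_of_nonneg_right zero_le) _)
        · rcases le_or_gt (Z x) (a + D + n) with h3 | h3
          · -- drift region A
            have hA : x ∈ A := ⟨h2, h3⟩
            have hgx : g x = ENNReal.ofReal (Z x - a) := by
              rw [hgdef]; simp only; rw [min_eq_left (by simp only [hMdef]; linarith)]
            have h4 : ∫⁻ y, g y ∂(K x) ≤ ENNReal.ofReal ((∫ y, Z y ∂(K x)) - a) := by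
              have h5 : ∫⁻ y, g y ∂(K x) ≤ ∫⁻ y, ENNReal.ofReal (Z y - a) ∂(K x) :=
                lintegral_mono fun y => ENNReal.ofReal_le_ofReal (min_le_left _ _)
              have hint : Integrable (fun y => Z y - a) (K x) :=
                (hZint x).sub (integrable_const a)
              have hpos : 0 ≤ᵐ[K x] fun y => Z y - a := by
                filter_upwards [hae x] with y hy
                simp only [Pi.zero_apply]
                linarith [(abs_le.mp hy).1]
              have h6 : ∫⁻ y, ENNReal.ofReal (Z y - a) ∂(K x)
                  = ENNReal.ofReal (∫ y, (Z y - a) ∂(K x)) :=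
                (ofReal_integral_eq_lintegral_ofReal hint hpos).symm
              have h7 : ∫ y, (Z y - a) ∂(K x) = (∫ y, Z y ∂(K x)) - a := by
                rw [integral_sub (hZint x) (integrable_const a), integral_const, probReal_univ]
                simp
              rw [h6, h7] at h5
              exact h5
            have h8 : (∫ y, Z y ∂(K x)) - a ≤ Z x - η - a := by
              have := hC1 x (by linarith); linarith
            rw [Set.indicator_of_mem hA, Pi.one_apply, mul_one]
            calc ∫⁻ y, g y ∂(K x) + ENNReal.ofReal η
                ≤ ENNReal.ofReal (Z x - η - a) + ENNReal.ofReal η := by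
                  exact add_le_add_left (h4.trans (ENNReal.ofReal_le_ofReal h8)) _
              _ = ENNReal.ofReal (Z x - a) := by
                  rw [← ENNReal.ofReal_add (by linarith) hη.le]; ring_nf
              _ = g x := hgx.symm
              _ ≤ g x + (ENNReal.ofReal D * B.indicator 1 x + ENNReal.ofReal D * C.indicator 1 x) :=
                  le_add_of_nonneg_right zero_le
          · -- top region C
            have hA : x ∉ A := fun h => by simp only [hAdef, Set.mem_setOf_eq] at h; linarith [h.2]
            have hC : x ∈ C := h3
            have hle : ∫⁻ y, g y ∂(K x) ≤ ENNReal.ofReal M := by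
              calc ∫⁻ y, g y ∂(K x) ≤ ∫⁻ _, ENNReal.ofReal M ∂(K x) :=
                    lintegral_mono fun y => ENNReal.ofReal_le_ofReal (min_le_right _ _)
                _ = ENNReal.ofReal M := by rw [lintegral_const, measure_univ, mul_one]
            have hgx : ENNReal.ofReal (M - D) ≤ g x := by
              apply ENNReal.ofReal_le_ofReal
              apply le_min (by simp only [hMdef]; linarith) (by simp only [hMdef]; linarith)
            rw [Set.indicator_of_notMem hA, Set.indicator_of_mem hC, mul_zero, add_zero,
              Pi.one_apply, mul_one]
            calc ∫⁻ y, g y ∂(K x) ≤ ENNReal.ofReal M := hle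
              _ = ENNReal.ofReal (M - D) + ENNReal.ofReal D := by
                  rw [← ENNReal.ofReal_add (by simp only [hMdef]; linarith) hD.le]; ring_nf
              _ ≤ g x + ENNReal.ofReal D := add_le_add_left hgx _
              _ ≤ g x + (ENNReal.ofReal D * B.indicator 1 x + ENNReal.ofReal D) :=
                  add_le_add_right (le_add_of_nonneg_left zero_le) _
    -- integrate the pointwise bound
    have hint := lintegral_mono hptwise (μ := ν)
    rw [lintegral_add_left (measurable_of_countable _),
        lintegral_add_left (measurable_of_countable _)] at hint
    rw [stat_lintegral K ν hstat g] at hint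
    have hIA : ∫⁻ x, ENNReal.ofReal η * A.indicator 1 x ∂ν = ENNReal.ofReal η * ν A := by
      rw [lintegral_const_mul _ (measurable_of_countable _), lintegral_indicator (meas_all A)]
      simp [lintegral_one]
    have hIBC : ∫⁻ x, (ENNReal.ofReal D * B.indicator 1 x + ENNReal.ofReal D * C.indicator 1 x) ∂ν
        = ENNReal.ofReal D * ν B + ENNReal.ofReal D * ν C := by
      rw [lintegral_add_left (measurable_of_countable _),
        lintegral_const_mul _ (measurable_of_countable _),
        lintegral_const_mul _ (measurable_of_countable _),
        lintegral_indicator (meas_all B), lintegral_indicator (meas_all C)]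
      simp [lintegral_one]
    rw [hIA, hIBC] at hint
    have hgfin : ∫⁻ y, g y ∂ν ≠ ⊤ := by
      have : ∫⁻ y, g y ∂ν ≤ ENNReal.ofReal M := by
        calc ∫⁻ y, g y ∂ν ≤ ∫⁻ _, ENNReal.ofReal M ∂ν :=
              lintegral_mono fun y => ENNReal.ofReal_le_ofReal (min_le_right _ _)
          _ = ENNReal.ofReal M := by rw [lintegral_const, measure_univ, mul_one]
      exact ne_top_of_le_ne_top ENNReal.ofReal_ne_top this
    exact (ENNReal.add_le_add_iff_left hgfin).mp hint
  -- pass to the limit n → ∞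
  have hA_lim : Tendsto (fun n : ℕ => ν {x | a + D < Z x ∧ Z x ≤ a + D + n}) atTop
      (nhds (ν {x | a + D < Z x})) := by
    have hunion : {x | a + D < Z x} = ⋃ n : ℕ, {x | a + D < Z x ∧ Z x ≤ a + D + n} := by
      ext x
      simp only [Set.mem_setOf_eq, Set.mem_iUnion]
      constructor
      · intro h
        obtain ⟨n, hn⟩ := exists_nat_ge (Z x - (a + D))
        exact ⟨n, h, by linarith⟩
      · rintro ⟨n, h, _⟩; exact h
    rw [hunion]
    apply tendsto_measure_iUnion_atTop
    intro i j hij x hx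
    exact ⟨hx.1, le_trans hx.2 (by have : (i:ℝ) ≤ j := Nat.cast_le.mpr hij; linarith)⟩
  have hC_lim : Tendsto (fun n : ℕ => ν {x | a + D + n < Z x}) atTop (nhds 0) := by
    have hinter : ⋂ n : ℕ, {x | a + D + n < Z x} = (∅ : Set 𝒳) := by
      ext x
      simp only [Set.mem_iInter, Set.mem_setOf_eq, Set.mem_empty_iff_false, iff_false, not_forall,
        not_lt]
      obtain ⟨n, hn⟩ := exists_nat_ge (Z x - (a + D))
      exact ⟨n, by linarith⟩
    have h := tendsto_measure_iInter_atTop (μ := ν)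
      (s := fun n : ℕ => {x | a + D + (n:ℝ) < Z x})
      (fun n => (meas_all _).nullMeasurableSet)
      (fun i j hij x hx => by
        have hx' : a + D + (j:ℝ) < Z x := hx
        have hij' : (i:ℝ) ≤ j := Nat.cast_le.mpr hij
        show a + D + (i:ℝ) < Z x
        linarith)
      ⟨0, measure_ne_top _ _⟩
    rwa [hinter, measure_empty] at h
  have hlim1 : Tendsto (fun n : ℕ => ENNReal.ofReal η * ν {x | a + D < Z x ∧ Z x ≤ a + D + n})
      atTop (nhds (ENNReal.ofReal η * ν {x | a + D < Z x})) :=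
    ENNReal.Tendsto.const_mul hA_lim (Or.inr ENNReal.ofReal_ne_top)
  have hlim2 : Tendsto (fun n : ℕ => ENNReal.ofReal D * ν B + ENNReal.ofReal D * ν {x | a + D + n < Z x})
      atTop (nhds (ENNReal.ofReal D * ν B + ENNReal.ofReal D * 0)) :=
    Tendsto.add tendsto_const_nhds (ENNReal.Tendsto.const_mul hC_lim (Or.inr ENNReal.ofReal_ne_top))
  have hmain : ENNReal.ofReal η * ν {x | a + D < Z x} ≤ ENNReal.ofReal D * ν B := by
    have := le_of_tendsto_of_tendsto' hlim1 hlim2 key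
    rwa [mul_zero, add_zero] at this
  -- combine
  have hsplit : ν {x | a - D < Z x} = ν {x | a + D < Z x} + ν B := by
    rw [← measure_union _ (meas_all B)]
    · congr 1
      ext x
      simp only [Set.mem_setOf_eq, Set.mem_union, hBdef]
      constructor
      · intro h
        rcases le_or_gt (Z x) (a + D) with h' | h'
        · exact Or.inr ⟨h, h'⟩
        · exact Or.inl h'
      · rintro (h | ⟨h, _⟩) <;> linarith [hD]
    · rw [Set.disjoint_left]
      intro x hx hx'
      simp only [Set.mem_setOf_eq, hBdef] at hx hx'
      linarith [hx'.2]
  calc ENNReal.ofReal (D + η) * ν {x | a + D < Z x}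
      = ENNReal.ofReal D * ν {x | a + D < Z x} + ENNReal.ofReal η * ν {x | a + D < Z x} := by
        rw [← add_mul, ← ENNReal.ofReal_add hD.le hη.le]
    _ ≤ ENNReal.ofReal D * ν {x | a + D < Z x} + ENNReal.ofReal D * ν B :=
        add_le_add_right hmain _
    _ = ENNReal.ofReal D * ν {x | a - D < Z x} := by rw [hsplit, mul_add]

set_option maxHeartbeats 1000000 in
private lemma stationary_moment (K : Kernel 𝒳 𝒳) [IsMarkovKernel K] (ν : Measure 𝒳)
    [IsProbabilityMeasure ν]
    (Z : 𝒳 → ℝ) (hZ : ∀ x, 0 ≤ Z x) (η κ D : ℝ) (hη : 0 < η)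
    (hC1 : ∀ x, κ ≤ Z x → (∫ y, Z y ∂(K x)) - Z x ≤ -η)
    (hC2 : ∀ x, K x {y | D < |Z y - Z x|} = 0)
    (hstat : ∀ y, ∑' x, K x {y} * ν {x} = ν {y})
    (r : ℕ) (hr : 1 ≤ r) :
    ∫⁻ x, ENNReal.ofReal (Z x ^ r) ∂ν
      ≤ ENNReal.ofReal ((2*κ)^r + (4*D)^r * ((D+η)/η)^r * (Nat.factorial r)) := by
  classical
  have hne : Nonempty 𝒳 := by
    by_contra h
    have he : (Set.univ : Set 𝒳) = ∅ := Set.univ_eq_empty_iff.mpr (not_nonempty_iff.mp h)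
    have h1 : ν Set.univ = 1 := measure_univ
    rw [he, measure_empty] at h1
    exact zero_ne_one h1
  obtain ⟨x₀⟩ := hne
  have hD0 : 0 ≤ D := by
    by_contra h
    push_neg at h
    have h1 := hC2 x₀
    have h2 : {y | D < |Z y - Z x₀|} = Set.univ := by
      ext y; simp only [Set.mem_setOf_eq, Set.mem_univ, iff_true]
      exact lt_of_lt_of_le h (abs_nonneg _)
    rw [h2, measure_univ] at h1
    exact one_ne_zero h1
  by_cases hbig : ∃ x, κ ≤ Z x
  case neg =>
    have hlt : ∀ x, Z x < κ := fun x => lt_of_not_ge (fun h => hbig ⟨x, h⟩)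
    have hκ : 0 < κ := lt_of_le_of_lt (hZ x₀) (hlt x₀)
    calc ∫⁻ x, ENNReal.ofReal (Z x ^ r) ∂ν
        ≤ ∫⁻ _, ENNReal.ofReal (κ ^ r) ∂ν := lintegral_mono fun x =>
          ENNReal.ofReal_le_ofReal (pow_le_pow_left₀ (hZ x) (hlt x).le r)
      _ = ENNReal.ofReal (κ ^ r) := by rw [lintegral_const, measure_univ, mul_one]
      _ ≤ _ := by
          apply ENNReal.ofReal_le_ofReal
          have h1 : κ ^ r ≤ (2*κ)^r := pow_le_pow_left₀ hκ.le (by linarith) r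
          have h2 : (0:ℝ) ≤ (4*D)^r * ((D+η)/η)^r * (Nat.factorial r) := by positivity
          linarith
  case pos =>
  obtain ⟨x₁, hx₁⟩ := hbig
  have hae1 : ∀ᵐ y ∂(K x₁), |Z y - Z x₁| ≤ D := by
    have h := hC2 x₁; rw [ae_iff]; convert h using 2; ext y; simp [not_le]
  have hZint1 : Integrable Z (K x₁) := by
    apply Integrable.mono' (integrable_const (Z x₁ + D))
      ((measurable_of_countable Z).aestronglyMeasurable)
    filter_upwards [hae1] with y hy
    rw [Real.norm_eq_abs, abs_of_nonneg (hZ y)]; linarith [(abs_le.mp hy).2]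
  have hηD : η ≤ D := by
    have h1 := hC1 x₁ hx₁
    have h2 : Z x₁ - D ≤ ∫ y, Z y ∂(K x₁) := by
      have h3 := integral_mono_ae (integrable_const (Z x₁ - D)) hZint1
        (by filter_upwards [hae1] with y hy; linarith [(abs_le.mp hy).1])
      rwa [integral_const, probReal_univ, one_smul] at h3
    linarith
  have hD : 0 < D := lt_of_lt_of_le hη hηD
  have hDη : 0 < D + η := by linarith
  set t : ℝ → ℝ≥0∞ := fun c => ν {x | c < Z x} with htdef
  have ht' : ∀ a : ℝ, κ ≤ a + D →
      ENNReal.ofReal (D + η) * t (a + D) ≤ ENNReal.ofReal D * t (a - D) :=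
    fun a ha => drift_tail K ν Z hZ η κ D hη hηD hC1 hC2 hstat a ha
  set qq : ℝ≥0∞ := ENNReal.ofReal (D/(D+η)) with hqqdef
  have hofD : ENNReal.ofReal D = ENNReal.ofReal (D+η) * qq := by
    rw [hqqdef, ← ENNReal.ofReal_mul (by linarith)]
    congr 1; field_simp
  have hcancel : ∀ u v : ℝ≥0∞,
      ENNReal.ofReal (D+η) * u ≤ ENNReal.ofReal (D+η) * v → u ≤ v :=
    fun u v h =>
      (ENNReal.mul_le_mul_iff_right (ENNReal.ofReal_pos.mpr hDη).ne' ENNReal.ofReal_ne_top).mp h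
  have tgeom : ∀ j : ℕ, t (κ + 2*D*j) ≤ qq^(j+1) := by
    intro j
    induction j with
    | zero =>
      apply hcancel
      have h := ht' (κ - D) (by linarith)
      have e1 : κ - D + D = κ + 2*D*((0:ℕ):ℝ) := by push_cast; ring
      rw [e1] at h
      calc ENNReal.ofReal (D+η) * t (κ + 2*D*((0:ℕ):ℝ))
          ≤ ENNReal.ofReal D * t (κ - D - D) := h
        _ ≤ ENNReal.ofReal D * 1 := mul_le_mul_right prob_le_one _
        _ = ENNReal.ofReal (D+η) * qq^(0+1) := by rw [mul_one, hofD, pow_one]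
    | succ j ih =>
      apply hcancel
      have h := ht' (κ + 2*D*j + D) (by nlinarith [Nat.cast_nonneg (α := ℝ) j])
      have e1 : κ + 2*D*j + D + D = κ + 2*D*(((j:ℕ)+1:ℕ):ℝ) := by push_cast; ring
      have e2 : κ + 2*D*j + D - D = κ + 2*D*(j:ℝ) := by ring
      rw [e1, e2] at h
      calc ENNReal.ofReal (D+η) * t (κ + 2*D*(((j:ℕ)+1:ℕ):ℝ))
          ≤ ENNReal.ofReal D * t (κ + 2*D*(j:ℝ)) := h
        _ ≤ ENNReal.ofReal D * qq^(j+1) := mul_le_mul_right ih _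
        _ = ENNReal.ofReal (D+η) * qq^(j+1+1) := by
            rw [hofD, pow_succ']; ring
  by_cases hκneg : κ < 0
  · exfalso
    have h := ht' (κ - D) (by linarith)
    have e1 : κ - D + D = κ := by ring
    rw [e1] at h
    have huniv : t κ = 1 := by
      have hs : {x | κ < Z x} = Set.univ := by
        ext x; simp only [Set.mem_setOf_eq, Set.mem_univ, iff_true]
        exact lt_of_lt_of_le hκneg (hZ x)
      show ν {x | κ < Z x} = 1
      rw [hs, measure_univ]
    rw [huniv, mul_one] at h
    have h2 : ENNReal.ofReal (D+η) ≤ ENNReal.ofReal D :=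
      h.trans (by calc ENNReal.ofReal D * t (κ - D - D) ≤ ENNReal.ofReal D * 1 :=
            mul_le_mul_right prob_le_one _
        _ = ENNReal.ofReal D := mul_one _)
    have h3 : D + η ≤ D := by
      have := (ENNReal.ofReal_le_ofReal_iff hD0).mp h2
      linarith
    linarith
  push_neg at hκneg
  -- main computation
  set q : ℝ := D/(D+η) with hqdef
  have hq0 : 0 < q := div_pos hD hDη
  have hq1 : q < 1 := (div_lt_one hDη).mpr (by linarith)
  set c : ℕ → ℕ := fun m => (m+1)^r - m^r with hcdef
  have htel : ∀ n : ℕ, ∑ m ∈ Finset.range n, c m = n^r := by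
    intro n
    induction n with
    | zero =>
      rw [Finset.range_zero, Finset.sum_empty]
      exact (Nat.zero_pow (by omega)).symm
    | succ n ih =>
      rw [Finset.sum_range_succ, ih, hcdef]
      exact Nat.add_sub_cancel' (Nat.pow_le_pow_left (Nat.le_succ n) r)
  set shell : ℕ → Set 𝒳 :=
    fun j => {x | 2*κ < Z x ∧ κ + 2*D*j < Z x ∧ Z x ≤ κ + 2*D*(j+1)} with hshelldef
  have hdisj2 : ∀ i j : ℕ, i < j → Disjoint (shell i) (shell j) := by
    intro i j hij
    rw [Set.disjoint_left]
    intro x hxi hxj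
    have h1 : Z x ≤ κ + 2*D*((i:ℝ)+1) := hxi.2.2
    have h2 : κ + 2*D*(j:ℝ) < Z x := hxj.2.1
    have h3 : ((i:ℝ)+1) ≤ (j:ℝ) := by exact_mod_cast hij
    nlinarith
  have hdisj : Pairwise (Function.onFun Disjoint shell) := by
    intro i j hij
    rcases hij.lt_or_gt with h | h
    · exact hdisj2 _ _ h
    · exact (hdisj2 _ _ h).symm
  have hcover : {x | 2*κ < Z x} ⊆ ⋃ j, shell j := by
    intro x hx
    have hx' : 2*κ < Z x := hx
    have hex : ∃ n : ℕ, Z x ≤ κ + 2*D*((n:ℝ)+1) := by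
      obtain ⟨n, hn⟩ := exists_nat_ge ((Z x - κ)/(2*D))
      refine ⟨n, ?_⟩
      have h4 := (div_le_iff₀ (by positivity : (0:ℝ) < 2*D)).mp hn
      nlinarith
    rw [Set.mem_iUnion]
    refine ⟨Nat.find hex, hx', ?_, Nat.find_spec hex⟩
    rcases Nat.eq_zero_or_pos (Nat.find hex) with h0 | hpos
    · rw [h0]
      show κ + 2*D*((0:ℕ):ℝ) < Z x
      push_cast
      linarith
    · obtain ⟨m, hm⟩ : ∃ m, Nat.find hex = m + 1 := ⟨Nat.find hex - 1, by omega⟩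
      have hmin := Nat.find_min hex (m := m) (by omega)
      push_neg at hmin
      show κ + 2*D*((Nat.find hex : ℕ):ℝ) < Z x
      rw [hm]
      push_cast
      push_cast at hmin
      linarith
  set f : 𝒳 → ℝ≥0∞ := fun x => ENNReal.ofReal (Z x ^ r) with hfdef
  set S : Set 𝒳 := {x | Z x ≤ 2*κ} with hSdef
  have piece1 : ∫⁻ x in S, f x ∂ν ≤ ENNReal.ofReal ((2*κ)^r) := by
    calc ∫⁻ x in S, f x ∂ν ≤ ∫⁻ _ in S, ENNReal.ofReal ((2*κ)^r) ∂ν :=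
        setLIntegral_mono measurable_const
          (fun x hx => ENNReal.ofReal_le_ofReal (pow_le_pow_left₀ (hZ x) hx r))
      _ = ENNReal.ofReal ((2*κ)^r) * ν S := setLIntegral_const _ _
      _ ≤ ENNReal.ofReal ((2*κ)^r) * 1 := mul_le_mul_right prob_le_one _
      _ = _ := mul_one _
  have shellbound : ∀ j : ℕ, ∫⁻ x in shell j, f x ∂ν
      ≤ ENNReal.ofReal ((4*D)^r) * ((((j+1)^r : ℕ)) : ℝ≥0∞) * ν (shell j) := by
    intro j
    have hcap : ∀ x ∈ shell j, f x ≤ ENNReal.ofReal ((4*D)^r * ((j:ℝ)+1)^r) := by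
      intro x hx
      obtain ⟨h1, h2, h3⟩ := hx
      have hlt : Z x < 4*D*((j:ℝ)+1) := by nlinarith
      apply ENNReal.ofReal_le_ofReal
      calc Z x ^ r ≤ (4*D*((j:ℝ)+1))^r := pow_le_pow_left₀ (hZ x) hlt.le r
        _ = (4*D)^r * ((j:ℝ)+1)^r := mul_pow _ _ _
    calc ∫⁻ x in shell j, f x ∂ν
        ≤ ∫⁻ _ in shell j, ENNReal.ofReal ((4*D)^r * ((j:ℝ)+1)^r) ∂ν :=
          setLIntegral_mono measurable_const hcap
      _ = ENNReal.ofReal ((4*D)^r * ((j:ℝ)+1)^r) * ν (shell j) := setLIntegral_const _ _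
      _ = ENNReal.ofReal ((4*D)^r) * ((((j+1)^r : ℕ)) : ℝ≥0∞) * ν (shell j) := by
          rw [ENNReal.ofReal_mul (by positivity)]
          congr 2
          rw [← ENNReal.ofReal_natCast ((j+1)^r)]
          congr 1
          push_cast; ring
  have hswap : ∑' j : ℕ, ((((j+1)^r : ℕ)) : ℝ≥0∞) * ν (shell j)
      ≤ ∑' m : ℕ, (((c m) : ℕ) : ℝ≥0∞) * qq^(m+1) := by
    have h1 : ∀ j : ℕ, ((((j+1)^r : ℕ)) : ℝ≥0∞) * ν (shell j)
        = ∑' m : ℕ, (if m ≤ j then (((c m) : ℕ) : ℝ≥0∞) * ν (shell j) else 0) := by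
      intro j
      rw [tsum_eq_sum (s := Finset.range (j+1))
        (fun m hm => if_neg (fun hc => hm (Finset.mem_range.mpr (Nat.lt_succ_of_le hc))))]
      have e : ((((j+1)^r : ℕ)) : ℝ≥0∞) = ∑ m ∈ Finset.range (j+1), (((c m) : ℕ) : ℝ≥0∞) := by
        rw [← htel (j+1), Nat.cast_sum]
      rw [e, Finset.sum_mul]
      exact Finset.sum_congr rfl fun m hm =>
        (if_pos (Nat.lt_succ_iff.mp (Finset.mem_range.mp hm))).symm
    calc ∑' j : ℕ, ((((j+1)^r : ℕ)) : ℝ≥0∞) * ν (shell j)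
        = ∑' j : ℕ, ∑' m : ℕ, (if m ≤ j then (((c m) : ℕ) : ℝ≥0∞) * ν (shell j) else 0) :=
          tsum_congr h1
      _ = ∑' m : ℕ, ∑' j : ℕ, (if m ≤ j then (((c m) : ℕ) : ℝ≥0∞) * ν (shell j) else 0) :=
          ENNReal.tsum_comm
      _ = ∑' m : ℕ, (((c m) : ℕ) : ℝ≥0∞) * ∑' j : ℕ, (if m ≤ j then ν (shell j) else 0) := by
          apply tsum_congr; intro m
          rw [← ENNReal.tsum_mul_left]
          exact tsum_congr fun j => by split <;> simp
      _ ≤ ∑' m : ℕ, (((c m) : ℕ) : ℝ≥0∞) * qq^(m+1) := by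
          apply ENNReal.tsum_le_tsum; intro m
          apply mul_le_mul_right
          have hU : ∑' j : ℕ, (if m ≤ j then ν (shell j) else 0)
              = ν (⋃ j : ℕ, if m ≤ j then shell j else ∅) := by
            rw [measure_iUnion]
            · exact tsum_congr fun j => by split <;> simp
            · intro i j hij
              refine Disjoint.mono ?_ ?_ (hdisj hij)
              · by_cases h : m ≤ i <;> simp [h]
              · by_cases h : m ≤ j <;> simp [h]
            · intro j
              split
              · exact meas_all _
              · exact MeasurableSet.empty
          rw [hU]
          refine le_trans (measure_mono ?_) (tgeom m)
          intro x hx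
          rw [Set.mem_iUnion] at hx
          obtain ⟨j, hj⟩ := hx
          by_cases hmj : m ≤ j
          · rw [if_pos hmj] at hj
            have h2 := hj.2.1
            have hcast : (m:ℝ) ≤ j := Nat.cast_le.mpr hmj
            show κ + 2*D*(m:ℝ) < Z x
            nlinarith
          · rw [if_neg hmj] at hj
            exact absurd hj (Set.notMem_empty x)
  have hsummable : Summable (fun m : ℕ => (((c m) : ℕ):ℝ) * q^(m+1)) := by
    have hmaj : Summable (fun m : ℕ => ((m:ℝ)+1)^r * q^(m+1)) := by
      have h := (summable_nat_add_iff 1).mpr (summable_pow_mul_geometric_of_norm_lt_one (r := q) r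
        (by rw [Real.norm_eq_abs, abs_of_pos hq0]; exact hq1))
      apply h.congr; intro m; push_cast; ring
    apply Summable.of_nonneg_of_le (fun m => by positivity) (fun m => ?_) hmaj
    apply mul_le_mul_of_nonneg_right _ (by positivity)
    calc (((c m) : ℕ):ℝ) ≤ (((m+1)^r : ℕ):ℝ) := Nat.cast_le.mpr (Nat.sub_le _ _)
      _ = ((m:ℝ)+1)^r := by push_cast; ring
  have hseries : ∑' m : ℕ, (((c m) : ℕ) : ℝ≥0∞) * qq^(m+1)
      ≤ ENNReal.ofReal ((Nat.factorial r : ℝ)/(1-q)^r) := by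
    have heq : ∑' m : ℕ, (((c m) : ℕ) : ℝ≥0∞) * qq^(m+1)
        = ENNReal.ofReal (∑' m : ℕ, (((c m) : ℕ):ℝ) * q^(m+1)) := by
      rw [ENNReal.ofReal_tsum_of_nonneg (fun m => by positivity) hsummable]
      apply tsum_congr; intro m
      rw [ENNReal.ofReal_mul (by positivity), ENNReal.ofReal_pow hq0.le]
      congr 1
      exact (ENNReal.ofReal_natCast _).symm
    rw [heq]
    exact ENNReal.ofReal_le_ofReal (series_bound r hr q hq0 hq1)
  have piece2 : ∫⁻ x in Sᶜ, f x ∂ν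
      ≤ ENNReal.ofReal ((4*D)^r) * ENNReal.ofReal ((Nat.factorial r : ℝ)/(1-q)^r) := by
    have hScomp : Sᶜ = {x | 2*κ < Z x} := by
      ext x; simp only [hSdef, Set.mem_compl_iff, Set.mem_setOf_eq, not_le]
    calc ∫⁻ x in Sᶜ, f x ∂ν ≤ ∫⁻ x in ⋃ j, shell j, f x ∂ν :=
          lintegral_mono_set (by rw [hScomp]; exact hcover)
      _ = ∑' j : ℕ, ∫⁻ x in shell j, f x ∂ν := lintegral_iUnion (fun j => meas_all _) hdisj f
      _ ≤ ∑' j : ℕ, ENNReal.ofReal ((4*D)^r) * ((((j+1)^r : ℕ)) : ℝ≥0∞) * ν (shell j) :=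
          ENNReal.tsum_le_tsum shellbound
      _ = ENNReal.ofReal ((4*D)^r) * ∑' j : ℕ, ((((j+1)^r : ℕ)) : ℝ≥0∞) * ν (shell j) := by
          rw [← ENNReal.tsum_mul_left]
          exact tsum_congr fun j => by ring
      _ ≤ ENNReal.ofReal ((4*D)^r) * ∑' m : ℕ, (((c m) : ℕ) : ℝ≥0∞) * qq^(m+1) :=
          mul_le_mul_right hswap _
      _ ≤ _ := mul_le_mul_right hseries _
  calc ∫⁻ x, f x ∂ν = ∫⁻ x in S, f x ∂ν + ∫⁻ x in Sᶜ, f x ∂ν :=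
        (lintegral_add_compl f (meas_all S)).symm
    _ ≤ ENNReal.ofReal ((2*κ)^r)
        + ENNReal.ofReal ((4*D)^r) * ENNReal.ofReal ((Nat.factorial r : ℝ)/(1-q)^r) :=
        add_le_add piece1 piece2
    _ = ENNReal.ofReal ((2*κ)^r + (4*D)^r * ((D+η)/η)^r * (Nat.factorial r)) := by
        rw [← ENNReal.ofReal_mul (by positivity)]
        rw [← ENNReal.ofReal_add (pow_nonneg (by linarith) r)
          (mul_nonneg (by positivity) (div_nonneg (by positivity) (pow_nonneg (by linarith) r)))]
        congr 1
        have h1q : 1 - q = η/(D+η) := by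
          rw [hqdef]; field_simp; ring
        rw [h1q]
        rw [div_pow, div_div_eq_mul_div, div_pow]
        field_simp

/-- (Moment bounds from drift conditions, Lemma 3 of
Maguluri–Srikant.) Let `𝒳` be a countable (discrete) state space, `K` a Markov
kernel on `𝒳`, and `X : ℕ → Ω → 𝒳` a time-homogeneous Markov chain with
transition kernel `K`, expressed through conditional expectations of indicator
functions given the σ-algebra generated by the past. Let `Z : 𝒳 → [0,∞)`
satisfy the drift conditions (C1) and (C2). If `X k` converges in distribution
(pointwise convergence of point masses, which is equivalent on a countable
discrete space) to `X̄`, then for every integer `r ≥ 1`,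
`E[Z(X̄)^r] ≤ (2κ)^r + (4D)^r·((D+η)/η)^r·r!`. -/
theorem moment_bounds_from_drift
    {𝒳 : Type} [Countable 𝒳] [MeasurableSpace 𝒳] [MeasurableSingletonClass 𝒳]
    {Ω : Type} [MeasurableSpace Ω] (μ : Measure Ω) [IsProbabilityMeasure μ]
    (K : Kernel 𝒳 𝒳) [IsMarkovKernel K]
    (X : ℕ → Ω → 𝒳) (hX_meas : ∀ k, Measurable (X k))
    (hMarkov : ∀ (k : ℕ) (y : 𝒳),
      (μ[(X (k + 1) ⁻¹' {y}).indicator (fun _ => (1 : ℝ)) |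
          MeasurableSpace.comap (fun ω => fun i : Fin (k + 1) => X i ω)
            (by infer_instance)])
        =ᵐ[μ] fun ω => (K (X k ω) {y}).toReal)
    (Z : 𝒳 → ℝ) (hZ : ∀ x, 0 ≤ Z x)
    (η : ℝ) (hη : 0 < η) (κ : ℝ)
    (hC1 : ∀ x : 𝒳, κ ≤ Z x → (∫ y, Z y ∂(K x)) - Z x ≤ -η)
    (D : ℝ)
    (hC2 : ∀ x : 𝒳, K x {y | D < |Z y - Z x|} = 0)
    {Ω' : Type} [MeasurableSpace Ω'] (μ' : Measure Ω') [IsProbabilityMeasure μ']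
    (Xbar : Ω' → 𝒳) (hXbar_meas : Measurable Xbar)
    (hconv : ∀ x : 𝒳,
      Tendsto (fun k => (μ (X k ⁻¹' {x})).toReal) atTop
        (nhds ((μ' (Xbar ⁻¹' {x})).toReal)))
    (r : ℕ) (hr : 1 ≤ r) :
    ∫⁻ ω, ENNReal.ofReal ((Z (Xbar ω)) ^ r) ∂μ'
      ≤ ENNReal.ofReal
          ((2 * κ) ^ r + (4 * D) ^ r * ((D + η) / η) ^ r * (Nat.factorial r)) := by
  set ν : Measure 𝒳 := μ'.map Xbar with hνdef
  haveI : IsProbabilityMeasure ν := Measure.isProbabilityMeasure_map hXbar_meas.aemeasurable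
  have hν_single : ∀ x : 𝒳, ν {x} = μ' (Xbar ⁻¹' {x}) := fun x =>
    Measure.map_apply hXbar_meas (measurableSet_singleton x)
  -- ENNReal-valued convergence of the one-dimensional marginals
  have hconv' : ∀ x : 𝒳, Tendsto (fun k => μ (X k ⁻¹' {x})) atTop (nhds (ν {x})) := by
    intro x
    rw [← ENNReal.tendsto_toReal_iff (fun k => measure_ne_top μ _) (measure_ne_top ν _)]
    rw [hν_single x]
    exact hconv x
  -- evolution equation from the Markov property
  have hevol : ∀ (k : ℕ) (y : 𝒳),
      μ (X (k+1) ⁻¹' {y}) = ∑' x : 𝒳, K x {y} * μ (X k ⁻¹' {x}) := by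
    intro k y
    have hm : MeasurableSpace.comap (fun ω => fun i : Fin (k + 1) => X i ω)
        (by infer_instance) ≤ (by infer_instance : MeasurableSpace Ω) :=
      Measurable.comap_le (measurable_pi_lambda _ fun i => hX_meas i)
    haveI : IsFiniteMeasure (μ.trim hm) := isFiniteMeasure_trim hm
    have h1 : ∫ ω, ((X (k+1) ⁻¹' {y}).indicator (fun _ => (1:ℝ))) ω ∂μ
        = ∫ ω, (K (X k ω) {y}).toReal ∂μ := by
      rw [← integral_condExp hm]
      exact integral_congr_ae (hMarkov k y)
    have h2 : ∫ ω, ((X (k+1) ⁻¹' {y}).indicator (fun _ => (1:ℝ))) ω ∂μ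
        = (μ (X (k+1) ⁻¹' {y})).toReal := by
      rw [integral_indicator_const (1:ℝ) ((hX_meas (k+1)) (measurableSet_singleton y))]
      rw [smul_eq_mul, mul_one, Measure.real_def]
    have h3 : ∫ ω, (K (X k ω) {y}).toReal ∂μ
        = (∫⁻ ω, K (X k ω) {y} ∂μ).toReal := by
      apply integral_toReal
      · exact ((measurable_of_countable (fun x : 𝒳 => K x {y})).comp (hX_meas k)).aemeasurable
      · exact Eventually.of_forall fun ω => measure_lt_top _ _
    have h4 : ∫⁻ ω, K (X k ω) {y} ∂μ = ∑' x : 𝒳, K x {y} * μ (X k ⁻¹' {x}) := by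
      rw [← lintegral_map (measurable_of_countable (fun x : 𝒳 => K x {y})) (hX_meas k)]
      rw [lintegral_countable' (fun x : 𝒳 => K x {y})]
      exact tsum_congr fun x => by
        rw [Measure.map_apply (hX_meas k) (measurableSet_singleton x)]
    have hne2 : ∑' x : 𝒳, K x {y} * μ (X k ⁻¹' {x}) ≠ ⊤ := by
      have hb : ∑' x : 𝒳, K x {y} * μ (X k ⁻¹' {x}) ≤ ∑' x : 𝒳, μ (X k ⁻¹' {x}) :=
        ENNReal.tsum_le_tsum fun x => mul_le_of_le_one_left zero_le prob_le_one
      have huniv : ∑' x : 𝒳, μ (X k ⁻¹' {x}) = 1 := by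
        haveI : IsProbabilityMeasure (μ.map (X k)) :=
          Measure.isProbabilityMeasure_map (hX_meas k).aemeasurable
        have := tsum_singleton_univ (μ.map (X k))
        rw [measure_univ] at this
        rw [← this]
        exact tsum_congr fun x =>
          (Measure.map_apply (hX_meas k) (measurableSet_singleton x)).symm
      rw [huniv] at hb
      exact ne_top_of_le_ne_top ENNReal.one_ne_top hb
    have h5 : (μ (X (k+1) ⁻¹' {y})).toReal
        = (∑' x : 𝒳, K x {y} * μ (X k ⁻¹' {x})).toReal := by
      rw [← h2, h1, h3, h4]
    exact (ENNReal.toReal_eq_toReal_iff' (measure_ne_top μ _) hne2).mp h5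
  -- stationarity of the limit
  have hstat : ∀ y : 𝒳, ∑' x : 𝒳, K x {y} * ν {x} = ν {y} := by
    have hle : ∀ y : 𝒳, ∑' x : 𝒳, K x {y} * ν {x} ≤ ν {y} := by
      intro y
      have hterm : ∀ x : 𝒳, Tendsto (fun k => K x {y} * μ (X k ⁻¹' {x})) atTop
          (nhds (K x {y} * ν {x})) := fun x =>
        ENNReal.Tendsto.const_mul (hconv' x) (Or.inr (measure_ne_top _ _))
      calc ∑' x : 𝒳, K x {y} * ν {x}
          = ∑' x : 𝒳, liminf (fun k => K x {y} * μ (X k ⁻¹' {x})) atTop :=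
            tsum_congr fun x => ((hterm x).liminf_eq).symm
        _ = ∫⁻ x : 𝒳, liminf (fun k => K x {y} * μ (X k ⁻¹' {x})) atTop ∂Measure.count :=
            (lintegral_count _).symm
        _ ≤ liminf (fun k => ∫⁻ x : 𝒳, K x {y} * μ (X k ⁻¹' {x}) ∂Measure.count) atTop :=
            lintegral_liminf_le fun k => measurable_of_countable _
        _ = liminf (fun k => ∑' x : 𝒳, K x {y} * μ (X k ⁻¹' {x})) atTop := by
            apply Filter.liminf_congr
            exact Eventually.of_forall fun k => lintegral_count _
        _ = liminf (fun k => μ (X (k+1) ⁻¹' {y})) atTop := by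
            apply Filter.liminf_congr
            exact Eventually.of_forall fun k => (hevol k y).symm
        _ = ν {y} := by
            apply Tendsto.liminf_eq
            exact (hconv' y).comp (tendsto_add_atTop_nat 1)
    intro y
    by_contra hne
    have hlt : ∑' x : 𝒳, K x {y} * ν {x} < ν {y} := lt_of_le_of_ne (hle y) hne
    have hsum_f : ∑' y' : 𝒳, ∑' x : 𝒳, K x {y'} * ν {x} = 1 := by
      rw [ENNReal.tsum_comm]
      calc ∑' x : 𝒳, ∑' y' : 𝒳, K x {y'} * ν {x}
          = ∑' x : 𝒳, (∑' y' : 𝒳, K x {y'}) * ν {x} :=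
            tsum_congr fun x => ENNReal.tsum_mul_right
        _ = ∑' x : 𝒳, ν {x} := by
            apply tsum_congr; intro x
            rw [tsum_singleton_univ (K x), measure_univ, one_mul]
        _ = 1 := by rw [tsum_singleton_univ ν, measure_univ]
    have hsum_ν : ∑' y' : 𝒳, ν {y'} = 1 := by rw [tsum_singleton_univ ν, measure_univ]
    have : (1:ℝ≥0∞) < 1 := by
      calc (1:ℝ≥0∞) = ∑' y' : 𝒳, ∑' x : 𝒳, K x {y'} * ν {x} := hsum_f.symm
        _ < ∑' y' : 𝒳, ν {y'} :=
          ENNReal.tsum_lt_tsum (hsum_f ▸ ENNReal.one_ne_top) hle hlt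
        _ = 1 := hsum_ν
    exact absurd this (lt_irrefl _)
  -- conclude via the stationary moment bound
  have hmap : ∫⁻ ω, ENNReal.ofReal ((Z (Xbar ω)) ^ r) ∂μ'
      = ∫⁻ x, ENNReal.ofReal (Z x ^ r) ∂ν := by
    rw [hνdef, lintegral_map (measurable_of_countable _) hXbar_meas]
  rw [hmap]
  exact stationary_moment K ν Z hZ η κ D hη hC1 hC2 hstat r hr
end

section
/- Assume E[Σ_{i=1}^N q̄_i] < ∞. Then for every integer r ≥ 1, E[(Σ_{i=1}^N ū_i)^r] ≤ smax^(r−1)·N^(r−α). -/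
open MeasureTheory ProbabilityTheory Filter

/-- Assume `E[Σᵢ q̄ᵢ] < ∞`. Then for every integer `r ≥ 1`,
`E[(Σᵢ ūᵢ)^r] ≤ smax^(r−1)·N^(r−α)`. -/
theorem moment_bound_total_unused_service
    (N : ℕ) (hN : 2 ≤ N) (α amax smax σa2 σs2 : ℝ)
    {Ω : Type} [MeasurableSpace Ω] {μ : Measure Ω}
    (M : JSQModel N α amax smax σa2 σs2 Ω μ)
    (hint : Integrable (fun ω => ∑ i, (M.q ω i : ℝ)) μ)
    (r : ℕ) (hr : 1 ≤ r) :
    ∫ ω, (∑ i, (M.u ω i : ℝ)) ^ r ∂μ ≤ smax ^ (r - 1) * (N : ℝ) ^ ((r : ℝ) - α) := by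
  classical
  haveI := M.hprob
  have hNpos : (0:ℝ) < N := by
    have : (0:ℕ) < N := by omega
    exact_mod_cast this
  have hsmax0 : (0:ℝ) ≤ smax := M.hsmax.le
  set U : Ω → ℝ := fun ω => ∑ i, (M.u ω i : ℝ) with hUdef
  set S : Ω → ℝ := fun ω => ∑ i, (M.s ω i : ℝ) with hSdef
  set A : Ω → ℝ := fun ω => (M.a ω : ℝ) with hAdef
  set Q : Ω → ℝ := fun ω => ∑ i, (M.q ω i : ℝ) with hQdef
  set Qp : Ω → ℝ := fun ω => ∑ i, (M.qplus ω i : ℝ) with hQpdef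
  -- measurability
  have hcast : Measurable ((↑) : ℕ → ℝ) := measurable_from_top
  have hmq : ∀ i, Measurable fun ω => M.q ω i :=
    fun i => (measurable_pi_apply i).comp M.meas_q
  have hms : ∀ i, Measurable fun ω => M.s ω i :=
    fun i => (measurable_pi_apply i).comp M.meas_s
  have hmat : ∀ i, Measurable fun ω => M.atilde ω i := by
    intro i
    have hset : MeasurableSet {ω | i = M.I ω} := by
      have h1 : {ω | i = M.I ω} = M.I ⁻¹' {i} := by ext ω; simp [eq_comm]
      rw [h1]; exact M.meas_I (measurableSet_singleton i)
    exact Measurable.ite hset M.meas_a measurable_const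
  have hmu : ∀ i, Measurable fun ω => M.u ω i :=
    fun i => (hms i).sub ((hmq i).add (hmat i))
  have hmU : Measurable U :=
    Finset.measurable_sum _ fun i _ => hcast.comp (hmu i)
  have hmS : Measurable S :=
    Finset.measurable_sum _ fun i _ => hcast.comp (hms i)
  have hmA : Measurable A := hcast.comp M.meas_a
  -- integrability helper
  have hbdint : ∀ (f : Ω → ℝ), Measurable f → ∀ (C : ℝ),
      (∀ᵐ ω ∂μ, |f ω| ≤ C) → Integrable f μ := by
    intro f hf C h
    exact (integrable_const C).mono' hf.aestronglyMeasurable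
      (h.mono fun ω hω => by simpa using hω)
  -- bounds
  have hub : ∀ i, ∀ᵐ ω ∂μ, (M.u ω i : ℝ) ≤ smax := by
    intro i
    filter_upwards [M.s_bdd i] with ω h
    refine le_trans ?_ h
    exact_mod_cast Nat.sub_le _ _
  have hu0 : ∀ ω, 0 ≤ U ω := fun ω =>
    Finset.sum_nonneg fun i _ => Nat.cast_nonneg _
  have hUbd : ∀ᵐ ω ∂μ, U ω ≤ smax * N := by
    have := (ae_all_iff (p := fun ω i => (M.u ω i : ℝ) ≤ smax)).2 hub
    filter_upwards [this] with ω h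
    calc U ω ≤ ∑ _i : Fin N, smax := Finset.sum_le_sum fun i _ => h i
    _ = smax * N := by simp [Finset.sum_const, mul_comm]
  have hUint : Integrable U μ := by
    refine hbdint U hmU (smax * N) ?_
    filter_upwards [hUbd] with ω h
    rwa [abs_of_nonneg (hu0 ω)]
  have hAint : Integrable A μ := by
    refine hbdint A hmA amax ?_
    filter_upwards [M.a_bdd] with ω h
    rwa [abs_of_nonneg (Nat.cast_nonneg _)]
  have hSiint : ∀ i, Integrable (fun ω => (M.s ω i : ℝ)) μ := by
    intro i
    refine hbdint _ (hcast.comp (hms i)) smax ?_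
    filter_upwards [M.s_bdd i] with ω h
    rwa [abs_of_nonneg (Nat.cast_nonneg _)]
  have hSint : Integrable S μ := by
    rw [hSdef]; exact integrable_finset_sum _ fun i _ => hSiint i
  have hQint : Integrable Q μ := hint
  -- stationarity
  have hg : Measurable (fun v : Fin N → ℕ => ∑ i, (v i : ℝ)) :=
    Finset.measurable_sum _ fun i _ => hcast.comp (measurable_pi_apply i)
  have hstat : IdentDistrib Qp Q μ μ := M.stationary.comp hg
  have hQpint : Integrable Qp μ := hstat.integrable_iff.mpr hQint
  have hIQ : ∫ ω, Qp ω ∂μ = ∫ ω, Q ω ∂μ := hstat.integral_eq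
  -- pointwise decomposition
  have hcastsub : ∀ x y : ℕ, ((x - y : ℕ) : ℝ) = (x:ℝ) - y + ((y - x : ℕ):ℝ) := by
    intro x y; rcases le_total y x with h | h
    · rw [Nat.cast_sub h, Nat.sub_eq_zero_of_le h]; push_cast; ring
    · rw [Nat.sub_eq_zero_of_le h, Nat.cast_sub h]; push_cast; ring
  have key : ∀ ω, Qp ω = Q ω + A ω - S ω + U ω := by
    intro ω
    have hA : ∑ i, (M.atilde ω i : ℝ) = A ω := by
      simp [JSQModel.atilde, hAdef]
    calc Qp ω = ∑ i, ((M.q ω i : ℝ) + (M.atilde ω i : ℝ)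
        - (M.s ω i : ℝ) + (M.u ω i : ℝ)) := by
          refine Finset.sum_congr rfl fun i _ => ?_
          have h := hcastsub (M.q ω i + M.atilde ω i) (M.s ω i)
          show (M.qplus ω i : ℝ) = _
          unfold JSQModel.qplus JSQModel.u
          rw [h]; push_cast; ring
    _ = Q ω + A ω - S ω + U ω := by
          rw [Finset.sum_add_distrib, Finset.sum_sub_distrib,
            Finset.sum_add_distrib, hA]
  -- expectation of U
  have hSval : ∫ ω, S ω ∂μ = N := by
    rw [hSdef, integral_finset_sum _ fun i _ => hSiint i]
    simp [M.s_mean]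
  have hsplit : ∫ ω, Qp ω ∂μ
      = ∫ ω, Q ω ∂μ + ∫ ω, A ω ∂μ - ∫ ω, S ω ∂μ + ∫ ω, U ω ∂μ := by
    rw [show Qp = fun ω => Q ω + A ω - S ω + U ω from funext key]
    rw [integral_add (f := fun ω => Q ω + A ω - S ω) (g := U)
        ((hQint.add hAint).sub hSint) hUint,
      integral_sub (f := fun ω => Q ω + A ω) (g := S) (hQint.add hAint) hSint,
      integral_add (f := Q) (g := A) hQint hAint]
  have hUval : ∫ ω, U ω ∂μ = (N : ℝ) * (N : ℝ) ^ (-α) := by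
    have hAval : ∫ ω, A ω ∂μ = N * (1 - (N : ℝ) ^ (-α)) := M.a_mean
    have := hsplit
    rw [hIQ, hAval, hSval] at this
    linarith
  -- final bound
  have hbound : ∀ᵐ ω ∂μ, U ω ^ r ≤ (smax * N) ^ (r - 1) * U ω := by
    filter_upwards [hUbd] with ω h
    have h0 := hu0 ω
    calc U ω ^ r = U ω ^ (r - 1) * U ω := by
          rw [← pow_succ]; congr 1; omega
    _ ≤ (smax * N) ^ (r - 1) * U ω :=
          mul_le_mul_of_nonneg_right (pow_le_pow_left₀ h0 h _) h0
  have hUrint : Integrable (fun ω => U ω ^ r) μ := by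
    refine hbdint _ (hmU.pow_const r) ((smax * N) ^ r) ?_
    filter_upwards [hUbd] with ω h
    rw [abs_of_nonneg (pow_nonneg (hu0 ω) r)]
    exact pow_le_pow_left₀ (hu0 ω) h r
  have hmono : ∫ ω, U ω ^ r ∂μ ≤ ∫ ω, (smax * N) ^ (r - 1) * U ω ∂μ :=
    integral_mono_ae hUrint (hUint.const_mul _) hbound
  have hfin : ∫ ω, (smax * N) ^ (r - 1) * U ω ∂μ
      = smax ^ (r - 1) * (N : ℝ) ^ ((r : ℝ) - α) := by
    rw [integral_const_mul, hUval]
    have h1 : (N:ℝ) ^ (r - 1) * (N:ℝ) = (N:ℝ) ^ r := by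
      rw [← pow_succ]; congr 1; omega
    rw [show ((r : ℝ) - α) = (r : ℝ) + (-α) from sub_eq_add_neg _ _,
      Real.rpow_add hNpos, Real.rpow_natCast, mul_pow, ← h1]
    ring
  calc ∫ ω, (∑ i, (M.u ω i : ℝ)) ^ r ∂μ = ∫ ω, U ω ^ r ∂μ := rfl
  _ ≤ _ := hmono
  _ = _ := hfin
end

section
/- Assume E[Σ_{i=1}^N q̄_i] < ∞. Then E[⟨q̄, ū⟩] ≤ smax·N^(1−α). -/
open MeasureTheory ProbabilityTheory Filter

/-- Assume `E[Σᵢ q̄ᵢ] < ∞`. Then `E[⟨q̄, ū⟩] ≤ smax·N^(1−α)`. -/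
theorem inner_q_u_bound
    (N : ℕ) (hN : 2 ≤ N) (α amax smax σa2 σs2 : ℝ)
    {Ω : Type} [MeasurableSpace Ω] {μ : Measure Ω}
    (M : JSQModel N α amax smax σa2 σs2 Ω μ)
    (hint : Integrable (fun ω => ∑ i, (M.q ω i : ℝ)) μ) :
    ∫ ω, ∑ i, (M.q ω i : ℝ) * (M.u ω i : ℝ) ∂μ ≤ smax * (N : ℝ) ^ ((1 : ℝ) - α) := by
  have hprob := M.hprob
  -- basic measurability
  have hmeasq : ∀ i, Measurable fun ω => (M.q ω i : ℝ) := fun i =>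
    measurable_from_top.comp ((measurable_pi_apply i).comp M.meas_q)
  have hmeass : ∀ i, Measurable fun ω => (M.s ω i : ℝ) := fun i =>
    measurable_from_top.comp ((measurable_pi_apply i).comp M.meas_s)
  have hmeasa : Measurable fun ω => (M.a ω : ℝ) := measurable_from_top.comp M.meas_a
  have hmeasat : ∀ i, Measurable fun ω => M.atilde ω i := by
    intro i
    have hset : MeasurableSet {ω | i = M.I ω} := by
      have := M.meas_I (MeasurableSet.singleton i)
      simpa [Set.preimage, eq_comm] using this
    exact Measurable.ite hset M.meas_a measurable_const
  have hmeasu : ∀ i, Measurable fun ω => M.u ω i := by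
    intro i
    unfold JSQModel.u
    exact ((measurable_pi_apply i).comp M.meas_s).sub
      (((measurable_pi_apply i).comp M.meas_q).add (hmeasat i))
  have hmeasuR : ∀ i, Measurable fun ω => (M.u ω i : ℝ) := fun i =>
    measurable_from_top.comp (hmeasu i)
  -- pointwise facts in ℕ
  have hu_le_s : ∀ ω i, M.u ω i ≤ M.s ω i := fun ω i => Nat.sub_le _ _
  have hq_le_s : ∀ ω i, M.u ω i ≠ 0 → M.q ω i ≤ M.s ω i := by
    intro ω i h
    unfold JSQModel.u at h
    omega
  have hqu_le : ∀ ω i, M.q ω i * M.u ω i ≤ M.s ω i * M.u ω i := by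
    intro ω i
    rcases Nat.eq_zero_or_pos (M.u ω i) with h | h
    · simp [h]
    · exact Nat.mul_le_mul_right _ (hq_le_s ω i (Nat.pos_iff_ne_zero.mp h))
  -- integrability of bounded functions
  have hsInt : ∀ i, Integrable (fun ω => (M.s ω i : ℝ)) μ := by
    intro i
    refine Integrable.mono' (integrable_const smax) (hmeass i).aestronglyMeasurable ?_
    filter_upwards [M.s_bdd i] with ω hω
    simpa [Real.norm_of_nonneg (Nat.cast_nonneg _)] using hω
  have haInt : Integrable (fun ω => (M.a ω : ℝ)) μ := by
    refine Integrable.mono' (integrable_const amax) hmeasa.aestronglyMeasurable ?_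
    filter_upwards [M.a_bdd] with ω hω
    simpa [Real.norm_of_nonneg (Nat.cast_nonneg _)] using hω
  have huInt : ∀ i, Integrable (fun ω => (M.u ω i : ℝ)) μ := by
    intro i
    refine Integrable.mono' (integrable_const smax) (hmeasuR i).aestronglyMeasurable ?_
    filter_upwards [M.s_bdd i] with ω hω
    rw [Real.norm_of_nonneg (Nat.cast_nonneg _)]
    exact le_trans (by exact_mod_cast hu_le_s ω i) hω
  have hsmax0 : (0:ℝ) ≤ smax := le_of_lt M.hsmax
  have hquInt : ∀ i, Integrable (fun ω => (M.q ω i : ℝ) * (M.u ω i : ℝ)) μ := by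
    intro i
    refine Integrable.mono' (integrable_const (smax * smax))
      ((hmeasq i).mul (hmeasuR i)).aestronglyMeasurable ?_
    filter_upwards [M.s_bdd i] with ω hω
    rw [Real.norm_of_nonneg (mul_nonneg (Nat.cast_nonneg _) (Nat.cast_nonneg _))]
    have h1 : (M.q ω i : ℝ) * (M.u ω i : ℝ) ≤ (M.s ω i : ℝ) * (M.u ω i : ℝ) := by
      exact_mod_cast hqu_le ω i
    have h2 : (M.s ω i : ℝ) * (M.u ω i : ℝ) ≤ smax * smax := by
      have hu : (M.u ω i : ℝ) ≤ smax := le_trans (by exact_mod_cast hu_le_s ω i) hω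
      exact mul_le_mul hω hu (Nat.cast_nonneg _) hsmax0
    linarith
  -- stationarity: ∫ Σ qplus = ∫ Σ q
  have hg : Measurable fun v : Fin N → ℕ => ∑ i, (v i : ℝ) :=
    Finset.measurable_sum _ fun i _ => measurable_from_top.comp (measurable_pi_apply i)
  have hstat : IdentDistrib (fun ω => ∑ i, (M.qplus ω i : ℝ))
      (fun ω => ∑ i, (M.q ω i : ℝ)) μ μ := by
    have := M.stationary.comp hg
    simpa [Function.comp_def, JSQModel.qplus, JSQModel.atilde] using this
  have hqplusInt : Integrable (fun ω => ∑ i, (M.qplus ω i : ℝ)) μ :=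
    hstat.integrable_iff.mpr hint
  have hqplus_int_eq : ∫ ω, ∑ i, (M.qplus ω i : ℝ) ∂μ = ∫ ω, ∑ i, (M.q ω i : ℝ) ∂μ :=
    hstat.integral_eq
  -- pointwise identity: Σ u = Σ qplus + Σ s − Σ q − a
  have hiden : ∀ ω, (fun ω => ∑ i, (M.u ω i : ℝ)) ω
      = (∑ i, (M.qplus ω i : ℝ)) + (∑ i, (M.s ω i : ℝ))
        - (∑ i, (M.q ω i : ℝ)) - (M.a ω : ℝ) := by
    intro ω
    have hi : ∀ i, (M.qplus ω i : ℝ) + (M.s ω i : ℝ)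
        = (M.q ω i : ℝ) + (M.atilde ω i : ℝ) + (M.u ω i : ℝ) := by
      intro i
      have : M.qplus ω i + M.s ω i = M.q ω i + M.atilde ω i + M.u ω i := by
        unfold JSQModel.qplus JSQModel.u
        omega
      exact_mod_cast this
    have hat : (∑ i, (M.atilde ω i : ℝ)) = (M.a ω : ℝ) := by
      unfold JSQModel.atilde
      simp
    have hsum : (∑ i, (M.qplus ω i : ℝ)) + (∑ i, (M.s ω i : ℝ))
        = (∑ i, (M.q ω i : ℝ)) + (∑ i, (M.atilde ω i : ℝ)) + (∑ i, (M.u ω i : ℝ)) := by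
      rw [← Finset.sum_add_distrib, ← Finset.sum_add_distrib, ← Finset.sum_add_distrib]
      exact Finset.sum_congr rfl fun i _ => hi i
    rw [hat] at hsum
    simp only
    linarith
  have huFun : (fun ω => ∑ i, (M.u ω i : ℝ))
      = fun ω => (∑ i, (M.qplus ω i : ℝ)) + (∑ i, (M.s ω i : ℝ))
        - (∑ i, (M.q ω i : ℝ)) - (M.a ω : ℝ) := funext hiden
  have hsSumInt : Integrable (fun ω => ∑ i, (M.s ω i : ℝ)) μ :=
    integrable_finset_sum _ fun i _ => hsInt i
  have huSumInt : Integrable (fun ω => ∑ i, (M.u ω i : ℝ)) μ :=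
    integrable_finset_sum _ fun i _ => huInt i
  -- ∫ Σ s = N
  have hsSumVal : ∫ ω, ∑ i, (M.s ω i : ℝ) ∂μ = N := by
    rw [integral_finset_sum _ fun i _ => hsInt i]
    simp [M.s_mean]
  -- ∫ Σ u = N * N^(−α)
  have h1 : Integrable (fun ω => (∑ i, (M.qplus ω i : ℝ)) + ∑ i, (M.s ω i : ℝ)) μ :=
    hqplusInt.add hsSumInt
  have h2 : Integrable
      (fun ω => (∑ i, (M.qplus ω i : ℝ)) + (∑ i, (M.s ω i : ℝ)) - ∑ i, (M.q ω i : ℝ)) μ :=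
    h1.sub hint
  have huVal : ∫ ω, ∑ i, (M.u ω i : ℝ) ∂μ = (N : ℝ) * (N : ℝ) ^ (-α) := by
    rw [huFun, integral_sub h2 haInt, integral_sub h1 hint, integral_add hqplusInt hsSumInt,
      hqplus_int_eq, hsSumVal, M.a_mean]
    ring
  -- the final estimate
  have hNpos : (0:ℝ) < N := by positivity
  have hrpow : (N : ℝ) ^ ((1:ℝ) - α) = (N : ℝ) * (N : ℝ) ^ (-α) := by
    rw [sub_eq_add_neg, Real.rpow_add hNpos, Real.rpow_one]
  have hle : ∫ ω, ∑ i, (M.q ω i : ℝ) * (M.u ω i : ℝ) ∂μ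
      ≤ ∫ ω, smax * ∑ i, (M.u ω i : ℝ) ∂μ := by
    refine integral_mono_ae (integrable_finset_sum _ fun i _ => hquInt i)
      (huSumInt.const_mul smax) ?_
    have hs_all : ∀ᵐ ω ∂μ, ∀ i, (M.s ω i : ℝ) ≤ smax := by
      rw [ae_all_iff]; exact M.s_bdd
    filter_upwards [hs_all] with ω hω
    rw [Finset.mul_sum]
    refine Finset.sum_le_sum fun i _ => ?_
    have h1 : (M.q ω i : ℝ) * (M.u ω i : ℝ) ≤ (M.s ω i : ℝ) * (M.u ω i : ℝ) := by
      exact_mod_cast hqu_le ω i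
    have h2 : (M.s ω i : ℝ) * (M.u ω i : ℝ) ≤ smax * (M.u ω i : ℝ) :=
      mul_le_mul_of_nonneg_right (hω i) (Nat.cast_nonneg _)
    linarith
  calc ∫ ω, ∑ i, (M.q ω i : ℝ) * (M.u ω i : ℝ) ∂μ
      ≤ ∫ ω, smax * ∑ i, (M.u ω i : ℝ) ∂μ := hle
    _ = smax * ((N : ℝ) * (N : ℝ) ^ (-α)) := by rw [integral_const_mul, huVal]
    _ = smax * (N : ℝ) ^ ((1:ℝ) - α) := by rw [hrpow]
end
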